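/- arXiv:2007.14801 — 5 statements merged into one kernel-verified Lean document; each statement's English description precedes it below -/
import Mathlib

section
/- Let F be a real closed linear ordered field and let F₀ be a maximal archimedean subfield of F. Then F₀ is real closed: every b ∈ F₀ with b > 0 has a square root lying in F₀, and every monic polynomial of odd degree with all coefficients in F₀ has a root lying in F₀. -/
set_option maxHeartbeats 1000000
set_option synthInstance.maxHeartbeats 1000000

/-- A linear ordered field is real closed (in the sense used in the paper) if every
positive element has a square root and every monic polynomial of odd degree has a root. -/
def RealClosedOF (F : Type*) [Field F] [LinearOrder F] [IsStrictOrderedRing F] : Prop :=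
  (∀ b : F, 0 < b → ∃ y : F, y ^ 2 = b) ∧
  (∀ p : Polynomial F, p.Monic → Odd p.natDegree → ∃ x : F, p.eval x = 0)

/-- A subfield of a linear ordered field is archimedean if each of its elements is
bounded by a natural number. -/
def ArchSubfield {F : Type*} [Field F] [LinearOrder F] [IsStrictOrderedRing F] (F₀ : Subfield F) : Prop :=
  ∀ x ∈ F₀, ∃ n : ℕ, x ≤ (n : F)

/-- A maximal archimedean subfield: an archimedean subfield such that every archimedean
subfield containing it equals it. -/
def MaxArchSubfield {F : Type*} [Field F] [LinearOrder F] [IsStrictOrderedRing F] (F₀ : Subfield F) : Prop :=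
  ArchSubfield F₀ ∧ ∀ F₁ : Subfield F, ArchSubfield F₁ → F₀ ≤ F₁ → F₁ = F₀

open Polynomial Finset

/-- Any root of a monic polynomial is bounded by `1` plus the sum of the absolute
values of the lower coefficients. -/
lemma root_bound_aux {F : Type*} [Field F] [LinearOrder F] [IsStrictOrderedRing F] (p : Polynomial F) (hp : p.Monic) (z : F)
    (hz : p.eval z = 0) : |z| ≤ 1 + ∑ i ∈ Finset.range p.natDegree, |p.coeff i| := by
  set n := p.natDegree with hn
  have hS : 0 ≤ ∑ i ∈ range n, |p.coeff i| := Finset.sum_nonneg fun i _ => abs_nonneg _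
  by_cases hle : |z| ≤ 1
  · linarith
  push_neg at hle
  have hn1 : 1 ≤ n := by
    rcases Nat.eq_zero_or_pos n with h0 | h; swap; · exact h
    have : p = 1 := hp.natDegree_eq_zero.mp h0
    simp [this] at hz
  have heval : ∑ i ∈ range (n + 1), p.coeff i * z ^ i = 0 := by
    rw [← Polynomial.eval_eq_sum_range, hz]
  rw [Finset.sum_range_succ, hp.coeff_natDegree, one_mul] at heval
  have hzn : z ^ n = -(∑ i ∈ range n, p.coeff i * z ^ i) := by linarith
  have habs : |z| ^ n ≤ (∑ i ∈ range n, |p.coeff i|) * |z| ^ (n - 1) := by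
    calc |z| ^ n = |z ^ n| := (abs_pow z n).symm
    _ = |∑ i ∈ range n, p.coeff i * z ^ i| := by rw [hzn, abs_neg]
    _ ≤ ∑ i ∈ range n, |p.coeff i * z ^ i| := Finset.abs_sum_le_sum_abs _ _
    _ ≤ ∑ i ∈ range n, |p.coeff i| * |z| ^ (n - 1) := by
        apply Finset.sum_le_sum
        intro i hi
        rw [abs_mul, abs_pow]
        exact mul_le_mul_of_nonneg_left
          (pow_le_pow_right₀ hle.le (Nat.le_sub_one_of_lt (Finset.mem_range.mp hi)))
          (abs_nonneg _)
    _ = (∑ i ∈ range n, |p.coeff i|) * |z| ^ (n - 1) := by rw [Finset.sum_mul]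
  have hpow : |z| ^ n = |z| * |z| ^ (n - 1) := by
    conv_lhs => rw [show n = (n - 1) + 1 from (Nat.succ_pred_eq_of_pos hn1).symm]
    rw [pow_succ, mul_comm]
  have hpos : 0 < |z| ^ (n - 1) := pow_pos (lt_trans one_pos hle) _
  have : |z| ≤ ∑ i ∈ range n, |p.coeff i| := by
    rw [hpow] at habs
    exact le_of_mul_le_mul_right (by linarith) hpos
  linarith

/-- Any root of a monic polynomial with coefficients in a maximal archimedean subfield
already lies in that subfield. -/
lemma mem_of_root_monic {F : Type*} [Field F] [LinearOrder F] [IsStrictOrderedRing F] (F₀ : Subfield F)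
    (hmax : MaxArchSubfield F₀) (x : F) (p : Polynomial F) (hp : p.Monic)
    (hc : ∀ i : ℕ, p.coeff i ∈ F₀) (hx : p.eval x = 0) : x ∈ F₀ := by
  classical
  set q : Polynomial F₀ := ∑ i ∈ range (p.natDegree + 1),
    Polynomial.C (⟨p.coeff i, hc i⟩ : F₀) * Polynomial.X ^ i with hqdef
  have hqmap : q.map (algebraMap F₀ F) = p := by
    rw [hqdef, Polynomial.map_sum]
    simp only [Polynomial.map_mul, Polynomial.map_pow, Polynomial.map_C, Polynomial.map_X]
    conv_rhs => rw [Polynomial.as_sum_range' p (p.natDegree + 1) (Nat.lt_succ_self _)]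
    simp only [Polynomial.C_mul_X_pow_eq_monomial]
    rfl
  have hqmonic : q.Monic :=
    Polynomial.monic_of_injective (algebraMap F₀ F).injective (by rw [hqmap]; exact hp)
  have hint : IsIntegral F₀ x := ⟨q, hqmonic, by
    rw [Polynomial.eval₂_eq_eval_map, hqmap, hx]⟩
  have : FiniteDimensional F₀ (IntermediateField.adjoin F₀ {x}) :=
    IntermediateField.adjoin.finiteDimensional hint
  set F₁ : Subfield F := (IntermediateField.adjoin F₀ {x}).toSubfield with hF₁
  have hle : F₀ ≤ F₁ := by
    intro a ha
    have : (a : F) = algebraMap F₀ F ⟨a, ha⟩ := rfl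
    rw [this]
    exact (IntermediateField.adjoin F₀ {x}).algebraMap_mem _
  have hxF₁ : x ∈ F₁ := IntermediateField.mem_adjoin_simple_self F₀ x
  have hint' : ∀ z ∈ F₁, IsIntegral F₀ z := by
    intro z hz
    have := Algebra.IsIntegral.of_finite F₀ (IntermediateField.adjoin F₀ {x})
    have h1 : IsIntegral F₀ (⟨z, hz⟩ : IntermediateField.adjoin F₀ {x}) :=
      Algebra.IsIntegral.isIntegral _
    exact IsIntegral.map (IntermediateField.adjoin F₀ {x}).val h1
  have harch : ArchSubfield F₁ := by
    intro z hz
    have hi := hint' z hz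
    set m := minpoly F₀ z with hm
    have hmm : m.Monic := minpoly.monic hi
    set p' := m.map (algebraMap F₀ F) with hp'
    have hp'm : p'.Monic := hmm.map _
    have hev : p'.eval z = 0 := by
      rw [hp', Polynomial.eval_map, ← Polynomial.aeval_def]
      exact minpoly.aeval F₀ z
    have hb := root_bound_aux p' hp'm z hev
    have hcb : ∀ i : ℕ, ∃ n : ℕ, |p'.coeff i| ≤ (n : F) := by
      intro i
      have h1 : p'.coeff i ∈ F₀ := by
        rw [hp', Polynomial.coeff_map]
        exact (m.coeff i).2
      obtain ⟨n1, hn1⟩ := hmax.1 _ h1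
      obtain ⟨n2, hn2⟩ := hmax.1 _ (F₀.neg_mem h1)
      refine ⟨max n1 n2, abs_le.mpr ⟨?_, ?_⟩⟩
      · have : (n2 : F) ≤ ((max n1 n2 : ℕ) : F) := by
          exact_mod_cast Nat.cast_le.mpr (le_max_right n1 n2)
        linarith
      · have : (n1 : F) ≤ ((max n1 n2 : ℕ) : F) := by
          exact_mod_cast Nat.cast_le.mpr (le_max_left n1 n2)
        linarith
    choose g hg using hcb
    refine ⟨1 + ∑ i ∈ range p'.natDegree, g i, ?_⟩
    calc z ≤ |z| := le_abs_self z
    _ ≤ 1 + ∑ i ∈ range p'.natDegree, |p'.coeff i| := hb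
    _ ≤ 1 + ∑ i ∈ range p'.natDegree, ((g i : F)) := by
        gcongr with i hi
        exact hg i
    _ = ((1 + ∑ i ∈ range p'.natDegree, g i : ℕ) : F) := by push_cast; ring
  have heq : F₁ = F₀ := hmax.2 F₁ harch hle
  exact heq ▸ hxF₁

/-- A maximal archimedean subfield of a real closed linear ordered field is real closed:
positive elements of `F₀` have square roots in `F₀`, and monic odd-degree polynomials
with coefficients in `F₀` have roots in `F₀`. -/
theorem maxArchSubfield_realClosed (F : Type*) [Field F] [LinearOrder F] [IsStrictOrderedRing F]
    (hF : RealClosedOF F) (F₀ : Subfield F) (hmax : MaxArchSubfield F₀) :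
    (∀ b ∈ F₀, (0 : F) < b → ∃ y ∈ F₀, y ^ 2 = b) ∧
    (∀ p : Polynomial F, p.Monic → Odd p.natDegree → (∀ i : ℕ, p.coeff i ∈ F₀) →
      ∃ x ∈ F₀, p.eval x = 0) := by
  constructor
  · intro b hb hbpos
    obtain ⟨y, hy⟩ := hF.1 b hbpos
    have hmonic : (Polynomial.X ^ 2 - Polynomial.C b).Monic :=
      Polynomial.monic_X_pow_sub_C b (by norm_num)
    have hcoeff : ∀ i : ℕ, (Polynomial.X ^ 2 - Polynomial.C b).coeff i ∈ F₀ := by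
      intro i
      rw [Polynomial.coeff_sub, Polynomial.coeff_X_pow, Polynomial.coeff_C]
      split_ifs <;> simp [hb, F₀.neg_mem, F₀.one_mem, F₀.zero_mem, Subfield.sub_mem]
    have heval : (Polynomial.X ^ 2 - Polynomial.C b).eval y = 0 := by
      simp [hy]
    exact ⟨y, mem_of_root_monic F₀ hmax y _ hmonic hcoeff heval, hy⟩
  · intro p hp hodd hc
    obtain ⟨x, hx⟩ := hF.2 p hp hodd
    exact ⟨x, mem_of_root_monic F₀ hmax x p hp hc hx, hx⟩
end

section
/- Let F be a real closed linear ordered field, F₀ a maximal archimedean subfield of F, and F₁ any archimedean subfield of F. Then there is an injective ring homomorphism φ : F₁ → F₀ that preserves order (x ≤ y ↔ φ(x) ≤ φ(y)); i.e., F₀ is the greatest archimedean subfield of F up to isomorphic embedding of ordered fields. -/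
open Polynomial

namespace MaxArch

section Estimates

variable {L : Type*} [Field L] [LinearOrder L] [IsStrictOrderedRing L]

theorem eval_abs_le (p : L[X]) {M C x : L} (hC : 1 ≤ C) (hM : ∀ i, |p.coeff i| ≤ M)
    (hx : |x| ≤ C) : |p.eval x| ≤ (p.natDegree + 1 : ℕ) * (M * C ^ p.natDegree) := by
  set n := p.natDegree with hn
  have hM0 : 0 ≤ M := le_trans (abs_nonneg _) (hM 0)
  have hC0 : (0:L) ≤ C := le_trans zero_le_one hC
  rw [eval_eq_sum_range]
  refine le_trans (Finset.abs_sum_le_sum_abs _ _) ?_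
  have key : ∀ i ∈ Finset.range (n+1), |p.coeff i * x ^ i| ≤ M * C ^ n := by
    intro i hi
    rw [abs_mul, abs_pow]
    have h1 : |x| ^ i ≤ C ^ i := pow_le_pow_left₀ (abs_nonneg x) hx i
    have h2 : C ^ i ≤ C ^ n := pow_le_pow_right₀ hC (Nat.lt_succ_iff.1 (Finset.mem_range.1 hi))
    calc |p.coeff i| * |x| ^ i ≤ M * C ^ i :=
          mul_le_mul (hM i) h1 (by positivity) hM0
      _ ≤ M * C ^ n := by nlinarith
  calc ∑ i ∈ Finset.range (n+1), |p.coeff i * x ^ i|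
      ≤ ∑ _i ∈ Finset.range (n+1), M * C ^ n := Finset.sum_le_sum key
    _ = (n + 1 : ℕ) * (M * C ^ n) := by
        rw [Finset.sum_const, Finset.card_range, nsmul_eq_mul]

theorem eval_sub_eval_abs_le (p : L[X]) {M C x y : L} (hC : 1 ≤ C) (hM : ∀ i, |p.coeff i| ≤ M)
    (hx : |x| ≤ C) (hy : |y| ≤ C) :
    |p.eval x - p.eval y| ≤ ((p.natDegree + 1 : ℕ)^2 * (M * C ^ p.natDegree)) * |x - y| := by
  set n := p.natDegree with hn
  have hM0 : 0 ≤ M := le_trans (abs_nonneg _) (hM 0)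
  have hC0 : (0:L) ≤ C := le_trans zero_le_one hC
  rw [eval_eq_sum_range, eval_eq_sum_range, ← Finset.sum_sub_distrib]
  refine le_trans (Finset.abs_sum_le_sum_abs _ _) ?_
  have key : ∀ i ∈ Finset.range (n+1), |p.coeff i * x ^ i - p.coeff i * y ^ i|
      ≤ ((n:L) + 1) * (M * C ^ n) * |x - y| := by
    intro i hi
    rw [← mul_sub, abs_mul]
    have hgeom : x ^ i - y ^ i = (∑ j ∈ Finset.range i, x ^ j * y ^ (i - 1 - j)) * (x - y) :=
      (geom_sum₂_mul x y i).symm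
    have hsum : |∑ j ∈ Finset.range i, x ^ j * y ^ (i - 1 - j)| ≤ ((n:L) + 1) * C ^ n := by
      refine le_trans (Finset.abs_sum_le_sum_abs _ _) ?_
      have hterm : ∀ j ∈ Finset.range i, |x ^ j * y ^ (i - 1 - j)| ≤ C ^ n := by
        intro j hj
        rw [abs_mul, abs_pow, abs_pow]
        have hj' : j + (i - 1 - j) ≤ n := by
          have h1 := Finset.mem_range.1 hj
          have h2 := Nat.lt_succ_iff.1 (Finset.mem_range.1 hi)
          omega
        calc |x| ^ j * |y| ^ (i - 1 - j) ≤ C ^ j * C ^ (i - 1 - j) :=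
              mul_le_mul (pow_le_pow_left₀ (abs_nonneg x) hx j)
                (pow_le_pow_left₀ (abs_nonneg y) hy _) (by positivity) (by positivity)
          _ = C ^ (j + (i - 1 - j)) := (pow_add C j _).symm
          _ ≤ C ^ n := pow_le_pow_right₀ hC hj'
      calc ∑ j ∈ Finset.range i, |x ^ j * y ^ (i - 1 - j)|
          ≤ ∑ _j ∈ Finset.range i, C ^ n := Finset.sum_le_sum hterm
        _ = (i : L) * C ^ n := by rw [Finset.sum_const, Finset.card_range, nsmul_eq_mul]
        _ ≤ ((n:L) + 1) * C ^ n := by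
            have : (i : L) ≤ (n:L) + 1 := by
              have := Nat.lt_succ_iff.1 (Finset.mem_range.1 hi)
              exact_mod_cast le_trans (Nat.cast_le.2 this) (by linarith : (n:L) ≤ (n:L)+1)
            nlinarith [pow_nonneg hC0 n]
      -- end hsum
    calc |p.coeff i| * |x ^ i - y ^ i|
        = |p.coeff i| * (|∑ j ∈ Finset.range i, x ^ j * y ^ (i - 1 - j)| * |x - y|) := by
          rw [hgeom, abs_mul]
      _ ≤ M * (((n:L) + 1) * C ^ n * |x - y|) := by
          have h0 : 0 ≤ |x - y| := abs_nonneg _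
          have h1 : |∑ j ∈ Finset.range i, x ^ j * y ^ (i - 1 - j)| * |x - y|
              ≤ ((n:L) + 1) * C ^ n * |x - y| := mul_le_mul_of_nonneg_right hsum h0
          exact mul_le_mul (hM i) h1 (by positivity) hM0
      _ = ((n:L) + 1) * (M * C ^ n) * |x - y| := by ring
  calc ∑ i ∈ Finset.range (n+1), |p.coeff i * x ^ i - p.coeff i * y ^ i|
      ≤ ∑ _i ∈ Finset.range (n+1), ((n:L) + 1) * (M * C ^ n) * |x - y| := Finset.sum_le_sum key
    _ = ((n:ℕ) + 1 : ℕ) * (((n:L) + 1) * (M * C ^ n) * |x - y|) := by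
        rw [Finset.sum_const, Finset.card_range, nsmul_eq_mul]
    _ = ((n + 1 : ℕ)^2 * (M * C ^ n)) * |x - y| := by push_cast; ring

theorem monic_root_abs_le {p : L[X]} (hp : p.Monic) {x : L} (hroot : p.eval x = 0)
    {M : L} (hM : ∀ i, |p.coeff i| ≤ M) : |x| ≤ max 1 ((p.natDegree : L) * M) := by
  by_contra hgt
  push_neg at hgt
  set n := p.natDegree with hn
  have h1 : (1:L) < |x| := lt_of_le_of_lt (le_max_left _ _) hgt
  have h2 : (n:L) * M < |x| := lt_of_le_of_lt (le_max_right _ _) hgt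
  have hM0 : 0 ≤ M := le_trans (abs_nonneg _) (hM 0)
  have hxpow : x ^ n = -∑ i ∈ Finset.range n, p.coeff i * x ^ i := by
    have := eval_eq_sum_range (p := p) x
    rw [Finset.sum_range_succ, hp.coeff_natDegree, one_mul, hroot] at this
    linarith [this.symm]
  have hb : |x| ^ n ≤ (n:L) * M * |x| ^ (n-1) := by
    have : |x ^ n| ≤ ∑ i ∈ Finset.range n, |p.coeff i * x ^ i| := by
      rw [hxpow, abs_neg]; exact Finset.abs_sum_le_sum_abs _ _
    rw [abs_pow] at this
    refine le_trans this ?_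
    have hterm : ∀ i ∈ Finset.range n, |p.coeff i * x ^ i| ≤ M * |x| ^ (n-1) := by
      intro i hi
      rw [abs_mul, abs_pow]
      have : |x| ^ i ≤ |x| ^ (n-1) := by
        apply pow_le_pow_right₀ h1.le
        have := Finset.mem_range.1 hi; omega
      exact mul_le_mul (hM i) this (by positivity) hM0
    calc ∑ i ∈ Finset.range n, |p.coeff i * x ^ i| ≤ ∑ _i ∈ Finset.range n, M * |x|^(n-1) :=
          Finset.sum_le_sum hterm
      _ = (n:L) * M * |x|^(n-1) := by rw [Finset.sum_const, Finset.card_range, nsmul_eq_mul]; ring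
  have hn1 : 1 ≤ n := by
    rcases Nat.eq_zero_or_pos n with h | h
    · exfalso
      have : p = 1 := hp.natDegree_eq_zero.1 h
      rw [this] at hroot; simp at hroot
    · exact h
  have hxn : |x| ^ n = |x| * |x| ^ (n-1) := by
    conv_lhs => rw [show n = 1 + (n-1) by omega]
    rw [pow_add, pow_one]
  have hpowpos : (0:L) < |x| ^ (n-1) := pow_pos (lt_trans zero_lt_one h1) _
  nlinarith
end Estimates
section Arch

variable {F : Type*} [Field F] [LinearOrder F] [IsStrictOrderedRing F]

theorem abs_le_rat_of_mem {K : Subfield F} (hK : ArchSubfield K) {x : F} (hx : x ∈ K) :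
    ∃ q : ℚ, 1 ≤ q ∧ |x| ≤ (q : F) := by
  obtain ⟨n, hn⟩ := hK x hx
  obtain ⟨m, hm⟩ := hK (-x) (K.neg_mem hx)
  refine ⟨((n + m + 1 : ℕ) : ℚ), by exact_mod_cast Nat.one_le_iff_ne_zero.2 (by omega), ?_⟩
  have hq : ((((n + m + 1 : ℕ) : ℚ)) : F) = (n : F) + (m : F) + 1 := by push_cast; ring
  have hn0 : (0:F) ≤ (n:F) := Nat.cast_nonneg n
  have hm0 : (0:F) ≤ (m:F) := Nat.cast_nonneg m
  rw [abs_le, hq]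
  constructor <;> linarith

theorem archimedean_of_archSubfield {K : Subfield F} (hK : ArchSubfield K) : Archimedean ↥K :=
  archimedean_iff_nat_le.2 fun x => by
    obtain ⟨n, hn⟩ := hK x x.2
    exact ⟨n, by exact_mod_cast hn⟩

noncomputable def psi (K : Subfield F) (hK : ArchSubfield K) : ↥K →+* ℝ :=
  letI := archimedean_of_archSubfield hK
  (LinearOrderedField.inducedOrderRingHom ↥K ℝ).toRingHom

theorem psi_strictMono {K : Subfield F} (hK : ArchSubfield K) : StrictMono (psi K hK) := by
  letI := archimedean_of_archSubfield hK
  have hmono : Monotone (psi K hK) := fun a b h =>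
    OrderHomClass.monotone (LinearOrderedField.inducedOrderRingHom ↥K ℝ) h
  exact hmono.strictMono_of_injective (RingHom.injective _)

theorem psi_le_iff {K : Subfield F} (hK : ArchSubfield K) {x y : ↥K} :
    psi K hK x ≤ psi K hK y ↔ x ≤ y := (psi_strictMono hK).le_iff_le

theorem psi_lt_iff {K : Subfield F} (hK : ArchSubfield K) {x y : ↥K} :
    psi K hK x < psi K hK y ↔ x < y := (psi_strictMono hK).lt_iff_lt

theorem psi_ratCast {K : Subfield F} (hK : ArchSubfield K) (q : ℚ) :
    psi K hK (q : ↥K) = (q : ℝ) := map_ratCast _ q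

theorem rat_lt_psi_iff {K : Subfield F} (hK : ArchSubfield K) (x : ↥K) (q : ℚ) :
    (q : ℝ) < psi K hK x ↔ (q : F) < (x : F) := by
  rw [← psi_ratCast hK q, psi_lt_iff hK]
  constructor
  · intro h
    have : ((q:↥K) : F) < (x:F) := by exact_mod_cast h
    simpa using this
  · intro h
    have : ((q:↥K) : F) < (x:F) := by push_cast; exact h
    exact_mod_cast this

theorem psi_lt_rat_iff {K : Subfield F} (hK : ArchSubfield K) (x : ↥K) (q : ℚ) :
    psi K hK x < (q : ℝ) ↔ (x : F) < (q : F) := by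
  rw [← psi_ratCast hK q, psi_lt_iff hK]
  constructor
  · intro h
    have : (x:F) < ((q:↥K) : F) := by exact_mod_cast h
    simpa using this
  · intro h
    have : (x:F) < ((q:↥K) : F) := by push_cast; exact h
    exact_mod_cast this

theorem rat_le_psi_iff {K : Subfield F} (hK : ArchSubfield K) (x : ↥K) (q : ℚ) :
    (q : ℝ) ≤ psi K hK x ↔ (q : F) ≤ (x : F) := by
  rw [← not_lt, ← not_lt, psi_lt_rat_iff hK]

theorem psi_le_rat_iff {K : Subfield F} (hK : ArchSubfield K) (x : ↥K) (q : ℚ) :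
    psi K hK x ≤ (q : ℝ) ↔ (x : F) ≤ (q : F) := by
  rw [← not_lt, ← not_lt, rat_lt_psi_iff hK]

theorem abs_psi_le_rat_iff {K : Subfield F} (hK : ArchSubfield K) (x : ↥K) (q : ℚ) :
    |psi K hK x| ≤ (q : ℝ) ↔ |(x : F)| ≤ (q : F) := by
  have h1 : (-(q:ℝ)) = ((-q : ℚ) : ℝ) := by push_cast; ring
  have h2 : (-(q:F)) = ((-q : ℚ) : F) := by push_cast; ring
  rw [abs_le, abs_le, psi_le_rat_iff hK, h1, h2, rat_le_psi_iff hK]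

theorem psi_congr {K K' : Subfield F} (hK : ArchSubfield K) (hK' : ArchSubfield K')
    {x : F} (hx : x ∈ K) (hx' : x ∈ K') :
    psi K hK ⟨x, hx⟩ = psi K' hK' ⟨x, hx'⟩ :=
  eq_of_forall_rat_lt_iff_lt fun q => by
    rw [rat_lt_psi_iff hK, rat_lt_psi_iff hK']

end Arch
section Workhorse

variable {F : Type*} [Field F] [LinearOrder F] [IsStrictOrderedRing F]

theorem exists_coeff_bound {K : Subfield F} (hK : ArchSubfield K) (p : Polynomial ↥K) :
    ∃ m : ℚ, 1 ≤ m ∧ ∀ i, |((p.coeff i : F))| ≤ (m : F) := by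
  have h : ∀ i, ∃ q : ℚ, 1 ≤ q ∧ |((p.coeff i : F))| ≤ (q : F) :=
    fun i => abs_le_rat_of_mem hK (p.coeff i).2
  choose f hf1 hf2 using h
  refine ⟨1 + ∑ i ∈ Finset.range (p.natDegree + 1), f i, ?_, ?_⟩
  · have : (0:ℚ) ≤ ∑ i ∈ Finset.range (p.natDegree + 1), f i :=
      Finset.sum_nonneg fun i _ => le_trans zero_le_one (hf1 i)
    linarith
  · intro i
    by_cases hi : i ≤ p.natDegree
    · refine le_trans (hf2 i) ?_
      have h1 : f i ≤ ∑ j ∈ Finset.range (p.natDegree + 1), f j :=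
        Finset.single_le_sum (fun j _ => le_trans zero_le_one (hf1 j))
          (Finset.mem_range.2 (Nat.lt_succ_of_le hi))
      have hle : f i ≤ 1 + ∑ j ∈ Finset.range (p.natDegree + 1), f j := by linarith
      exact_mod_cast hle
    · have : p.coeff i = 0 := Polynomial.coeff_eq_zero_of_natDegree_lt (by omega)
      rw [this]
      have h0 : (0:ℚ) ≤ 1 + ∑ j ∈ Finset.range (p.natDegree + 1), f j := by
        have : (0:ℚ) ≤ ∑ j ∈ Finset.range (p.natDegree + 1), f j :=
          Finset.sum_nonneg fun j _ => le_trans zero_le_one (hf1 j)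
        linarith
      have h1 : ((0:ℚ):F) ≤ ((1 + ∑ j ∈ Finset.range (p.natDegree + 1), f j : ℚ) : F) := by
        exact_mod_cast h0
      calc |(((0 : ↥K)) : F)| = ((0:ℚ):F) := by simp
        _ ≤ _ := h1

/-- Key: a bounded element of `F` integral over a maximal archimedean subfield lies in it. -/
theorem mem_of_integral {F₀ : Subfield F} (hmax : MaxArchSubfield F₀) {b : F}
    {qb : ℚ} (hqb : 1 ≤ qb) (hb : |b| ≤ (qb : F)) {P : Polynomial ↥F₀} (hP : P.Monic)
    (hroot : Polynomial.aeval b P = 0) : b ∈ F₀ := by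
  have hint : IsIntegral ↥F₀ b := ⟨P, hP, by rwa [← Polynomial.aeval_def]⟩
  set T := IntermediateField.adjoin ↥F₀ ({b} : Set F) with hT
  have hmem : ∀ x : F, x ∈ T → ∃ p : Polynomial ↥F₀, Polynomial.aeval b p = x := by
    intro x hx
    have h1 : T.toSubalgebra = Algebra.adjoin ↥F₀ {b} :=
      IntermediateField.adjoin_simple_toSubalgebra_of_isAlgebraic hint.isAlgebraic
    have h2 : x ∈ Algebra.adjoin ↥F₀ ({b} : Set F) := by
      rw [← h1]; exact hx
    rw [Algebra.adjoin_singleton_eq_range_aeval] at h2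
    obtain ⟨p, hp⟩ := h2
    exact ⟨p, hp⟩
  have harchT : ArchSubfield T.toSubfield := by
    intro x hx
    obtain ⟨p, hp⟩ := hmem x hx
    obtain ⟨m, hm1, hm⟩ := exists_coeff_bound hmax.1 p
    set pf := p.map (algebraMap ↥F₀ F) with hpf
    have hxe : pf.eval b = x := by
      rw [hpf, Polynomial.eval_map, ← Polynomial.aeval_def, hp]
    have hcoeff : ∀ i, |pf.coeff i| ≤ ((m:ℚ) : F) := by
      intro i
      rw [hpf, Polynomial.coeff_map]
      exact hm i
    have hbound := eval_abs_le pf (M := (m:F)) (C := (qb:F))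
      (by exact_mod_cast hqb) hcoeff hb
    rw [hxe] at hbound
    set n := pf.natDegree
    set Q : ℚ := (n + 1 : ℕ) * (m * qb ^ n) with hQ
    have hQF : ((Q : ℚ) : F) = (n + 1 : ℕ) * ((m:F) * (qb:F) ^ n) := by
      rw [hQ]; push_cast; ring
    refine ⟨⌈Q⌉₊, ?_⟩
    calc x ≤ |x| := le_abs_self x
      _ ≤ ((Q : ℚ) : F) := by rw [hQF]; exact hbound
      _ ≤ ((⌈Q⌉₊ : ℚ) : F) := by exact_mod_cast Nat.le_ceil Q
      _ = ((⌈Q⌉₊ : ℕ) : F) := by push_cast; ring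
  have hle : F₀ ≤ T.toSubfield := by
    intro c hc
    exact T.algebraMap_mem ⟨c, hc⟩
  have heq := hmax.2 T.toSubfield harchT hle
  have hbT : b ∈ T := IntermediateField.mem_adjoin_simple_self ↥F₀ b
  rw [← heq]
  exact hbT

theorem sqrt_mem {F₀ : Subfield F} (hF : RealClosedOF F) (hmax : MaxArchSubfield F₀)
    (c : ↥F₀) (hc : 0 ≤ c) : ∃ d : ↥F₀, 0 ≤ d ∧ d ^ 2 = c := by
  rcases eq_or_lt_of_le hc with h | h
  · exact ⟨0, le_refl _, by rw [← h]; ring⟩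
  · have hcF : (0:F) < (c:F) := by exact_mod_cast h
    obtain ⟨y, hy⟩ := hF.1 (c:F) hcF
    obtain ⟨q, hq1, hq⟩ := abs_le_rat_of_mem hmax.1 c.2
    have hyb : |y| ≤ (q : F) := by
      by_contra hgt
      push_neg at hgt
      have h1 : (1:F) ≤ (q:F) := by exact_mod_cast hq1
      have h2 : (q:F) < |y| := hgt
      have : (q:F) * (q:F) < |y| * |y| := by nlinarith
      have h3 : |y| * |y| = (c:F) := by rw [← abs_mul, abs_mul_self]; rw [← hy]; ring
      have h4 : (c:F) ≤ (q:F) := le_trans (le_abs_self _) hq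
      nlinarith
    have hyint : Polynomial.aeval y ((Polynomial.X)^2 - Polynomial.C c : Polynomial ↥F₀) = 0 := by
      simp only [map_sub, map_pow, Polynomial.aeval_X, Polynomial.aeval_C, hy]
      exact sub_eq_zero.2 rfl
    have hymem : y ∈ F₀ :=
      mem_of_integral hmax hq1 hyb (Polynomial.monic_X_pow_sub_C c two_ne_zero) hyint
    refine ⟨|⟨y, hymem⟩|, abs_nonneg _, ?_⟩
    have : (⟨y, hymem⟩ : ↥F₀) ^ 2 = c := by
      apply Subtype.ext
      push_cast
      exact hy
    rw [sq_abs]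
    exact this

theorem odd_root_mem {F₀ : Subfield F} (hF : RealClosedOF F) (hmax : MaxArchSubfield F₀)
    (P : Polynomial ↥F₀) (hP : P.Monic) (hodd : Odd P.natDegree) :
    ∃ d : ↥F₀, Polynomial.eval d P = 0 := by
  set Pf := P.map (algebraMap ↥F₀ F) with hPf
  have hPfm : Pf.Monic := hP.map _
  have hdeg : Pf.natDegree = P.natDegree := Polynomial.natDegree_map _
  obtain ⟨x, hx⟩ := hF.2 Pf hPfm (by rwa [hdeg])
  obtain ⟨m, hm1, hm⟩ := exists_coeff_bound hmax.1 P
  have hcoeff : ∀ i, |Pf.coeff i| ≤ ((m:ℚ):F) := by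
    intro i; rw [hPf, Polynomial.coeff_map]; exact hm i
  have hxb := monic_root_abs_le hPfm hx hcoeff
  set q : ℚ := max 1 ((Pf.natDegree : ℚ) * m) with hq
  have hq1 : 1 ≤ q := le_max_left _ _
  have hxb' : |x| ≤ (q : F) := by
    refine le_trans hxb ?_
    have h1 : (1:F) ≤ (q:F) := by exact_mod_cast hq1
    have h2 : (Pf.natDegree : F) * ((m:ℚ):F) ≤ (q:F) := by
      have : ((Pf.natDegree : ℚ) * m) ≤ q := le_max_right _ _
      calc (Pf.natDegree : F) * ((m:ℚ):F) = (((Pf.natDegree : ℚ) * m : ℚ) : F) := by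
            push_cast; ring
        _ ≤ (q:F) := by exact_mod_cast this
    exact max_le h1 h2
  have hroot : Polynomial.aeval x P = 0 := by
    rw [Polynomial.aeval_def, ← Polynomial.eval_map, ← hPf]; exact hx
  have hxmem : x ∈ F₀ := mem_of_integral hmax hq1 hxb' hP hroot
  refine ⟨⟨x, hxmem⟩, ?_⟩
  have h2 : Polynomial.aeval ((algebraMap ↥F₀ F) ⟨x, hxmem⟩) P
      = algebraMap ↥F₀ F (Polynomial.eval ⟨x, hxmem⟩ P) := by
    rw [Polynomial.aeval_algebraMap_apply]
    simp
  have h3 : (algebraMap ↥F₀ F) ⟨x, hxmem⟩ = x := rfl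
  rw [h3, hroot] at h2
  have h4 : ((Polynomial.eval ⟨x, hxmem⟩ P : ↥F₀) : F) = 0 := h2.symm
  exact_mod_cast h4

end Workhorse
section AS

open IntermediateField

variable {K : Type*} [Field K] [LinearOrder K] [IsStrictOrderedRing K]

theorem sum_sq_eq_zero {x y : K} (h : x ^ 2 + y ^ 2 = 0) : x = 0 ∧ y = 0 := by
  constructor <;> nlinarith [sq_nonneg x, sq_nonneg y]

theorem odd_irreducible_natDegree_eq_one
    (hodd : ∀ p : K[X], p.Monic → Odd p.natDegree → ∃ x : K, p.eval x = 0)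
    {q : K[X]} (hirr : Irreducible q) (ho : Odd q.natDegree) : q.natDegree = 1 := by
  have hq0 : q ≠ 0 := hirr.ne_zero
  set q' := q * Polynomial.C q.leadingCoeff⁻¹ with hq'
  have hm : q'.Monic := Polynomial.monic_mul_leadingCoeff_inv hq0
  have hdeg : q'.natDegree = q.natDegree := Polynomial.natDegree_mul_leadingCoeff_inv q hq0
  obtain ⟨x, hx⟩ := hodd q' hm (by rwa [hdeg])
  have hxq : q.eval x = 0 := by
    rw [hq', Polynomial.eval_mul, Polynomial.eval_C] at hx
    have hne : q.leadingCoeff⁻¹ ≠ 0 := inv_ne_zero (Polynomial.leadingCoeff_ne_zero.2 hq0)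
    exact (mul_eq_zero.1 hx).resolve_right hne
  obtain ⟨u, hu⟩ := Polynomial.dvd_iff_isRoot.2 hxq
  rcases hirr.isUnit_or_isUnit hu with h | h
  · exact absurd h (Polynomial.not_isUnit_X_sub_C x)
  · obtain ⟨r, hr, hru⟩ := Polynomial.isUnit_iff.1 h
    rw [hu, ← hru, Polynomial.natDegree_mul_C hr.ne_zero, Polynomial.natDegree_X_sub_C]

theorem adjoin_i_rep {L : Type*} [Field L] [Algebra K L]
    {i : L} (hi : i ^ 2 = -1) {z : L} (hz : z ∈ K⟮i⟯) :
    ∃ x y : K, z = algebraMap K L x + algebraMap K L y * i := by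
  set f := algebraMap K L with hfdef
  refine IntermediateField.adjoin_induction K
    (fun w hw => ?_) (fun w => ?_) (fun w₁ w₂ _ _ h₁ h₂ => ?_) (fun w _ h => ?_)
    (fun w₁ w₂ _ _ h₁ h₂ => ?_) hz
  · rw [Set.mem_singleton_iff] at hw
    exact ⟨0, 1, by simp [hw]⟩
  · exact ⟨w, 0, by simp [hfdef]⟩
  · obtain ⟨x₁, y₁, e₁⟩ := h₁
    obtain ⟨x₂, y₂, e₂⟩ := h₂
    exact ⟨x₁ + x₂, y₁ + y₂, by rw [e₁, e₂, map_add, map_add]; ring⟩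
  · obtain ⟨x, y, e⟩ := h
    by_cases hw0 : w = 0
    · exact ⟨0, 0, by simp [hw0]⟩
    · set n := x ^ 2 + y ^ 2 with hn
      have hn0 : n ≠ 0 := by
        intro h0
        obtain ⟨hx0, hy0⟩ := sum_sq_eq_zero (hn ▸ h0)
        apply hw0
        rw [e, hx0, hy0]; simp
      refine ⟨x / n, -y / n, ?_⟩
      have hfn : f n ≠ 0 := by
        simpa using (_root_.map_ne_zero f).2 hn0
      have hfn' : f n = f x ^ 2 + f y ^ 2 := by rw [hn, map_add, map_pow, map_pow]
      have key : (f x + f y * i) * (f x - f y * i) = f n := by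
        rw [hfn']; linear_combination (-(f y ^ 2)) * hi
      have hc : f (x / n) + f (-y / n) * i = (f x - f y * i) / f n := by
        rw [map_div₀, map_div₀, map_neg]; ring
      have hmul : w * (f (x / n) + f (-y / n) * i) = 1 := by
        rw [hc, e]
        calc (f x + f y * i) * ((f x - f y * i) / f n)
            = ((f x + f y * i) * (f x - f y * i)) / f n := by ring
          _ = f n / f n := by rw [key]
          _ = 1 := div_self hfn
      exact (eq_inv_of_mul_eq_one_left (by rw [mul_comm]; exact hmul)).symm
  · obtain ⟨x₁, y₁, e₁⟩ := h₁
    obtain ⟨x₂, y₂, e₂⟩ := h₂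
    refine ⟨x₁ * x₂ - y₁ * y₂, x₁ * y₂ + x₂ * y₁, ?_⟩
    rw [e₁, e₂, map_sub, map_add, map_mul, map_mul, map_mul, map_mul]
    linear_combination (f y₁ * f y₂) * hi

theorem exists_sqrt_adjoin_i {L : Type*} [Field L] [Algebra K L]
    (hsq : ∀ c : K, 0 ≤ c → ∃ d : K, 0 ≤ d ∧ d ^ 2 = c)
    {i : L} (hi : i ^ 2 = -1) (z : ↥(K⟮i⟯)) : ∃ w : ↥(K⟮i⟯), w ^ 2 = z := by
  obtain ⟨x, y, hxy⟩ := adjoin_i_rep hi z.2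
  obtain ⟨r, hr0, hr⟩ := hsq (x ^ 2 + y ^ 2) (by positivity)
  have hrx : |x| ≤ r := by nlinarith [sq_abs x, abs_nonneg x]
  obtain ⟨c, hc0, hc⟩ := hsq ((r + x) / 2) (by have := neg_abs_le x; linarith)
  obtain ⟨d, hd0, hd⟩ := hsq ((r - x) / 2) (by have := le_abs_self x; linarith)
  have hcd : (2 * c * d) ^ 2 = y ^ 2 := by
    have h1 : (2 * c * d) ^ 2 = 4 * ((r + x) / 2) * ((r - x) / 2) := by
      rw [← hc, ← hd]; ring
    rw [h1]; linear_combination hr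
  have hcd' : 2 * c * d = |y| := by
    have h2 : (2 * c * d) ^ 2 = |y| ^ 2 := by rw [hcd, sq_abs]
    have h3 := (sq_eq_sq_iff_abs_eq_abs _ _).1 h2
    rw [abs_of_nonneg (by positivity : (0:K) ≤ 2 * c * d), abs_abs] at h3
    exact h3
  have hiJ : i ∈ K⟮i⟯ := IntermediateField.mem_adjoin_simple_self K i
  set iJ : ↥(K⟮i⟯) := ⟨i, hiJ⟩ with hiJdef
  have hiJ2 : iJ ^ 2 = -1 := by
    apply Subtype.ext
    have h4 : ((iJ ^ 2 : ↥(K⟮i⟯)) : L) = i ^ 2 := by push_cast; rfl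
    rw [h4, hi]; rfl
  set f := algebraMap K ↥(K⟮i⟯) with hfd
  have hcoe : ∀ a : K, ((f a : ↥(K⟮i⟯)) : L) = algebraMap K L a := fun a =>
    (IsScalarTower.algebraMap_apply K ↥(K⟮i⟯) L a).symm
  have hz' : z = f x + f y * iJ := by
    apply Subtype.ext
    rw [hxy]
    push_cast
    rw [hcoe, hcoe]
  have e1 : c ^ 2 - d ^ 2 = x := by linear_combination hc - hd
  rcases le_or_gt 0 y with hy | hy
  · refine ⟨f c + f d * iJ, ?_⟩
    have e2 : 2 * c * d = y := by rw [hcd', abs_of_nonneg hy]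
    rw [hz', ← e1, ← e2, map_sub, map_pow, map_pow, map_mul, map_mul, map_ofNat]
    linear_combination (f d * f d) * hiJ2
  · refine ⟨f c - f d * iJ, ?_⟩
    have e2 : 2 * c * d = -y := by rw [hcd', abs_of_neg hy]
    have e2' : y = -(2 * c * d) := by linarith
    rw [hz', ← e1, e2', map_sub, map_neg, map_pow, map_pow, map_mul, map_mul, map_ofNat]
    linear_combination (f d * f d) * hiJ2

end AS
section ASMain

open IntermediateField

variable {K : Type*} [Field K] [LinearOrder K] [IsStrictOrderedRing K]

set_option maxHeartbeats 1600000 in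
set_option synthInstance.maxHeartbeats 400000 in
theorem irreducible_natDegree_le_two
    (hsq : ∀ c : K, 0 ≤ c → ∃ d : K, 0 ≤ d ∧ d ^ 2 = c)
    (hodd : ∀ p : K[X], p.Monic → Odd p.natDegree → ∃ x : K, p.eval x = 0)
    {p : K[X]} (hirr : Irreducible p) : p.natDegree ≤ 2 := by
  classical
  haveI : Fact (Nat.Prime 2) := ⟨Nat.prime_two⟩
  have hp0 : p ≠ 0 := hirr.ne_zero
  have hX2 : (Polynomial.X ^ 2 + 1 : K[X]) ≠ 0 := by
    intro h
    have h0 := congrArg (fun q : K[X] => q.coeff 0) h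
    simp at h0
  have hX2deg : (Polynomial.X ^ 2 + 1 : K[X]).natDegree = 2 := by compute_degree!
  set f : K[X] := p * (Polynomial.X ^ 2 + 1) with hf
  have hf0 : f ≠ 0 := mul_ne_zero hp0 hX2
  set L := f.SplittingField with hL
  haveI : IsGalois K L := ⟨⟩
  haveI : CharZero L := charZero_of_injective_algebraMap (algebraMap K L).injective
  have hsplits := Polynomial.SplittingField.splits f
  have hsp1 := hsplits.of_dvd (Polynomial.map_ne_zero hf0) (Polynomial.map_dvd _ (dvd_mul_right p _))
  have hsp2 := hsplits.of_dvd (Polynomial.map_ne_zero hf0) (Polynomial.map_dvd _ (dvd_mul_left (Polynomial.X ^ 2 + 1 : K[X]) p))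
  have hdegX2 : (Polynomial.X ^ 2 + 1 : K[X]).degree = 2 := by compute_degree!
  obtain ⟨i, hi⟩ := hsp2.exists_eval_eq_zero
    (by rw [Polynomial.degree_map, hdegX2]; exact two_ne_zero)
  rw [Polynomial.eval_map] at hi
  have hi2 : i ^ 2 = -1 := by
    have h1 : i ^ 2 + 1 = 0 := by
      simpa [Polynomial.eval₂_add, Polynomial.eval₂_pow, Polynomial.eval₂_X,
        Polynomial.eval₂_one] using hi
    linear_combination h1
  -- G is a 2-group
  obtain ⟨P⟩ : Nonempty (Sylow 2 (L ≃ₐ[K] L)) := Sylow.nonempty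
  set E := IntermediateField.fixedField (P : Subgroup (L ≃ₐ[K] L)) with hE
  have hEL : Module.finrank ↥E L = Fintype.card ↥(P : Subgroup (L ≃ₐ[K] L)) :=
    (IntermediateField.finrank_fixedField_eq_card _).trans Nat.card_eq_fintype_card
  have hKL : Fintype.card (L ≃ₐ[K] L) = Module.finrank K L := Nat.card_eq_fintype_card.symm.trans (IsGalois.card_aut_eq_finrank K L)
  have htower : Module.finrank K ↥E * Module.finrank ↥E L = Module.finrank K L :=
    Module.finrank_mul_finrank K ↥E L
  set k := (Nat.card (L ≃ₐ[K] L)).factorization 2 with hk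
  have hcardP : Fintype.card ↥(P : Subgroup (L ≃ₐ[K] L)) = 2 ^ k := by
    rw [← Nat.card_eq_fintype_card]
    exact Sylow.card_eq_multiplicity P
  have hGne : Nat.card (L ≃ₐ[K] L) ≠ 0 := Nat.card_pos.ne'
  have hGE : Module.finrank K ↥E * 2 ^ k = Fintype.card (L ≃ₐ[K] L) := by
    rw [← hcardP, ← hEL, htower, hKL]
  have hEodd : ¬ 2 ∣ Module.finrank K ↥E := by
    rintro ⟨t, ht⟩
    have hdvd : 2 ^ (k + 1) ∣ Nat.card (L ≃ₐ[K] L) := by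
      rw [Nat.card_eq_fintype_card, ← hGE, ht]
      exact ⟨t, by ring⟩
    have := (Nat.Prime.pow_dvd_iff_le_factorization Nat.prime_two hGne).1 hdvd
    omega
  obtain ⟨θ, hθ⟩ := Field.exists_primitive_element K ↥E
  have hintθ : IsIntegral K θ := IsIntegral.of_finite K θ
  have hfrE : Module.finrank K ↥E = (minpoly K θ).natDegree := by
    have h1 := IntermediateField.adjoin.finrank hintθ
    rw [hθ] at h1
    exact ((IntermediateField.topEquiv (F := K) (E := ↥E)).toLinearEquiv.finrank_eq).symm.trans h1
  have hE1 : Module.finrank K ↥E = 1 := by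
    have hoddE : Odd (Module.finrank K ↥E) := by
      rcases Nat.even_or_odd (Module.finrank K ↥E) with he | ho
      · exact absurd he.two_dvd hEodd
      · exact ho
    rw [hfrE] at hoddE ⊢
    exact odd_irreducible_natDegree_eq_one hodd (minpoly.irreducible hintθ) hoddE
  have hKL2 : Module.finrank K L = 2 ^ k := by
    rw [← htower, hE1, one_mul, hEL, hcardP]
  -- J = K(i)
  set J := K⟮i⟯ with hJ
  haveI : IsGalois ↥J L := IsGalois.tower_top_intermediateField J
  haveI : FiniteDimensional ↥J L := FiniteDimensional.right K ↥J L
  haveI : CharZero ↥J := charZero_of_injective_algebraMap (algebraMap K ↥J).injective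
  have htJ : Module.finrank K ↥J * Module.finrank ↥J L = Module.finrank K L :=
    Module.finrank_mul_finrank K ↥J L
  have hJLdvd : Module.finrank ↥J L ∣ 2 ^ k := Dvd.intro_left _ (by rw [htJ, hKL2])
  obtain ⟨b, hble, hb⟩ := (Nat.dvd_prime_pow Nat.prime_two).1 hJLdvd
  have hb0 : b = 0 := by
    by_contra hbne
    obtain ⟨t, rfl⟩ : ∃ t, b = t + 1 := ⟨b - 1, by omega⟩
    have hcardG' : Fintype.card (L ≃ₐ[↥J] L) = 2 ^ (t + 1) := by
      rw [← Nat.card_eq_fintype_card, IsGalois.card_aut_eq_finrank, hb]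
    obtain ⟨M, hM⟩ := Sylow.exists_subgroup_card_pow_prime (G := L ≃ₐ[↥J] L) 2 (n := t)
      (by rw [Nat.card_eq_fintype_card, hcardG']; exact pow_dvd_pow 2 (by omega))
    set E₂ := IntermediateField.fixedField M with hE₂
    have hE₂L : Module.finrank ↥E₂ L = 2 ^ t := by
      rw [IntermediateField.finrank_fixedField_eq_card, hM]
    have ht2 : Module.finrank ↥J ↥E₂ * Module.finrank ↥E₂ L = Module.finrank ↥J L :=
      Module.finrank_mul_finrank ↥J ↥E₂ L
    have hE₂2 : Module.finrank ↥J ↥E₂ = 2 := by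
      rw [hE₂L, hb] at ht2
      have hpos : (0:ℕ) < 2 ^ t := pow_pos (by norm_num) _
      refine Nat.eq_of_mul_eq_mul_right hpos ?_
      rw [ht2, pow_succ]
      exact mul_comm _ _
    obtain ⟨θ₂, hθ₂⟩ := Field.exists_primitive_element ↥J ↥E₂
    have hintθ₂ : IsIntegral ↥J θ₂ := IsIntegral.of_finite ↥J θ₂
    set m := minpoly ↥J θ₂ with hmdef
    haveI : CharZero ↥E₂ := charZero_of_injective_algebraMap (algebraMap ↥J ↥E₂).injective
    have hdeg2 : m.natDegree = 2 := by
      have h1 := IntermediateField.adjoin.finrank hintθ₂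
      rw [hθ₂] at h1
      have e2 : Module.finrank ↥J ↥(⊤ : IntermediateField ↥J ↥E₂) = Module.finrank ↥J ↥E₂ :=
        (IntermediateField.topEquiv).toLinearEquiv.finrank_eq
      rw [e2] at h1
      rw [← hmdef] at h1
      rw [← h1]
      exact hE₂2
    have hmonic : m.Monic := minpoly.monic hintθ₂
    have hroot : Polynomial.aeval θ₂ m = 0 := minpoly.aeval ↥J θ₂
    set g := algebraMap ↥J ↥E₂ with hg
    have hc2 : m.coeff 2 = 1 := by
      have h5 := hmonic.coeff_natDegree
      rwa [hdeg2] at h5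
    have hexp : θ₂ ^ 2 + g (m.coeff 1) * θ₂ + g (m.coeff 0) = 0 := by
      have h3 := Polynomial.aeval_eq_sum_range (p := m) θ₂
      rw [hroot, hdeg2] at h3
      rw [Finset.sum_range_succ, Finset.sum_range_succ, Finset.sum_range_one, hc2] at h3
      simp only [pow_zero, pow_one, one_smul, Algebra.smul_def, mul_one, map_one] at h3
      linear_combination -h3
    have hg2 : g 2 = 2 := by
      rw [show (2 : ↥J) = 1 + 1 by norm_num, map_add, map_one]
      norm_num
    have h2g : g (m.coeff 1 / 2) * 2 = g (m.coeff 1) := by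
      rw [show (2 : ↥E₂) = g 2 from hg2.symm, ← map_mul,
        div_mul_cancel₀ _ (by norm_num : (2 : ↥J) ≠ 0)]
    set s := θ₂ + g (m.coeff 1 / 2) with hs
    have hsq2 : s ^ 2 = g ((m.coeff 1 / 2) ^ 2 - m.coeff 0) := by
      rw [hs, map_sub, map_pow]
      linear_combination hexp + θ₂ * h2g
    obtain ⟨w, hw⟩ := exists_sqrt_adjoin_i hsq hi2 ((m.coeff 1 / 2) ^ 2 - m.coeff 0 : ↥J)
    have hgw : g w ^ 2 = g ((m.coeff 1 / 2) ^ 2 - m.coeff 0) := by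
      rw [← map_pow, hw]
    have hsw : (s - g w) * (s + g w) = 0 := by
      linear_combination hsq2 - hgw
    have hθ₂bot : θ₂ ∈ (⊥ : IntermediateField ↥J ↥E₂) := by
      rw [IntermediateField.mem_bot]
      rcases mul_eq_zero.1 hsw with h | h
      · have h' : s = g w := sub_eq_zero.1 h
        exact ⟨w - m.coeff 1 / 2, by rw [map_sub, ← h', hs]; ring⟩
      · have h' : s = - g w := eq_neg_of_add_eq_zero_left h
        exact ⟨-w - m.coeff 1 / 2, by rw [map_sub, map_neg, ← h', hs]; ring⟩
    have hbot : (⊤ : IntermediateField ↥J ↥E₂) = ⊥ := by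
      rw [← hθ₂]
      exact IntermediateField.adjoin_simple_eq_bot_iff.2 hθ₂bot
    have hfr1 : Module.finrank ↥J ↥E₂ = 1 := by
      have e1 : Module.finrank ↥J ↥(⊤ : IntermediateField ↥J ↥E₂) = Module.finrank ↥J ↥E₂ :=
        (IntermediateField.topEquiv).toLinearEquiv.finrank_eq
      rw [← e1, hbot, IntermediateField.finrank_bot]
    omega
  have hJL1 : Module.finrank ↥J L = 1 := by rw [hb, hb0, pow_zero]
  have hX2monic : (Polynomial.X ^ 2 + 1 : K[X]).Monic := by
    have := Polynomial.monic_X_pow_add_C (1 : K) (two_ne_zero (α := ℕ))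
    simpa using this
  have hintI : IsIntegral K i := ⟨Polynomial.X ^ 2 + 1, hX2monic, hi⟩
  have hKJ2 : Module.finrank K ↥J ≤ 2 := by
    rw [IntermediateField.adjoin.finrank hintI]
    have hdvd : minpoly K i ∣ (Polynomial.X ^ 2 + 1) :=
      minpoly.dvd K i (by rw [Polynomial.aeval_def]; exact hi)
    have hd := Polynomial.degree_le_of_dvd hdvd hX2
    have hnd : (minpoly K i).natDegree ≤ (Polynomial.X ^ 2 + 1 : K[X]).natDegree :=
      Polynomial.natDegree_le_natDegree hd
    omega
  have hKLle : Module.finrank K L ≤ 2 := by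
    rw [← htJ, hJL1, mul_one]; exact hKJ2
  obtain ⟨x₀, hx₀⟩ := hsp1.exists_eval_eq_zero
    (by rw [Polynomial.degree_map]; exact (Polynomial.degree_pos_of_irreducible hirr).ne')
  rw [Polynomial.eval_map] at hx₀
  have haev : Polynomial.aeval x₀ p = 0 := by rw [Polynomial.aeval_def]; exact hx₀
  have hint₀ : IsIntegral K x₀ :=
    ⟨p * Polynomial.C p.leadingCoeff⁻¹, Polynomial.monic_mul_leadingCoeff_inv hp0, by
      rw [Polynomial.eval₂_mul, show Polynomial.eval₂ (algebraMap K L) x₀ p = 0 from hx₀,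
        zero_mul]⟩
  have hmp : (minpoly K x₀).natDegree = p.natDegree := by
    rw [← minpoly.eq_of_irreducible hirr haev, Polynomial.natDegree_mul_leadingCoeff_inv p hp0]
  have hdvd2 : p.natDegree ∣ Module.finrank K L := by
    rw [← hmp, ← IntermediateField.adjoin.finrank hint₀]
    exact ⟨Module.finrank ↥(K⟮x₀⟯) L, (Module.finrank_mul_finrank K ↥(K⟮x₀⟯) L).symm⟩
  have hpos : 0 < Module.finrank K L := Module.finrank_pos
  exact le_trans (Nat.le_of_dvd hpos hdvd2) hKLle

end ASMain
section RealSide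

variable {F : Type*} [Field F] [LinearOrder F] [IsStrictOrderedRing F]

theorem coe_abs {K : Subfield F} (z : ↥K) : ((|z| : ↥K) : F) = |(z : F)| := by
  rcases le_total 0 z with h | h
  · rw [abs_of_nonneg h, abs_of_nonneg (show (0:F) ≤ (z:F) from h)]
  · rw [abs_of_nonpos h, abs_of_nonpos (show (z:F) ≤ (0:F) from h)]
    push_cast
    ring

theorem psi_abs {K : Subfield F} (hK : ArchSubfield K) (z : ↥K) :
    |psi K hK z| = psi K hK |z| := by
  rcases le_total 0 z with h | h
  · have h' : (0:ℝ) ≤ psi K hK z := by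
      have := (psi_le_iff hK (x := 0) (y := z)).2 h
      rwa [map_zero] at this
    rw [abs_of_nonneg h', abs_of_nonneg h]
  · have h' : psi K hK z ≤ 0 := by
      have := (psi_le_iff hK (x := z) (y := 0)).2 h
      rwa [map_zero] at this
    rw [abs_of_nonpos h', abs_of_nonpos h, map_neg]

theorem rat_le_abs_of_psi {K : Subfield F} (hK : ArchSubfield K) (z : ↥K) {q : ℚ}
    (h : (q : ℝ) ≤ |psi K hK z|) : (q : F) ≤ |(z : F)| := by
  rw [psi_abs hK] at h
  have := (rat_le_psi_iff hK |z| q).1 h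
  rwa [coe_abs] at this

theorem arch_witness {x : F} {q : ℚ} (h : |x| ≤ (q : F)) : ∃ n : ℕ, x ≤ (n : F) := by
  refine ⟨⌈q⌉₊, ?_⟩
  calc x ≤ |x| := le_abs_self x
    _ ≤ (q : F) := h
    _ ≤ ((⌈q⌉₊ : ℚ) : F) := by exact_mod_cast Nat.le_ceil q
    _ = ((⌈q⌉₊ : ℕ) : F) := by push_cast; ring

theorem eval_map_rat {K : Subfield F} (s : Polynomial ↥K) (r : ℚ) :
    (s.map (algebraMap ↥K F)).eval ((r : ℚ) : F)
      = (((Polynomial.eval ((r : ℚ) : ↥K) s : ↥K)) : F) := by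
  have h1 : ((r : ℚ) : F) = algebraMap ↥K F ((r : ℚ) : ↥K) := by
    show ((r : ℚ) : F) = (((r : ℚ) : ↥K) : F)
    norm_cast
  rw [Polynomial.eval_map, h1, Polynomial.eval₂_hom]
  rfl

theorem psi_eval_rat {K : Subfield F} (hK : ArchSubfield K) (s : Polynomial ↥K) (r : ℚ) :
    (s.map (psi K hK)).eval ((r : ℚ) : ℝ) = psi K hK (Polynomial.eval ((r : ℚ) : ↥K) s) := by
  rw [Polynomial.eval_map, show ((r : ℚ) : ℝ) = psi K hK ((r : ℚ) : ↥K) from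
    (psi_ratCast hK r).symm, Polynomial.eval₂_hom]

/-- If `α : ℝ` is a root of a monic polynomial over the maximal archimedean subfield
(transported by `psi`), then `α` is in the range of `psi`. -/
theorem psi_range_of_integral {F₀ : Subfield F} (hF : RealClosedOF F) (hmax : MaxArchSubfield F₀)
    {α : ℝ} (hint : ∃ P : Polynomial ↥F₀, P.Monic ∧ Polynomial.eval₂ (psi F₀ hmax.1) α P = 0) :
    ∃ c : ↥F₀, psi F₀ hmax.1 c = α := by
  classical
  set ψ := psi F₀ hmax.1 with hψ
  letI : Algebra ↥F₀ ℝ := ψ.toAlgebra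
  have hALG : algebraMap ↥F₀ ℝ = ψ := rfl
  have hint' : IsIntegral ↥F₀ α := by
    obtain ⟨P, hPm, hPr⟩ := hint
    exact ⟨P, hPm, by rwa [hALG]⟩
  set q := minpoly ↥F₀ α with hq
  have hirr : Irreducible q := minpoly.irreducible hint'
  have hsqK : ∀ c : ↥F₀, 0 ≤ c → ∃ d : ↥F₀, 0 ≤ d ∧ d ^ 2 = c := fun c hc => sqrt_mem hF hmax c hc
  have hoddK : ∀ p : Polynomial ↥F₀, p.Monic → Odd p.natDegree → ∃ x : ↥F₀, p.eval x = 0 :=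
    fun p hm ho => odd_root_mem hF hmax p hm ho
  have hle2 : q.natDegree ≤ 2 := irreducible_natDegree_le_two hsqK hoddK hirr
  have hposd : 0 < q.natDegree := minpoly.natDegree_pos hint'
  have haev : Polynomial.aeval α q = 0 := minpoly.aeval ↥F₀ α
  have hmono : q.Monic := minpoly.monic hint'
  have hsum := Polynomial.aeval_eq_sum_range (p := q) α
  rw [haev] at hsum
  rcases (by omega : q.natDegree = 1 ∨ q.natDegree = 2) with hdeg | hdeg
  · rw [hdeg, Finset.sum_range_succ, Finset.sum_range_one] at hsum
    have hc1 : q.coeff 1 = 1 := by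
      have h5 := hmono.coeff_natDegree
      rwa [hdeg] at h5
    rw [hc1] at hsum
    simp only [pow_zero, pow_one, one_smul, Algebra.smul_def, mul_one, one_mul, map_one, hALG] at hsum
    refine ⟨-(q.coeff 0), ?_⟩
    rw [map_neg]
    linarith [hsum]
  · rw [hdeg, Finset.sum_range_succ, Finset.sum_range_succ, Finset.sum_range_one] at hsum
    have hc2 : q.coeff 2 = 1 := by
      have h5 := hmono.coeff_natDegree
      rwa [hdeg] at h5
    rw [hc2] at hsum
    simp only [pow_zero, pow_one, one_smul, Algebra.smul_def, mul_one, one_mul, map_one, hALG] at hsum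
    set c0 := q.coeff 0 with hc0d
    set c1 := q.coeff 1 with hc1d
    have hψD : ψ (c1 ^ 2 - 4 * c0) = (2 * α + ψ c1) ^ 2 := by
      have h4 : ψ (4 : ↥F₀) = 4 := by
        rw [show (4:↥F₀) = ((4:ℚ):↥F₀) by norm_cast, map_ratCast]
        norm_num
      rw [map_sub, map_mul, map_pow, h4]
      linear_combination 4 * hsum
    have hDpos : (0 : ↥F₀) ≤ c1 ^ 2 - 4 * c0 := by
      have h0 : ψ 0 ≤ ψ (c1 ^ 2 - 4 * c0) := by
        rw [map_zero, hψD]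
        positivity
      exact (psi_le_iff hmax.1).1 h0
    obtain ⟨d, hd0, hd⟩ := hsqK _ hDpos
    have hψd : (2 * α + ψ c1) ^ 2 = ψ d ^ 2 := by rw [← map_pow, hd, hψD]
    have hfact : (2 * α + ψ c1 - ψ d) * (2 * α + ψ c1 + ψ d) = 0 := by
      linear_combination hψd
    have h2 : ψ (2 : ↥F₀) = 2 := by
      rw [show (2:↥F₀) = ((2:ℚ):↥F₀) by norm_cast, map_ratCast]
      norm_num
    rcases mul_eq_zero.1 hfact with h | h
    · refine ⟨(d - c1) / 2, ?_⟩
      rw [map_div₀, map_sub, h2]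
      linarith [h]
    · refine ⟨(-d - c1) / 2, ?_⟩
      rw [map_div₀, map_sub, map_neg, h2]
      linarith [h]

end RealSide
section Key

variable {F : Type*} [Field F] [LinearOrder F] [IsStrictOrderedRing F]

theorem key_mem_range (hF : RealClosedOF F) {F₀ : Subfield F} (hmax : MaxArchSubfield F₀)
    {F₁ : Subfield F} (harch : ArchSubfield F₁) (a : ↥F₁) :
    ∃ c : ↥F₀, psi F₀ hmax.1 c = psi F₁ harch a := by
  classical
  obtain ⟨qa, hqa1, hqa⟩ := abs_le_rat_of_mem harch a.2
  by_cases halg : ∃ P : Polynomial ↥F₀, P.Monic ∧ Polynomial.aeval ((a : ↥F₁) : F) P = 0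
  · obtain ⟨P, hPm, hPr⟩ := halg
    have hmem : ((a : ↥F₁) : F) ∈ F₀ := mem_of_integral hmax hqa1 hqa hPm hPr
    exact ⟨⟨_, hmem⟩, psi_congr hmax.1 harch hmem a.2⟩
  by_cases hints : ∃ Q : Polynomial ↥F₀, Q.Monic ∧
      Polynomial.eval₂ (psi F₀ hmax.1) (psi F₁ harch a) Q = 0
  · exact psi_range_of_integral hF hmax hints
  exfalso
  apply halg
  set ψ0 := psi F₀ hmax.1 with hψ0
  set ψ1 := psi F₁ harch with hψ1
  set α := ψ1 a with hα
  set av : F := ((a : ↥F₁) : F) with hav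
  have hαb : |α| ≤ (qa : ℝ) := (abs_psi_le_rat_iff harch a qa).2 hqa
  have hαb' := abs_le.1 hαb
  -- the key estimate: nonzero polynomials over F₀ are not infinitesimal at a
  have hest : ∀ s : Polynomial ↥F₀, s ≠ 0 →
      ∃ δ : ℚ, 0 < δ ∧ (δ : F) ≤ |Polynomial.aeval av s| := by
    intro s hs
    set sR := s.map ψ0 with hsR
    set sF := s.map (algebraMap ↥F₀ F) with hsF
    have hβ0 : sR.eval α ≠ 0 := by
      intro h0
      apply hints
      refine ⟨s * Polynomial.C s.leadingCoeff⁻¹, Polynomial.monic_mul_leadingCoeff_inv hs, ?_⟩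
      rw [Polynomial.eval₂_eq_eval_map, Polynomial.map_mul, Polynomial.map_C, Polynomial.eval_mul,
        Polynomial.eval_C, ← hsR, h0, zero_mul]
    set β := |sR.eval α| with hβ
    have hβpos : (0:ℝ) < β := abs_pos.2 hβ0
    obtain ⟨δ, hδ1, hδ2⟩ := exists_rat_btwn (show (0:ℝ) < β/4 by linarith)
    have hδ0 : (0:ℚ) < δ := by exact_mod_cast hδ1
    obtain ⟨m, hm1, hmF⟩ := exists_coeff_bound hmax.1 s
    have hmR : ∀ i, |sR.coeff i| ≤ ((m:ℚ):ℝ) := by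
      intro i
      rw [hsR, Polynomial.coeff_map]
      exact (abs_psi_le_rat_iff hmax.1 _ m).2 (hmF i)
    have hmFF : ∀ i, |sF.coeff i| ≤ ((m:ℚ):F) := by
      intro i
      rw [hsF, Polynomial.coeff_map]
      exact hmF i
    set n := s.natDegree with hn
    set Cq : ℚ := qa + 1 with hCq
    have hCq1 : (1:ℚ) ≤ Cq := by linarith
    set Mq : ℚ := (n + 1)^2 * (m * Cq ^ n) with hMq
    have hMqpos : 0 < Mq := by
      have : (0:ℚ) < m := by linarith
      positivity
    set t : ℚ := min (δ / (Mq + 1)) 1 with ht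
    have ht0 : 0 < t := lt_min (by positivity) one_pos
    have ht1 : t ≤ 1 := min_le_right _ _
    have htM : t * Mq < δ := by
      have h1 : t ≤ δ / (Mq + 1) := min_le_left _ _
      have h2 : t * Mq ≤ (δ / (Mq + 1)) * Mq := by nlinarith
      have h3 : (δ / (Mq + 1)) * Mq < δ := by
        rw [div_mul_eq_mul_div, div_lt_iff₀ (by linarith)]
        nlinarith
      linarith
    obtain ⟨r, hr1, hr2⟩ := exists_rat_btwn (show α - (t:ℝ) < α by
      have : (0:ℝ) < (t:ℝ) := by exact_mod_cast ht0
      linarith)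
    have hαr : |α - (r:ℝ)| ≤ (t:ℝ) := by
      rw [abs_le]
      constructor <;> [linarith; linarith]
    -- rational bound for r
    have hrqa : r ≤ qa := by
      have : (r:ℝ) ≤ (qa:ℝ) := by linarith [hαb'.2]
      exact_mod_cast this
    have hrlow : -(Cq) ≤ r := by
      have h4 : ((-(Cq)):ℚ) ≤ r := by
        have h5 : (((-Cq):ℚ):ℝ) ≤ (r:ℝ) := by
          rw [hCq]
          push_cast
          have h6 : ((t:ℝ)) ≤ 1 := by exact_mod_cast ht1
          linarith [hαb'.1]
        exact_mod_cast h5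
      exact h4
    have hrq : |r| ≤ Cq := abs_le.2 ⟨hrlow, by linarith⟩
    -- bounds in ℝ and F
    have hαC : |α| ≤ ((Cq:ℚ):ℝ) := by
      have : (qa:ℝ) ≤ ((Cq:ℚ):ℝ) := by exact_mod_cast (by linarith : qa ≤ Cq)
      linarith
    have hrC : |((r:ℚ):ℝ)| ≤ ((Cq:ℚ):ℝ) := by
      rw [← Rat.cast_abs]
      exact_mod_cast hrq
    have havC : |av| ≤ ((Cq:ℚ):F) := by
      have : ((qa:ℚ):F) ≤ ((Cq:ℚ):F) := by exact_mod_cast (by linarith : qa ≤ Cq)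
      linarith [hqa]
    have hrCF : |((r:ℚ):F)| ≤ ((Cq:ℚ):F) := by
      rw [← Rat.cast_abs]
      exact_mod_cast hrq
    have havr : |av - ((r:ℚ):F)| ≤ ((t:ℚ):F) := by
      have har1 : ((r:ℚ):F) < av := (rat_lt_psi_iff harch a r).1 hr2
      have har2 : av < ((r + t : ℚ) : F) := by
        have hlt : ψ1 a < ((r + t : ℚ) : ℝ) := by
          rw [← hα]
          push_cast
          linarith
        exact (psi_lt_rat_iff harch a (r + t)).1 hlt
      rw [abs_le]
      constructor
      · have h7 : (0:F) ≤ ((t:ℚ):F) := by exact_mod_cast ht0.le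
        linarith
      · have h8 : ((r + t : ℚ):F) = ((r:ℚ):F) + ((t:ℚ):F) := by push_cast; ring
        rw [h8] at har2
        linarith
    -- Lipschitz in ℝ
    have hnR : sR.natDegree = n := Polynomial.natDegree_map ψ0
    have hnF : sF.natDegree = n := Polynomial.natDegree_map _
    have hlipR := eval_sub_eval_abs_le sR (M := ((m:ℚ):ℝ)) (C := ((Cq:ℚ):ℝ))
      (by exact_mod_cast hCq1) hmR hαC hrC
    have hMteq : ((sR.natDegree + 1 : ℕ):ℝ)^2 * (((m:ℚ):ℝ) * ((Cq:ℚ):ℝ) ^ sR.natDegree)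
        = ((Mq:ℚ):ℝ) := by
      rw [hnR, hMq]
      push_cast
      ring
    have h1R : |sR.eval α - sR.eval ((r:ℚ):ℝ)| ≤ ((Mq:ℚ):ℝ) * ((t:ℚ):ℝ) := by
      refine le_trans hlipR ?_
      rw [hMteq]
      have hMq0 : (0:ℝ) ≤ ((Mq:ℚ):ℝ) := by exact_mod_cast hMqpos.le
      exact mul_le_mul_of_nonneg_left hαr hMq0
    have hMtlt : ((Mq:ℚ):ℝ) * ((t:ℚ):ℝ) < ((δ:ℚ):ℝ) := by
      rw [show ((Mq:ℚ):ℝ) * ((t:ℚ):ℝ) = ((t * Mq : ℚ):ℝ) by push_cast; ring]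
      exact_mod_cast htM
    have h2R : ((3*δ:ℚ):ℝ) ≤ |sR.eval ((r:ℚ):ℝ)| := by
      have htri := abs_sub_abs_le_abs_sub (sR.eval α) (sR.eval ((r:ℚ):ℝ))
      have h9 : (4:ℝ) * ((δ:ℚ):ℝ) < β := by
        have : ((δ:ℚ):ℝ) < β/4 := hδ2
        linarith
      push_cast
      push_cast at h9
      linarith [h1R, hMtlt]
    -- transfer value at r to F
    have hψrv : ψ0 (Polynomial.eval ((r:ℚ):↥F₀) s) = sR.eval ((r:ℚ):ℝ) :=
      (psi_eval_rat hmax.1 s r).symm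
    have h2F : ((3*δ:ℚ):F) ≤ |((Polynomial.eval ((r:ℚ):↥F₀) s : ↥F₀) : F)| := by
      refine rat_le_abs_of_psi hmax.1 _ ?_
      rw [hψrv]
      exact h2R
    have hvF : sF.eval ((r:ℚ):F) = ((Polynomial.eval ((r:ℚ):↥F₀) s : ↥F₀) : F) := by
      rw [hsF]
      exact eval_map_rat s r
    -- Lipschitz in F
    have hlipF := eval_sub_eval_abs_le sF (M := ((m:ℚ):F)) (C := ((Cq:ℚ):F))
      (by exact_mod_cast hCq1) hmFF havC hrCF
    have hMteqF : ((sF.natDegree + 1 : ℕ):F)^2 * (((m:ℚ):F) * ((Cq:ℚ):F) ^ sF.natDegree)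
        = ((Mq:ℚ):F) := by
      rw [hnF, hMq]
      push_cast
      ring
    have h1F : |sF.eval av - sF.eval ((r:ℚ):F)| ≤ ((δ:ℚ):F) := by
      have step1 : |sF.eval av - sF.eval ((r:ℚ):F)| ≤ ((Mq:ℚ):F) * ((t:ℚ):F) := by
        refine le_trans hlipF ?_
        rw [hMteqF]
        have hMq0 : (0:F) ≤ ((Mq:ℚ):F) := by exact_mod_cast hMqpos.le
        exact mul_le_mul_of_nonneg_left havr hMq0
      have step2 : ((Mq:ℚ):F) * ((t:ℚ):F) ≤ ((δ:ℚ):F) := by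
        rw [show ((Mq:ℚ):F) * ((t:ℚ):F) = ((t * Mq : ℚ):F) by push_cast; ring]
        exact_mod_cast htM.le
      exact le_trans step1 step2
    refine ⟨δ, hδ0, ?_⟩
    have haev : Polynomial.aeval av s = sF.eval av := by
      rw [Polynomial.aeval_def, hsF, Polynomial.eval_map]
    rw [haev]
    have htri2 := abs_sub_abs_le_abs_sub (sF.eval ((r:ℚ):F)) (sF.eval av)
    have habs_comm : |sF.eval ((r:ℚ):F) - sF.eval av| = |sF.eval av - sF.eval ((r:ℚ):F)| :=
      abs_sub_comm _ _
    rw [← hvF] at h2F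
    have hcast3 : ((3*δ:ℚ):F) = 3 * ((δ:ℚ):F) := by push_cast; ring
    rw [hcast3] at h2F
    have hδF : (0:F) < ((δ:ℚ):F) := by exact_mod_cast hδ0
    linarith [htri2, habs_comm, h1F, h2F, hδF]
  -- the adjoined field is archimedean
  set T := IntermediateField.adjoin ↥F₀ ({av} : Set F) with hT
  have harchT : ArchSubfield T.toSubfield := by
    intro x hx
    have hx' : x ∈ T := hx
    rw [IntermediateField.mem_adjoin_simple_iff] at hx'
    obtain ⟨rp, sp, hxe⟩ := hx'
    by_cases hs0 : Polynomial.aeval av sp = 0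
    · rw [hxe, hs0, div_zero]
      exact ⟨0, by norm_num⟩
    · have hspne : sp ≠ 0 := fun h => hs0 (by rw [h]; simp)
      obtain ⟨δ, hδ0, hδ⟩ := hest sp hspne
      obtain ⟨mr, hmr1, hmrF⟩ := exists_coeff_bound hmax.1 rp
      set rF := rp.map (algebraMap ↥F₀ F) with hrF
      have hmrFF : ∀ i, |rF.coeff i| ≤ ((mr:ℚ):F) := by
        intro i
        rw [hrF, Polynomial.coeff_map]
        exact hmrF i
      have hnum := eval_abs_le rF (M := ((mr:ℚ):F)) (C := ((qa:ℚ):F))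
        (by exact_mod_cast hqa1) hmrFF hqa
      set Nq : ℚ := (rF.natDegree + 1) * (mr * qa ^ rF.natDegree) with hNq
      have hnum' : |Polynomial.aeval av rp| ≤ ((Nq:ℚ):F) := by
        have haev : Polynomial.aeval av rp = rF.eval av := by
          rw [Polynomial.aeval_def, hrF, Polynomial.eval_map]
        rw [haev, hNq]
        refine le_trans hnum (le_of_eq ?_)
        push_cast
        ring
      have hNq0 : (0:ℚ) ≤ Nq := by
        have h1 : (0:F) ≤ ((Nq:ℚ):F) := le_trans (abs_nonneg _) hnum'
        exact_mod_cast h1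
      have hxb : |x| ≤ ((Nq / δ : ℚ):F) := by
        rw [hxe, abs_div]
        have hδF : (0:F) < ((δ:ℚ):F) := by exact_mod_cast hδ0
        have hdiv : |Polynomial.aeval av rp| / |Polynomial.aeval av sp|
            ≤ ((Nq:ℚ):F) / ((δ:ℚ):F) := by
          apply div_le_div₀ (by exact_mod_cast hNq0) hnum' hδF hδ
        refine le_trans hdiv (le_of_eq ?_)
        push_cast
        ring
      exact arch_witness hxb
  have hle : F₀ ≤ T.toSubfield := fun c hc => T.algebraMap_mem ⟨c, hc⟩
  have heq := hmax.2 T.toSubfield harchT hle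
  have hmem : av ∈ F₀ := by
    rw [← heq]
    exact IntermediateField.mem_adjoin_simple_self ↥F₀ av
  refine ⟨Polynomial.X - Polynomial.C ⟨av, hmem⟩, Polynomial.monic_X_sub_C _, ?_⟩
  simp only [map_sub, Polynomial.aeval_X, Polynomial.aeval_C]
  exact sub_eq_zero.2 rfl

end Key

end MaxArch

/-- A maximal archimedean subfield `F₀` of a real closed linear ordered field `F` is the
greatest archimedean subfield of `F` up to isomorphic embedding of ordered fields:
every archimedean subfield `F₁` embeds into `F₀` by an injective order-preserving
ring homomorphism. -/
theorem maxArchSubfield_greatest (F : Type*) [Field F] [LinearOrder F] [IsStrictOrderedRing F]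
    (hF : RealClosedOF F) (F₀ : Subfield F) (hmax : MaxArchSubfield F₀)
    (F₁ : Subfield F) (harch : ArchSubfield F₁) :
    ∃ φ : F₁ →+* F₀, Function.Injective φ ∧ ∀ x y : F₁, x ≤ y ↔ φ x ≤ φ y := by
  classical
  have key := fun a : ↥F₁ => MaxArch.key_mem_range hF hmax harch a
  choose c hc using key
  have hinj0 : Function.Injective (MaxArch.psi F₀ hmax.1) := RingHom.injective _
  have hinj1 : Function.Injective (MaxArch.psi F₁ harch) := RingHom.injective _
  let Φ : ↥F₁ →+* ↥F₀ :=
    { toFun := c,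
      map_one' := hinj0 (by rw [hc, map_one, map_one]),
      map_mul' := fun x y => hinj0 (by rw [map_mul, hc, hc, hc, map_mul]),
      map_zero' := hinj0 (by rw [hc, map_zero, map_zero]),
      map_add' := fun x y => hinj0 (by rw [map_add, hc, hc, hc, map_add]) }
  have hΦapp : ∀ x, Φ x = c x := fun x => rfl
  refine ⟨Φ, ?_, ?_⟩
  · intro x y hxy
    rw [hΦapp, hΦapp] at hxy
    apply hinj1
    rw [← hc, ← hc, hxy]
  · intro x y
    rw [hΦapp, hΦapp]
    have h1 : x ≤ y ↔ MaxArch.psi F₁ harch x ≤ MaxArch.psi F₁ harch y :=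
      (MaxArch.psi_le_iff harch).symm
    have h2 : c x ≤ c y ↔ MaxArch.psi F₀ hmax.1 (c x) ≤ MaxArch.psi F₀ hmax.1 (c y) :=
      (MaxArch.psi_le_iff hmax.1).symm
    rw [h1, h2, hc, hc]
end

section
/- Let K be a class of total computable functions ℕ → ℕ with AC ⊆ K. If the structure (K̃, 0, Q³₊, Q³₋) has a computable presentation, then the set A₀ ∪ (A₂ \ A₁) is Σ⁰₂. -/
/-- The standard numbering of the partial computable functions. -/
def phi (e : ℕ) : ℕ →. ℕ := (Denumerable.ofNat Nat.Partrec.Code e).eval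

/-- A set `S ⊆ ℕ` is `Σ⁰₂` if `S = {n | ∃ a, ∀ b, R(n,a,b)}` for a computable relation `R`. -/
def Sigma02 (S : Set ℕ) : Prop :=
  ∃ R : ℕ × ℕ × ℕ → Bool, Computable R ∧ S = {n : ℕ | ∃ a : ℕ, ∀ b : ℕ, R (n, a, b) = true}

/-- For `f : ℕ → ℕ` (with range in `{0,1,2}`), `f̄ = Σ_{i} (f(i) − 1)/2^(i+1)`. -/
noncomputable def fbar (f : ℕ → ℕ) : ℝ := ∑' i : ℕ, ((f i : ℝ) - 1) / 2 ^ (i + 1)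

/-- Almost constant functions. -/
def AlmostConst (f : ℕ → ℕ) : Prop := ∃ c x : ℕ, ∀ y > x, f y = c

/-- `φₙ` is total. -/
def TotalPhi (n : ℕ) : Prop := ∀ x : ℕ, (phi n x).Dom

/-- The range of `φₙ` is contained in `{0,1,2}`. -/
def RangeSub012 (n : ℕ) : Prop := ∀ x m : ℕ, m ∈ phi n x → m ∈ ({0, 1, 2} : Set ℕ)

/-- The set of reals `K̃ = {m + f̄ | m ∈ ℤ, f ∈ K, range(f) ⊆ {0,1,2}}`. -/
def KtildeR (K : Set (ℕ → ℕ)) : Set ℝ :=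
  {x : ℝ | ∃ m : ℤ, ∃ f ∈ K, (∀ i : ℕ, f i ∈ ({0, 1, 2} : Set ℕ)) ∧ x = (m : ℝ) + fbar f}

def A0 : Set ℕ := {n : ℕ | RangeSub012 n ∧ ¬ TotalPhi n}

def A1 : Set ℕ :=
  {n : ℕ | RangeSub012 n ∧ (¬ TotalPhi n ∨
    ∃ h : TotalPhi n, AlmostConst fun k => (phi n k).get (h k))}

def A2 (K : Set (ℕ → ℕ)) : Set ℕ :=
  {n : ℕ | RangeSub012 n ∧ (¬ TotalPhi n ∨
    ∃ h : TotalPhi n, fbar (fun k => (phi n k).get (h k)) ∈ KtildeR K)}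

/-- A computable presentation of the structure `(S, 0, Q³₊, Q³₋)` on a set `S ⊆ ℝ`:
a surjective numbering `μ : ℕ → S` with an index for `0` such that the relations
`μ(n)+μ(m) ≤ μ(k)` and `μ(n)+μ(m) ≥ μ(k)` are decidable. -/
def CompPres (S : Set ℝ) : Prop :=
  ∃ μ : ℕ → ℝ, (∀ n : ℕ, μ n ∈ S) ∧ (∀ x ∈ S, ∃ n : ℕ, μ n = x) ∧ (∃ e₀ : ℕ, μ e₀ = 0) ∧
    (∃ d : ℕ × ℕ × ℕ → Bool, Computable d ∧
      ∀ n m k : ℕ, (d (n, m, k) = true ↔ μ n + μ m ≤ μ k)) ∧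
    (∃ d : ℕ × ℕ × ℕ → Bool, Computable d ∧
      ∀ n m k : ℕ, (d (n, m, k) = true ↔ μ k ≤ μ n + μ m))

namespace Aux


noncomputable def qp (g : ℕ → ℕ) (p : ℕ) : ℝ :=
  ∑ i ∈ Finset.range (p+1), ((g i : ℝ) - 1) / 2 ^ (i + 1)

def shf (g : ℕ → ℕ) (m : ℕ) : ℕ → ℕ := fun i => g (i + m)

theorem term_abs_le (g : ℕ → ℕ) (hg : ∀ i, g i ≤ 2) (i : ℕ) :
    |((g i : ℝ) - 1) / 2 ^ (i + 1)| ≤ (1/2 : ℝ) ^ (i+1) := by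
  rw [abs_div, abs_of_pos (by positivity : (0:ℝ) < 2 ^ (i+1))]
  rw [div_pow, one_pow, div_le_div_iff₀ (by positivity) (by positivity)]
  have h2 : (g i : ℝ) ≤ 2 := by exact_mod_cast hg i
  have h3 : (0:ℝ) ≤ (g i : ℝ) := Nat.cast_nonneg _
  have h1 : |((g i : ℝ) - 1)| ≤ 1 := by rw [abs_le]; constructor <;> linarith
  nlinarith [pow_pos (by norm_num : (0:ℝ) < 2) (i+1)]

theorem summable_half : Summable (fun i : ℕ => (1/2:ℝ)^(i+1)) :=
  (summable_geometric_of_lt_one (by norm_num) (by norm_num)).comp_injective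
    (add_left_injective 1)

theorem summable_fbar (g : ℕ → ℕ) (hg : ∀ i, g i ≤ 2) :
    Summable (fun i => ((g i : ℝ) - 1) / 2 ^ (i + 1)) := by
  apply Summable.of_abs
  exact Summable.of_nonneg_of_le (fun i => abs_nonneg _) (term_abs_le g hg) summable_half

theorem tsum_halfgeo : ∑' i : ℕ, (1/2:ℝ) ^ (i+1) = 1 := by
  have h : ∀ i : ℕ, (1/2:ℝ)^(i+1) = (1/2:ℝ)^i * (1/2) := fun i => pow_succ _ _
  rw [tsum_congr h, tsum_mul_right, tsum_geometric_of_lt_one (by norm_num) (by norm_num)]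
  norm_num

theorem abs_fbar_le (g : ℕ → ℕ) (hg : ∀ i, g i ≤ 2) : |fbar g| ≤ 1 := by
  have hs : Summable (fun i : ℕ => ‖((g i : ℝ) - 1) / 2 ^ (i + 1)‖) := by
    simpa only [Real.norm_eq_abs] using (summable_fbar g hg).abs
  have h0 := norm_tsum_le_tsum_norm hs
  rw [Real.norm_eq_abs] at h0
  rw [tsum_congr (fun i => Real.norm_eq_abs (((g i : ℝ) - 1) / 2 ^ (i + 1)))] at h0
  calc |fbar g| ≤ ∑' i : ℕ, |((g i : ℝ) - 1) / 2 ^ (i + 1)| := h0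
      _ ≤ ∑' i : ℕ, (1/2:ℝ)^(i+1) := by
        apply Summable.tsum_le_tsum (term_abs_le g hg) _ summable_half
        exact (summable_fbar g hg).abs
      _ = 1 := tsum_halfgeo

theorem fbar_const (c : ℕ) : fbar (fun _ => c) = (c : ℝ) - 1 := by
  unfold fbar
  have h : ∀ i : ℕ, ((c:ℝ) - 1) / 2^(i+1) = ((c:ℝ)-1) * (1/2:ℝ)^(i+1) := by
    intro i; rw [div_pow, one_pow]; ring
  rw [tsum_congr h, tsum_mul_left, tsum_halfgeo, mul_one]

theorem fbar_shift_one (g : ℕ → ℕ) (hg : ∀ i, g i ≤ 2) :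
    fbar g = ((g 0 : ℝ) - 1)/2 + fbar (shf g 1) / 2 := by
  unfold fbar
  rw [Summable.tsum_eq_zero_add (summable_fbar g hg)]
  have h : ∀ i : ℕ, ((g (i+1) : ℝ) - 1) / 2^(i+1+1)
      = (((shf g 1) i : ℝ) - 1) / 2^(i+1) / 2 := by
    intro i; simp only [shf]; rw [pow_succ]; ring
  rw [tsum_congr h, tsum_div_const]
  norm_num

theorem shf_shf (g : ℕ → ℕ) (m : ℕ) : shf (shf g m) 1 = shf g (m+1) := by
  funext i; simp only [shf]; ring_nf

theorem shf_le (g : ℕ → ℕ) (hg : ∀ i, g i ≤ 2) (m : ℕ) : ∀ i, shf g m i ≤ 2 :=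
  fun i => hg _

theorem fbar_prefix (g : ℕ → ℕ) (hg : ∀ i, g i ≤ 2) (p : ℕ) :
    fbar g = qp g p + fbar (shf g (p+1)) / 2^(p+1) := by
  induction p with
  | zero =>
    have := fbar_shift_one g hg
    simp only [qp, Finset.range_one, Finset.sum_singleton, pow_one]
    rw [this]; norm_num
  | succ p ih =>
    rw [ih]
    have h1 : fbar (shf g (p+1)) = ((shf g (p+1) 0 : ℝ) - 1)/2 + fbar (shf (shf g (p+1)) 1) / 2 :=
      fbar_shift_one _ (shf_le g hg _)
    rw [h1, shf_shf]
    have h2 : qp g (p+1) = qp g p + ((g (p+1) : ℝ) - 1)/2^(p+2) := by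
      simp only [qp]
      rw [Finset.sum_range_succ]
    rw [h2]
    have : shf g (p+1) 0 = g (p+1) := by simp [shf]
    rw [this]
    rw [pow_succ]
    ring

theorem fbar_eq_one (g : ℕ → ℕ) (hg : ∀ i, g i ≤ 2) (h : fbar g = 1) : ∀ i, g i = 2 := by
  intro j
  have hsum : Summable (fun i : ℕ => (1/2:ℝ)^(i+1) - ((g i : ℝ) - 1) / 2 ^ (i + 1)) :=
    summable_half.sub (summable_fbar g hg)
  have hzero : ∑' i : ℕ, ((1/2:ℝ)^(i+1) - ((g i : ℝ) - 1) / 2 ^ (i + 1)) = 0 := by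
    rw [Summable.tsum_sub summable_half (summable_fbar g hg), tsum_halfgeo]
    unfold fbar at h; rw [h]; ring
  have hnn : ∀ i, 0 ≤ (1/2:ℝ)^(i+1) - ((g i : ℝ) - 1) / 2 ^ (i + 1) := by
    intro i
    have := term_abs_le g hg i
    have := abs_le.1 this
    linarith [this.2]
  have hle := Summable.le_tsum hsum j (fun i _ => hnn i)
  rw [hzero] at hle
  have h2 : (g j : ℝ) ≤ 2 := by exact_mod_cast hg j
  have hpow : (1/2:ℝ)^(j+1) = 1/2^(j+1) := by rw [div_pow, one_pow]
  rw [hpow] at hle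
  have hp : (0:ℝ) < 2^(j+1) := by positivity
  have : (2:ℝ) ≤ (g j : ℝ) := by
    have := (div_le_div_iff₀ hp hp).mp (by linarith : (1:ℝ)/2^(j+1) ≤ ((g j : ℝ) - 1) / 2 ^ (j + 1))
    nlinarith
  have h4 : (2:ℕ) ≤ g j := by exact_mod_cast this
  have := hg j
  omega

theorem fbar_eq_negone (g : ℕ → ℕ) (hg : ∀ i, g i ≤ 2) (h : fbar g = -1) : ∀ i, g i = 0 := by
  intro j
  have hsum : Summable (fun i : ℕ => ((g i : ℝ) - 1) / 2 ^ (i + 1) + (1/2:ℝ)^(i+1)) :=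
    (summable_fbar g hg).add summable_half
  have hzero : ∑' i : ℕ, (((g i : ℝ) - 1) / 2 ^ (i + 1) + (1/2:ℝ)^(i+1)) = 0 := by
    rw [Summable.tsum_add (summable_fbar g hg) summable_half, tsum_halfgeo]
    unfold fbar at h; rw [h]; ring
  have hnn : ∀ i, 0 ≤ ((g i : ℝ) - 1) / 2 ^ (i + 1) + (1/2:ℝ)^(i+1) := by
    intro i
    have := (abs_le.1 (term_abs_le g hg i)).1
    linarith
  have hle := Summable.le_tsum hsum j (fun i _ => hnn i)
  rw [hzero] at hle
  have hpow : (1/2:ℝ)^(j+1) = 1/2^(j+1) := by rw [div_pow, one_pow]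
  rw [hpow] at hle
  have hp : (0:ℝ) < 2^(j+1) := by positivity
  have hgj : (0:ℝ) ≤ (g j : ℝ) := Nat.cast_nonneg _
  have : (g j : ℝ) ≤ 0 := by
    have hcomb : ((g j : ℝ) - 1 + 1) / 2^(j+1) ≤ 0 := by
      rw [add_div]; linarith
    have := (div_nonpos_iff.mp hcomb)
    rcases this with ⟨h1, h2⟩ | ⟨h1, h2⟩
    · linarith
    · linarith
  have : g j = 0 := by exact_mod_cast le_antisymm (by exact_mod_cast this) (Nat.zero_le _)
  exact this

theorem ac_of_shf_ac (g : ℕ → ℕ) (m : ℕ) (h : AlmostConst (shf g m)) : AlmostConst g := by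
  obtain ⟨c, x, hc⟩ := h
  refine ⟨c, x + m, fun y hy => ?_⟩
  have : y - m > x := by omega
  have := hc (y - m) this
  simpa [shf, Nat.sub_add_cancel (by omega : m ≤ y)] using this

theorem fbar_eq_zero (g : ℕ → ℕ) (hg : ∀ i, g i ≤ 2) (h : fbar g = 0)
    (hnac : ¬ AlmostConst g) : False := by
  have key : ∀ m, fbar (shf g m) = 0 → g m = 1 ∧ fbar (shf g (m+1)) = 0 := by
    intro m hm
    have hsm : ∀ i, shf g m i ≤ 2 := shf_le g hg m
    have heq : fbar (shf g m) = ((g m : ℝ) - 1)/2 + fbar (shf g (m+1)) / 2 := by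
      have := fbar_shift_one (shf g m) hsm
      rw [shf_shf] at this
      simpa [shf] using this
    rw [hm] at heq
    have hb := hg m
    rcases (by omega : g m = 0 ∨ g m = 1 ∨ g m = 2) with hgm | hgm | hgm
    · exfalso
      have h1 : fbar (shf g (m+1)) = 1 := by rw [hgm] at heq; push_cast at heq; linarith
      have := fbar_eq_one _ (shf_le g hg _) h1
      exact hnac (ac_of_shf_ac g (m+1) ⟨2, 0, fun y _ => this y⟩)
    · constructor
      · exact hgm
      · rw [hgm] at heq; push_cast at heq; linarith
    · exfalso
      have h1 : fbar (shf g (m+1)) = -1 := by rw [hgm] at heq; push_cast at heq; linarith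
      have := fbar_eq_negone _ (shf_le g hg _) h1
      exact hnac (ac_of_shf_ac g (m+1) ⟨0, 0, fun y _ => this y⟩)
  have hall : ∀ m, fbar (shf g m) = 0 ∧ g m = 1 := by
    intro m
    induction m with
    | zero =>
      have h0 : fbar (shf g 0) = 0 := by
        have : shf g 0 = g := by funext i; simp [shf]
        rw [this]; exact h
      exact ⟨h0, (key 0 h0).1⟩
    | succ m ih =>
      have := key m ih.1
      exact ⟨this.2, (key (m+1) this.2).1⟩
  exact hnac ⟨1, 0, fun y _ => (hall y).2⟩

theorem strict_tail (g : ℕ → ℕ) (hg : ∀ i, g i ≤ 2) (hnac : ¬ AlmostConst g) (p : ℕ) :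
    |fbar (shf g (p+1))| < 1 ∧ fbar (shf g (p+1)) ≠ 0 := by
  have hle := abs_fbar_le _ (shf_le g hg (p+1))
  constructor
  · rcases lt_or_eq_of_le hle with h | h
    · exact h
    · exfalso
      rcases abs_eq (by norm_num : (0:ℝ) ≤ 1) |>.mp h with h1 | h1
      · have := fbar_eq_one _ (shf_le g hg _) h1
        exact hnac (ac_of_shf_ac g (p+1) ⟨2, 0, fun y _ => this y⟩)
      · have := fbar_eq_negone _ (shf_le g hg _) h1
        exact hnac (ac_of_shf_ac g (p+1) ⟨0, 0, fun y _ => this y⟩)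
  · intro h0
    exact fbar_eq_zero _ (shf_le g hg _) h0
      (fun hac => hnac (ac_of_shf_ac g (p+1) hac))

/-- dyadic structure of qp differences -/
theorem qp_diff_dyadic (g : ℕ → ℕ) (p P : ℕ) (hpP : p ≤ P) :
    ∃ z : ℤ, qp g P - qp g p = (z : ℝ) / 2^(P+1) := by
  induction P with
  | zero =>
    interval_cases p
    exact ⟨0, by simp⟩
  | succ P ih =>
    rcases Nat.lt_or_ge p (P+1) with h | h
    · obtain ⟨z, hz⟩ := ih (by omega)
      refine ⟨2*z + ((g (P+1) : ℤ) - 1), ?_⟩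
      have h2 : qp g (P+1) = qp g P + ((g (P+1) : ℝ) - 1)/2^(P+2) := by
        simp only [qp]; rw [Finset.sum_range_succ]
      rw [h2]
      push_cast
      linear_combination hz
    · have : p = P+1 := by omega
      subst this
      exact ⟨0, by simp⟩

theorem qp_diff_bound (g : ℕ → ℕ) (hg : ∀ i, g i ≤ 2) (p P : ℕ) (hpP : p ≤ P) :
    |qp g P - qp g p| ≤ 1/2^(p+1) - 1/2^(P+1) := by
  induction P with
  | zero => interval_cases p; simp
  | succ P ih =>
    have h2 : qp g (P+1) = qp g P + ((g (P+1) : ℝ) - 1)/2^(P+2) := by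
      simp only [qp]; rw [Finset.sum_range_succ]
    rcases Nat.lt_or_ge p (P+1) with h | h
    · have hih := ih (by omega)
      have hterm : |((g (P+1) : ℝ) - 1)/2^(P+2)| ≤ 1/2^(P+2) := by
        have := term_abs_le g hg (P+1)
        rw [show ((1:ℝ)/2)^(P+1+1) = 1/2^(P+2) from by rw [div_pow, one_pow]] at this
        exact this
      calc |qp g (P+1) - qp g p| = |(qp g P - qp g p) + ((g (P+1) : ℝ) - 1)/2^(P+2)| := by
            rw [h2]; ring_nf
        _ ≤ |qp g P - qp g p| + |((g (P+1) : ℝ) - 1)/2^(P+2)| := abs_add_le _ _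
        _ ≤ (1/2^(p+1) - 1/2^(P+1)) + 1/2^(P+2) := by linarith
        _ ≤ 1/2^(p+1) - 1/2^(P+1+1) := by
            have hp : (0:ℝ) < 2^(P+1) := by positivity
            have e1 : (2:ℝ)^(P+2) = 2^(P+1)*2 := by ring
            have e2 : (1:ℝ)/2^(P+1) = 1/2^(P+2) + 1/2^(P+2) := by rw [e1]; ring
            rw [show P+1+1 = P+2 from rfl]
            linarith
    · have : p = P+1 := by omega
      subst this; simp



theorem mem012_iff (m : ℕ) : m ∈ ({0, 1, 2} : Set ℕ) ↔ m ≤ 2 := by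
  simp only [Set.mem_insert_iff, Set.mem_singleton_iff]
  omega

theorem mem_Ktilde (K : Set (ℕ → ℕ)) (hAC : ∀ f : ℕ → ℕ, AlmostConst f → f ∈ K)
    (f : ℕ → ℕ) (hf : ∀ i, f i ≤ 2) (hac : AlmostConst f) (m : ℤ) :
    (m : ℝ) + fbar f ∈ KtildeR K :=
  ⟨m, f, hAC f hac, fun i => (mem012_iff _).mpr (hf i), rfl⟩

/-- the function with a single digit `v` at position `t`, else digit 0 -/
def single (t v : ℕ) : ℕ → ℕ := fun i => if i = t then v else 1

theorem fbar_single_two (t : ℕ) : fbar (single t 2) = 1/2^(t+1) := by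
  unfold fbar single
  have h : ∀ i : ℕ, (((if i = t then 2 else 1 : ℕ) : ℝ) - 1) / 2^(i+1)
      = if i = t then (1/2^(t+1) : ℝ) else 0 := by
    intro i; by_cases h : i = t
    · rw [if_pos h, if_pos h]; push_cast; rw [h]; ring
    · rw [if_neg h, if_neg h]; push_cast; ring
  rw [tsum_congr h, tsum_ite_eq]

theorem fbar_single_zero (t : ℕ) : fbar (single t 0) = -(1/2^(t+1)) := by
  unfold fbar single
  have h : ∀ i : ℕ, (((if i = t then 0 else 1 : ℕ) : ℝ) - 1) / 2^(i+1)
      = if i = t then (-(1/2^(t+1)) : ℝ) else 0 := by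
    intro i; by_cases h : i = t
    · rw [if_pos h, if_pos h]; push_cast; rw [h]; ring
    · rw [if_neg h, if_neg h]; push_cast; ring
  rw [tsum_congr h, tsum_ite_eq]

theorem single_le (t v : ℕ) (hv : v ≤ 2) : ∀ i, single t v i ≤ 2 := by
  intro i; unfold single; split_ifs <;> omega

theorem single_ac (t v : ℕ) : AlmostConst (single t v) :=
  ⟨1, t, fun y hy => by unfold single; rw [if_neg (by omega)]⟩

theorem pow_mem (K : Set (ℕ → ℕ)) (hAC : ∀ f : ℕ → ℕ, AlmostConst f → f ∈ K) (t : ℕ) :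
    (1/2^t : ℝ) ∈ KtildeR K := by
  cases t with
  | zero =>
    have := mem_Ktilde K hAC (fun _ => 1) (fun _ => by norm_num) ⟨1, 0, fun y _ => rfl⟩ 1
    rw [fbar_const] at this
    simpa using this
  | succ u =>
    have := mem_Ktilde K hAC (single u 2) (single_le u 2 le_rfl) (single_ac u 2) 0
    rw [fbar_single_two] at this
    simpa using this

theorem negpow_mem (K : Set (ℕ → ℕ)) (hAC : ∀ f : ℕ → ℕ, AlmostConst f → f ∈ K) (t : ℕ) :
    (-(1/2^t) : ℝ) ∈ KtildeR K := by
  cases t with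
  | zero =>
    have := mem_Ktilde K hAC (fun _ => 1) (fun _ => by norm_num) ⟨1, 0, fun y _ => rfl⟩ (-1)
    rw [fbar_const] at this
    simpa using this
  | succ u =>
    have := mem_Ktilde K hAC (single u 0) (single_le u 0 (by omega)) (single_ac u 0) 0
    rw [fbar_single_zero] at this
    simpa using this

/-- `g` truncated at `m`, then constant `c`. -/
def tailmod (g : ℕ → ℕ) (m c : ℕ) : ℕ → ℕ := fun i => if i < m then g i else c

theorem qp_congr (g g' : ℕ → ℕ) (p : ℕ) (h : ∀ i ≤ p, g i = g' i) : qp g p = qp g' p := by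
  unfold qp
  apply Finset.sum_congr rfl
  intro i hi
  rw [h i (by simpa [Nat.lt_succ_iff] using Finset.mem_range.mp hi)]

theorem fbar_tailmod (g : ℕ → ℕ) (hg : ∀ i, g i ≤ 2) (p c : ℕ) (hc : c ≤ 2) :
    fbar (tailmod g (p+1) c) = qp g p + ((c:ℝ) - 1)/2^(p+1) := by
  have hg' : ∀ i, tailmod g (p+1) c i ≤ 2 := by
    intro i; unfold tailmod; split_ifs; exacts [hg i, hc]
  rw [fbar_prefix _ hg' p]
  rw [qp_congr _ g p (fun i hi => by unfold tailmod; rw [if_pos (by omega)])]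
  have : shf (tailmod g (p+1) c) (p+1) = fun _ => c := by
    funext i; unfold shf tailmod; rw [if_neg (by omega)]
  rw [this, fbar_const]

theorem tailmod_ac (g : ℕ → ℕ) (m c : ℕ) : AlmostConst (tailmod g m c) :=
  ⟨c, m, fun y hy => by unfold tailmod; rw [if_neg (by omega)]⟩

theorem q_shift_mem (K : Set (ℕ → ℕ)) (hAC : ∀ f : ℕ → ℕ, AlmostConst f → f ∈ K)
    (g : ℕ → ℕ) (hg : ∀ i, g i ≤ 2) (p c : ℕ) (hc : c ≤ 2) :
    qp g p + ((c:ℝ) - 1)/2^(p+1) ∈ KtildeR K := by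
  have hg' : ∀ i, tailmod g (p+1) c i ≤ 2 := by
    intro i; unfold tailmod; split_ifs; exacts [hg i, hc]
  have := mem_Ktilde K hAC (tailmod g (p+1) c) hg' (tailmod_ac g (p+1) c) 0
  rw [fbar_tailmod g hg p c hc] at this
  simpa using this

/-- prefix of `g` up to `m`, then digits `0, 1, 0, 0, 0, …`, giving `qp g m + 2^-(m+3)` -/
def fstar (g : ℕ → ℕ) (m : ℕ) : ℕ → ℕ :=
  fun i => if i < m+1 then g i else if i = m+2 then 2 else 1

theorem fstar_le (g : ℕ → ℕ) (hg : ∀ i, g i ≤ 2) (m : ℕ) : ∀ i, fstar g m i ≤ 2 := by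
  intro i; unfold fstar; split_ifs <;> first | exact hg i | omega

theorem fstar_ac (g : ℕ → ℕ) (m : ℕ) : AlmostConst (fstar g m) :=
  ⟨1, m+2, fun y hy => by unfold fstar; rw [if_neg (by omega), if_neg (by omega)]⟩

theorem fbar_fstar (g : ℕ → ℕ) (hg : ∀ i, g i ≤ 2) (m : ℕ) :
    fbar (fstar g m) = qp g m + 1/2^(m+3) := by
  rw [fbar_prefix _ (fstar_le g hg m) m]
  rw [qp_congr _ g m (fun i hi => by unfold fstar; rw [if_pos (by omega)])]
  congr 1
  have : shf (fstar g m) (m+1) = single 1 2 := by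
      funext i; unfold shf fstar single
      rw [if_neg (by omega)]
      by_cases h : i = 1
      · rw [if_pos (by omega), if_pos h]
      · rw [if_neg (by omega), if_neg h]
  rw [this, fbar_single_two, show (1:ℕ)+1 = 2 from rfl, div_div, ← pow_add,
    show 2+(m+1) = m+3 from by omega]

theorem fstar_mem (K : Set (ℕ → ℕ)) (hAC : ∀ f : ℕ → ℕ, AlmostConst f → f ∈ K)
    (g : ℕ → ℕ) (hg : ∀ i, g i ≤ 2) (m : ℕ) :
    qp g m + 1/2^(m+3) ∈ KtildeR K := by
  have := mem_Ktilde K hAC (fstar g m) (fstar_le g hg m) (fstar_ac g m) 0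
  rw [fbar_fstar g hg m] at this
  simpa using this



/-- `i`-th entry of the stream coded by `c` via iterated pairing. -/
def tailIter (c : ℕ) : ℕ → ℕ := fun i => Nat.rec c (fun _ acc => (Nat.unpair acc).2) i

def nth (c i : ℕ) : ℕ := (Nat.unpair (tailIter c i)).1

theorem tailIter_succ (c i : ℕ) : tailIter c (i+1) = tailIter ((Nat.unpair c).2) i := by
  induction i with
  | zero => rfl
  | succ i ih =>
    show (Nat.unpair (tailIter c (i+1))).2 = (tailIter ((Nat.unpair c).2) i).unpair.2
    rw [ih]

/-- encode the first `m` values of `F` as a stream code -/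
def encF : (ℕ → ℕ) → ℕ → ℕ
  | _, 0 => 0
  | F, m+1 => Nat.pair (F 0) (encF (fun i => F (i+1)) m)

theorem nth_encF : ∀ m (F : ℕ → ℕ) i, i < m → nth (encF F m) i = F i := by
  intro m
  induction m with
  | zero => intro F i h; omega
  | succ m ih =>
    intro F i h
    cases i with
    | zero =>
      show (Nat.unpair (tailIter (Nat.pair (F 0) (encF (fun i => F (i+1)) m)) 0)).1 = F 0
      show (Nat.unpair (Nat.pair (F 0) _)).1 = F 0
      rw [Nat.unpair_pair]
    | succ i =>
      unfold nth
      rw [tailIter_succ]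
      show nth ((Nat.unpair (Nat.pair (F 0) (encF (fun i => F (i+1)) m))).2) i = F (i+1)
      rw [Nat.unpair_pair]
      exact ih _ i (by omega)

def allBelow (φ : ℕ → Bool) : ℕ → Bool := fun m => Nat.rec true (fun i acc => acc && φ i) m

theorem allBelow_iff (φ : ℕ → Bool) (m : ℕ) : allBelow φ m = true ↔ ∀ i < m, φ i = true := by
  induction m with
  | zero => simp [allBelow]
  | succ m ih =>
    show (allBelow φ m && φ m) = true ↔ _
    rw [Bool.and_eq_true, ih]
    constructor
    · rintro ⟨h1, h2⟩ i hi
      rcases Nat.lt_succ_iff_lt_or_eq.mp hi with h | h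
      · exact h1 i h
      · subst h; exact h2
    · intro h
      exact ⟨fun i hi => h i (by omega), h m (by omega)⟩

def addB (d₁ d₂ : ℕ × ℕ × ℕ → Bool) (i j k : ℕ) : Bool := d₁ (i,j,k) && d₂ (i,j,k)

def evx (s n x : ℕ) : Option ℕ :=
  Nat.Partrec.Code.evaln s (Denumerable.ofNat Nat.Partrec.Code n) x

/-- components of a certificate -/
def cH (c : ℕ) : ℕ := (Nat.unpair (Nat.unpair c).1).1
def cN (c : ℕ) : ℕ := (Nat.unpair (Nat.unpair c).1).2
def cU (c : ℕ) : ℕ := (Nat.unpair (Nat.unpair (Nat.unpair c).2).1).1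
def cjl (c : ℕ) : ℕ := (Nat.unpair (Nat.unpair (Nat.unpair c).2).1).2
def cjr (c : ℕ) : ℕ := (Nat.unpair (Nat.unpair c).2).2

def mkCert (H N U jl jr : ℕ) : ℕ := Nat.pair (Nat.pair H N) (Nat.pair (Nat.pair U jl) jr)

theorem cH_mk (H N U jl jr : ℕ) : cH (mkCert H N U jl jr) = H := by simp [cH, mkCert]
theorem cN_mk (H N U jl jr : ℕ) : cN (mkCert H N U jl jr) = N := by simp [cN, mkCert]
theorem cU_mk (H N U jl jr : ℕ) : cU (mkCert H N U jl jr) = U := by simp [cU, mkCert]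
theorem cjl_mk (H N U jl jr : ℕ) : cjl (mkCert H N U jl jr) = jl := by simp [cjl, mkCert]
theorem cjr_mk (H N U jl jr : ℕ) : cjr (mkCert H N U jl jr) = jr := by simp [cjr, mkCert]

/-- the digit-index used at position `i`: index of `±2^-(i+1)` or of `0` -/
def wIdx (e₀ : ℕ) (v : ℕ) (c i : ℕ) : ℕ :=
  if v = 2 then nth (cH c) (i+1) else if v = 0 then nth (cN c) (i+1) else e₀

/-- certificate validity check -/
def certB (d₁ d₂ : ℕ × ℕ × ℕ → Bool) (e₀ i₁ : ℕ) (n p s c : ℕ) : Bool :=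
  decide (nth (cH c) 0 = i₁)
  && allBelow (fun t => addB d₁ d₂ (nth (cH c) (t+1)) (nth (cH c) (t+1)) (nth (cH c) t)) (p+1)
  && allBelow (fun t => addB d₁ d₂ (nth (cN c) t) (nth (cH c) t) e₀) (p+2)
  && allBelow (fun i => addB d₁ d₂ (if i = 0 then e₀ else nth (cU c) (i-1))
        (wIdx e₀ ((evx s n i).getD 0) c i) (nth (cU c) i)) (p+1)
  && addB d₁ d₂ (cjl c) (nth (cH c) (p+1)) (nth (cU c) p)
  && addB d₁ d₂ (nth (cU c) p) (nth (cH c) (p+1)) (cjr c)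

/-- the comparisons of `μ k` against the certified endpoints -/
def relB (d₁ : ℕ × ℕ × ℕ → Bool) (e₀ : ℕ) (k c p : ℕ) : Bool :=
  !(d₁ (k, e₀, cjl c)) && !(d₁ (cjr c, e₀, k))
  && !(d₁ (k, e₀, nth (cU c) p) && d₁ (nth (cU c) p, e₀, k))

/-- the Σ⁰₂ matrix -/
def Rfun (d₁ d₂ : ℕ × ℕ × ℕ → Bool) (e₀ i₁ : ℕ) : ℕ × ℕ × ℕ → Bool := fun t =>
  allBelow (fun x => !(evx (Nat.unpair (Nat.unpair t.2.2).2).1 t.1 x).isSome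
      || decide ((evx (Nat.unpair (Nat.unpair t.2.2).2).1 t.1 x).getD 0 ≤ 2))
      ((Nat.unpair t.2.2).1 + 1)
  && (!(allBelow (fun x => (evx (Nat.unpair (Nat.unpair t.2.2).2).1 t.1 x).isSome)
        ((Nat.unpair t.2.2).1 + 1))
      || (!(certB d₁ d₂ e₀ i₁ t.1 (Nat.unpair t.2.2).1 (Nat.unpair (Nat.unpair t.2.2).2).1
             (Nat.unpair (Nat.unpair t.2.2).2).2)
          || relB d₁ e₀ t.2.1 (Nat.unpair (Nat.unpair t.2.2).2).2 (Nat.unpair t.2.2).1))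

section Computability

open Computable

theorem comp_and : Computable₂ (fun a b : Bool => a && b) := Primrec.and.to_comp
theorem comp_or : Computable₂ (fun a b : Bool => a || b) := Primrec.or.to_comp
theorem comp_not : Computable (fun a : Bool => !a) := Primrec.not.to_comp
theorem comp_unpair1 : Computable (fun n : ℕ => (Nat.unpair n).1) :=
  fst.comp Computable.unpair
theorem comp_unpair2 : Computable (fun n : ℕ => (Nat.unpair n).2) :=
  snd.comp Computable.unpair

theorem comp_tailIter : Computable₂ tailIter := by
  have : Computable fun q : ℕ × ℕ =>
      Nat.rec (motive := fun _ => ℕ) q.1 (fun _ IH => (Nat.unpair IH).2) q.2 :=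
    Computable.nat_rec snd fst
      ((comp_unpair2.comp (snd.comp snd)).to₂ :
        Computable₂ fun (_ : ℕ × ℕ) (yIH : ℕ × ℕ) => (Nat.unpair yIH.2).2)
  exact this.to₂

theorem comp_nth : Computable₂ nth :=
  (comp_unpair1.comp (comp_tailIter : Computable fun q : ℕ × ℕ => tailIter q.1 q.2)).to₂

theorem comp_allBelow {α : Type*} [Primcodable α] {ψ : α → ℕ → Bool} (hψ : Computable₂ ψ) :
    Computable₂ fun a m => allBelow (ψ a) m := by
  have : Computable fun q : α × ℕ =>
      Nat.rec (motive := fun _ => Bool) true (fun y IH => IH && ψ q.1 y) q.2 :=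
    Computable.nat_rec snd (const true)
      ((comp_and.comp (snd.comp snd) (hψ.comp (fst.comp fst) (fst.comp snd))).to₂ :
        Computable₂ fun (q : α × ℕ) (yIH : ℕ × Bool) => yIH.2 && ψ q.1 yIH.1)
  exact this.to₂

theorem comp_evx : Computable fun t : ℕ × ℕ × ℕ => evx t.1 t.2.1 t.2.2 := by
  have h := Nat.Partrec.Code.primrec_evaln.to_comp
  have h2 : Computable fun t : ℕ × ℕ × ℕ =>
      ((t.1, Denumerable.ofNat Nat.Partrec.Code t.2.1), t.2.2) :=
    (fst.pair ((Computable.ofNat Nat.Partrec.Code).comp (fst.comp snd))).pair (snd.comp snd)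
  exact h.comp h2


theorem Rfun_computable (d₁ d₂ : ℕ × ℕ × ℕ → Bool) (hd₁ : Computable d₁)
    (hd₂ : Computable d₂) (e₀ i₁ : ℕ) : Computable (Rfun d₁ d₂ e₀ i₁) := by
  have hn : Computable fun t : ℕ × ℕ × ℕ => t.1 := fst
  have hk : Computable fun t : ℕ × ℕ × ℕ => t.2.1 := fst.comp snd
  have hb : Computable fun t : ℕ × ℕ × ℕ => t.2.2 := snd.comp snd
  have hp : Computable fun t : ℕ × ℕ × ℕ => (Nat.unpair t.2.2).1 := comp_unpair1.comp hb
  have hsc : Computable fun t : ℕ × ℕ × ℕ => (Nat.unpair t.2.2).2 := comp_unpair2.comp hb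
  have hs : Computable fun t : ℕ × ℕ × ℕ => (Nat.unpair (Nat.unpair t.2.2).2).1 :=
    comp_unpair1.comp hsc
  have hc : Computable fun t : ℕ × ℕ × ℕ => (Nat.unpair (Nat.unpair t.2.2).2).2 :=
    comp_unpair2.comp hsc
  have hcH : Computable fun t : ℕ × ℕ × ℕ => cH ((Nat.unpair (Nat.unpair t.2.2).2).2) :=
    comp_unpair1.comp (comp_unpair1.comp hc)
  have hcN : Computable fun t : ℕ × ℕ × ℕ => cN ((Nat.unpair (Nat.unpair t.2.2).2).2) :=
    comp_unpair2.comp (comp_unpair1.comp hc)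
  have hcU : Computable fun t : ℕ × ℕ × ℕ => cU ((Nat.unpair (Nat.unpair t.2.2).2).2) :=
    comp_unpair1.comp (comp_unpair1.comp (comp_unpair2.comp hc))
  have hcjl : Computable fun t : ℕ × ℕ × ℕ => cjl ((Nat.unpair (Nat.unpair t.2.2).2).2) :=
    comp_unpair2.comp (comp_unpair1.comp (comp_unpair2.comp hc))
  have hcjr : Computable fun t : ℕ × ℕ × ℕ => cjr ((Nat.unpair (Nat.unpair t.2.2).2).2) :=
    comp_unpair2.comp (comp_unpair2.comp hc)
  -- evaluation of `phi` with time bound, over pairs (t, x)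
  have hev : Computable fun q : (ℕ × ℕ × ℕ) × ℕ =>
      evx ((Nat.unpair (Nat.unpair q.1.2.2).2).1) q.1.1 q.2 := by
    have harg : Computable fun q : (ℕ × ℕ × ℕ) × ℕ =>
        (((Nat.unpair (Nat.unpair q.1.2.2).2).1, q.1.1, q.2) : ℕ × ℕ × ℕ) :=
      (hs.comp fst).pair ((hn.comp fst).pair snd)
    exact (comp_evx.comp harg).of_eq (fun q => rfl)
  have hIsSome : Computable fun q : (ℕ × ℕ × ℕ) × ℕ =>
      (evx ((Nat.unpair (Nat.unpair q.1.2.2).2).1) q.1.1 q.2).isSome :=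
    (Primrec.option_isSome.to_comp.comp hev).of_eq (fun q => rfl)
  have hgetD : Computable fun q : (ℕ × ℕ × ℕ) × ℕ =>
      (evx ((Nat.unpair (Nat.unpair q.1.2.2).2).1) q.1.1 q.2).getD 0 :=
    (Computable.option_getD hev (const 0)).of_eq (fun q => rfl)
  have hψ1 : Computable₂ fun (t : ℕ × ℕ × ℕ) (x : ℕ) =>
      (!(evx ((Nat.unpair (Nat.unpair t.2.2).2).1) t.1 x).isSome
        || decide ((evx ((Nat.unpair (Nat.unpair t.2.2).2).1) t.1 x).getD 0 ≤ 2)) := by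
    have hle2 : Computable fun q : (ℕ × ℕ × ℕ) × ℕ =>
        decide ((evx ((Nat.unpair (Nat.unpair q.1.2.2).2).1) q.1.1 q.2).getD 0 ≤ 2) :=
      (Primrec.nat_le.decide.to_comp.comp hgetD (const 2)).of_eq (fun q => rfl)
    have hnot : Computable fun q : (ℕ × ℕ × ℕ) × ℕ =>
        !(evx ((Nat.unpair (Nat.unpair q.1.2.2).2).1) q.1.1 q.2).isSome :=
      (comp_not.comp hIsSome).of_eq (fun q => rfl)
    exact ((comp_or.comp hnot hle2).of_eq (fun q => rfl)).to₂
  have hψ2 : Computable₂ fun (t : ℕ × ℕ × ℕ) (x : ℕ) =>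
      (evx ((Nat.unpair (Nat.unpair t.2.2).2).1) t.1 x).isSome := hIsSome.to₂
  have haddB : ∀ {β : Type} [Primcodable β] {u v w : β → ℕ}, Computable u → Computable v →
      Computable w → Computable fun b => addB d₁ d₂ (u b) (v b) (w b) := by
    intro β _ u v w hu hv hw
    have harg : Computable fun b : β => ((u b, v b, w b) : ℕ × ℕ × ℕ) := hu.pair (hv.pair hw)
    exact ((comp_and.comp (hd₁.comp harg) (hd₂.comp harg)).of_eq (fun b => rfl))
  have hnth2 : ∀ {β : Type} [Primcodable β] {u v : β → ℕ}, Computable u → Computable v →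
      Computable fun b => nth (u b) (v b) := by
    intro β _ u v hu hv
    exact (comp_nth.comp hu hv).of_eq (fun b => rfl)
  -- certificate check
  have hcert : Computable fun t : ℕ × ℕ × ℕ =>
      certB d₁ d₂ e₀ i₁ t.1 ((Nat.unpair t.2.2).1) ((Nat.unpair (Nat.unpair t.2.2).2).1)
        ((Nat.unpair (Nat.unpair t.2.2).2).2) := by
    have h1 : Computable fun t : ℕ × ℕ × ℕ =>
        decide (nth (cH ((Nat.unpair (Nat.unpair t.2.2).2).2)) 0 = i₁) :=
      (Primrec.eq.decide.to_comp.comp (hnth2 hcH (const 0)) (const i₁)).of_eq (fun t => rfl)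
    have h2 : Computable fun t : ℕ × ℕ × ℕ =>
        allBelow (fun x => addB d₁ d₂ (nth (cH ((Nat.unpair (Nat.unpair t.2.2).2).2)) (x+1))
          (nth (cH ((Nat.unpair (Nat.unpair t.2.2).2).2)) (x+1))
          (nth (cH ((Nat.unpair (Nat.unpair t.2.2).2).2)) x)) ((Nat.unpair t.2.2).1 + 1) := by
      have hbody : Computable₂ fun (t : ℕ × ℕ × ℕ) (x : ℕ) =>
          addB d₁ d₂ (nth (cH ((Nat.unpair (Nat.unpair t.2.2).2).2)) (x+1))
            (nth (cH ((Nat.unpair (Nat.unpair t.2.2).2).2)) (x+1))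
            (nth (cH ((Nat.unpair (Nat.unpair t.2.2).2).2)) x) :=
        (haddB (hnth2 (hcH.comp fst) (succ.comp snd)) (hnth2 (hcH.comp fst) (succ.comp snd))
          (hnth2 (hcH.comp fst) snd)).to₂
      exact ((comp_allBelow hbody).comp Computable.id (succ.comp hp)).of_eq (fun t => rfl)
    have h3 : Computable fun t : ℕ × ℕ × ℕ =>
        allBelow (fun x => addB d₁ d₂ (nth (cN ((Nat.unpair (Nat.unpair t.2.2).2).2)) x)
          (nth (cH ((Nat.unpair (Nat.unpair t.2.2).2).2)) x) e₀) ((Nat.unpair t.2.2).1 + 2) := by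
      have hbody : Computable₂ fun (t : ℕ × ℕ × ℕ) (x : ℕ) =>
          addB d₁ d₂ (nth (cN ((Nat.unpair (Nat.unpair t.2.2).2).2)) x)
            (nth (cH ((Nat.unpair (Nat.unpair t.2.2).2).2)) x) e₀ :=
        (haddB (hnth2 (hcN.comp fst) snd) (hnth2 (hcH.comp fst) snd) (const e₀)).to₂
      exact ((comp_allBelow hbody).comp Computable.id
        (succ.comp (succ.comp hp))).of_eq (fun t => rfl)
    have h4 : Computable fun t : ℕ × ℕ × ℕ =>
        allBelow (fun x => addB d₁ d₂
          (if x = 0 then e₀ else nth (cU ((Nat.unpair (Nat.unpair t.2.2).2).2)) (x-1))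
          (wIdx e₀ ((evx ((Nat.unpair (Nat.unpair t.2.2).2).1) t.1 x).getD 0)
            ((Nat.unpair (Nat.unpair t.2.2).2).2) x)
          (nth (cU ((Nat.unpair (Nat.unpair t.2.2).2).2)) x)) ((Nat.unpair t.2.2).1 + 1) := by
      have hprev : Computable fun q : (ℕ × ℕ × ℕ) × ℕ =>
          (if q.2 = 0 then e₀ else nth (cU ((Nat.unpair (Nat.unpair q.1.2.2).2).2)) (q.2-1)) := by
        have hcond : Computable fun q : (ℕ × ℕ × ℕ) × ℕ => decide (q.2 = 0) :=
          (Primrec.eq.decide.to_comp.comp snd (const 0)).of_eq (fun q => rfl)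
        have := Computable.cond hcond ((const e₀ : Computable fun _ : (ℕ × ℕ × ℕ) × ℕ => e₀))
          (hnth2 (hcU.comp fst) (pred.comp snd))
        exact this.of_eq (by
          rintro ⟨t, x⟩
          by_cases h : x = 0 <;> simp [h])
      have hw : Computable fun q : (ℕ × ℕ × ℕ) × ℕ =>
          wIdx e₀ ((evx ((Nat.unpair (Nat.unpair q.1.2.2).2).1) q.1.1 q.2).getD 0)
            ((Nat.unpair (Nat.unpair q.1.2.2).2).2) q.2 := by
        have h2' : Computable fun q : (ℕ × ℕ × ℕ) × ℕ =>
            decide ((evx ((Nat.unpair (Nat.unpair q.1.2.2).2).1) q.1.1 q.2).getD 0 = 2) :=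
          (Primrec.eq.decide.to_comp.comp hgetD (const 2)).of_eq (fun q => rfl)
        have h0' : Computable fun q : (ℕ × ℕ × ℕ) × ℕ =>
            decide ((evx ((Nat.unpair (Nat.unpair q.1.2.2).2).1) q.1.1 q.2).getD 0 = 0) :=
          (Primrec.eq.decide.to_comp.comp hgetD (const 0)).of_eq (fun q => rfl)
        have hinner := Computable.cond h0' (hnth2 (hcN.comp fst) (succ.comp snd))
          ((const e₀ : Computable fun _ : (ℕ × ℕ × ℕ) × ℕ => e₀))
        have houter := Computable.cond h2' (hnth2 (hcH.comp fst) (succ.comp snd)) hinner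
        exact houter.of_eq (by
          rintro ⟨t, x⟩
          unfold wIdx
          by_cases ha : (evx ((Nat.unpair (Nat.unpair t.2.2).2).1) t.1 x).getD 0 = 2 <;>
            by_cases hb' : (evx ((Nat.unpair (Nat.unpair t.2.2).2).1) t.1 x).getD 0 = 0 <;>
            simp [ha, hb'])
      have hbody : Computable₂ fun (t : ℕ × ℕ × ℕ) (x : ℕ) =>
          addB d₁ d₂ (if x = 0 then e₀ else nth (cU ((Nat.unpair (Nat.unpair t.2.2).2).2)) (x-1))
            (wIdx e₀ ((evx ((Nat.unpair (Nat.unpair t.2.2).2).1) t.1 x).getD 0)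
              ((Nat.unpair (Nat.unpair t.2.2).2).2) x)
            (nth (cU ((Nat.unpair (Nat.unpair t.2.2).2).2)) x) :=
        (haddB hprev hw (hnth2 (hcU.comp fst) snd)).to₂
      exact ((comp_allBelow hbody).comp Computable.id (succ.comp hp)).of_eq (fun t => rfl)
    have h5 : Computable fun t : ℕ × ℕ × ℕ =>
        addB d₁ d₂ (cjl ((Nat.unpair (Nat.unpair t.2.2).2).2))
          (nth (cH ((Nat.unpair (Nat.unpair t.2.2).2).2)) ((Nat.unpair t.2.2).1 + 1))
          (nth (cU ((Nat.unpair (Nat.unpair t.2.2).2).2)) ((Nat.unpair t.2.2).1)) :=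
      haddB hcjl (hnth2 hcH (succ.comp hp)) (hnth2 hcU hp)
    have h6 : Computable fun t : ℕ × ℕ × ℕ =>
        addB d₁ d₂ (nth (cU ((Nat.unpair (Nat.unpair t.2.2).2).2)) ((Nat.unpair t.2.2).1))
          (nth (cH ((Nat.unpair (Nat.unpair t.2.2).2).2)) ((Nat.unpair t.2.2).1 + 1))
          (cjr ((Nat.unpair (Nat.unpair t.2.2).2).2)) :=
      haddB (hnth2 hcU hp) (hnth2 hcH (succ.comp hp)) hcjr
    have hall := comp_and.comp (comp_and.comp (comp_and.comp (comp_and.comp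
      (comp_and.comp h1 h2) h3) h4) h5) h6
    exact hall.of_eq (fun t => rfl)
  have hrel : Computable fun t : ℕ × ℕ × ℕ =>
      relB d₁ e₀ t.2.1 ((Nat.unpair (Nat.unpair t.2.2).2).2) ((Nat.unpair t.2.2).1) := by
    have e1 : Computable fun t : ℕ × ℕ × ℕ =>
        !(d₁ (t.2.1, e₀, cjl ((Nat.unpair (Nat.unpair t.2.2).2).2))) :=
      (comp_not.comp (hd₁.comp (hk.pair ((const e₀).pair hcjl)))).of_eq (fun t => rfl)
    have e2 : Computable fun t : ℕ × ℕ × ℕ =>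
        !(d₁ (cjr ((Nat.unpair (Nat.unpair t.2.2).2).2), e₀, t.2.1)) :=
      (comp_not.comp (hd₁.comp (hcjr.pair ((const e₀).pair hk)))).of_eq (fun t => rfl)
    have e3 : Computable fun t : ℕ × ℕ × ℕ =>
        !(d₁ (t.2.1, e₀, nth (cU ((Nat.unpair (Nat.unpair t.2.2).2).2)) ((Nat.unpair t.2.2).1))
          && d₁ (nth (cU ((Nat.unpair (Nat.unpair t.2.2).2).2)) ((Nat.unpair t.2.2).1), e₀,
              t.2.1)) :=
      (comp_not.comp (comp_and.comp
        (hd₁.comp (hk.pair ((const e₀).pair (hnth2 hcU hp))))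
        (hd₁.comp ((hnth2 hcU hp).pair ((const e₀).pair hk))))).of_eq (fun t => rfl)
    exact ((comp_and.comp (comp_and.comp e1 e2) e3).of_eq (fun t => rfl))
  have hA : Computable fun t : ℕ × ℕ × ℕ =>
      allBelow (fun x => !(evx ((Nat.unpair (Nat.unpair t.2.2).2).1) t.1 x).isSome
        || decide ((evx ((Nat.unpair (Nat.unpair t.2.2).2).1) t.1 x).getD 0 ≤ 2))
        ((Nat.unpair t.2.2).1 + 1) :=
    ((comp_allBelow hψ1).comp Computable.id (succ.comp hp)).of_eq (fun t => rfl)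
  have hB : Computable fun t : ℕ × ℕ × ℕ =>
      !(allBelow (fun x => (evx ((Nat.unpair (Nat.unpair t.2.2).2).1) t.1 x).isSome)
        ((Nat.unpair t.2.2).1 + 1)) :=
    (comp_not.comp (((comp_allBelow hψ2).comp Computable.id
      (succ.comp hp)).of_eq (fun t => rfl))).of_eq (fun t => rfl)
  have hC : Computable fun t : ℕ × ℕ × ℕ =>
      !(certB d₁ d₂ e₀ i₁ t.1 ((Nat.unpair t.2.2).1) ((Nat.unpair (Nat.unpair t.2.2).2).1)
        ((Nat.unpair (Nat.unpair t.2.2).2).2)) :=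
    (comp_not.comp hcert).of_eq (fun t => rfl)
  exact ((comp_and.comp hA (comp_or.comp hB (comp_or.comp hC hrel))).of_eq (fun t => rfl))

end Computability



-- new material starts here

theorem bool_imp (a b : Bool) : (!a || b) = true ↔ (a = true → b = true) := by
  cases a <;> cases b <;> simp

theorem Rfun_iff (d₁ d₂ : ℕ × ℕ × ℕ → Bool) (e₀ i₁ n k b : ℕ) :
    Rfun d₁ d₂ e₀ i₁ (n, k, b) = true ↔
    ((∀ x < (Nat.unpair b).1 + 1,
        (evx ((Nat.unpair (Nat.unpair b).2).1) n x).isSome = true →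
        (evx ((Nat.unpair (Nat.unpair b).2).1) n x).getD 0 ≤ 2) ∧
     ((∀ x < (Nat.unpair b).1 + 1,
        (evx ((Nat.unpair (Nat.unpair b).2).1) n x).isSome = true) →
      certB d₁ d₂ e₀ i₁ n ((Nat.unpair b).1) ((Nat.unpair (Nat.unpair b).2).1)
        ((Nat.unpair (Nat.unpair b).2).2) = true →
      relB d₁ e₀ k ((Nat.unpair (Nat.unpair b).2).2) ((Nat.unpair b).1) = true)) := by
  unfold Rfun
  rw [Bool.and_eq_true, bool_imp, bool_imp, allBelow_iff, allBelow_iff]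
  constructor
  · rintro ⟨h1, h2⟩
    refine ⟨fun x hx hsome => ?_, fun hall => h2 (fun x hx => hall x hx)⟩
    have := h1 x hx
    rw [bool_imp] at this
    exact decide_eq_true_iff.mp (this hsome)
  · rintro ⟨h1, h2⟩
    refine ⟨fun x hx => ?_, fun hall => h2 (fun x hx => hall x hx)⟩
    rw [bool_imp]
    intro hsome
    exact decide_eq_true_iff.mpr (h1 x hx hsome)

section withMu

variable (μ : ℕ → ℝ) (d₁ d₂ : ℕ × ℕ × ℕ → Bool) (e₀ i₁ : ℕ)
variable (hd₁ : ∀ a b c', d₁ (a,b,c') = true ↔ μ a + μ b ≤ μ c')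
variable (hd₂ : ∀ a b c', d₂ (a,b,c') = true ↔ μ c' ≤ μ a + μ b)
variable (he₀ : μ e₀ = 0) (hi₁ : μ i₁ = 1)

include hd₁ hd₂ in
theorem addB_spec : ∀ i j k', addB d₁ d₂ i j k' = true ↔ μ i + μ j = μ k' := by
  intro i j k'
  rw [addB, Bool.and_eq_true, hd₁, hd₂]
  exact le_antisymm_iff.symm

include hd₁ he₀ in
theorem le_spec : ∀ i j, d₁ (i, e₀, j) = true ↔ μ i ≤ μ j := by
  intro i j
  rw [hd₁, he₀, add_zero]

include hd₁ he₀ in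
theorem relB_iff (k c p : ℕ) :
    relB d₁ e₀ k c p = true ↔
      (¬(μ k ≤ μ (cjl c)) ∧ ¬(μ (cjr c) ≤ μ k) ∧ μ k ≠ μ (nth (cU c) p)) := by
  unfold relB
  rw [Bool.and_eq_true, Bool.and_eq_true, Bool.not_eq_true', Bool.not_eq_true',
    Bool.not_eq_true']
  constructor
  · rintro ⟨⟨h1, h2⟩, h3⟩
    refine ⟨?_, ?_, ?_⟩
    · rw [← le_spec μ d₁ e₀ hd₁ he₀ k (cjl c)]; simp [h1]
    · rw [← le_spec μ d₁ e₀ hd₁ he₀ (cjr c) k]; simp [h2]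
    · intro heq
      have b1 : d₁ (k, e₀, nth (cU c) p) = true := (le_spec μ d₁ e₀ hd₁ he₀ _ _).mpr heq.le
      have b2 : d₁ (nth (cU c) p, e₀, k) = true := (le_spec μ d₁ e₀ hd₁ he₀ _ _).mpr heq.ge
      rw [b1, b2] at h3; simp at h3
  · rintro ⟨h1, h2, h3⟩
    refine ⟨⟨?_, ?_⟩, ?_⟩
    · rw [← Bool.not_eq_true, le_spec μ d₁ e₀ hd₁ he₀]; exact h1
    · rw [← Bool.not_eq_true, le_spec μ d₁ e₀ hd₁ he₀]; exact h2
    · rcases le_or_gt (μ k) (μ (nth (cU c) p)) with h | h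
      · have : ¬ μ (nth (cU c) p) ≤ μ k := fun h' => h3 (le_antisymm h h')
        have := (not_iff_not.mpr (le_spec μ d₁ e₀ hd₁ he₀ (nth (cU c) p) k)).mpr this
        rw [Bool.not_eq_true] at this
        simp [this]
      · have : ¬ μ k ≤ μ (nth (cU c) p) := not_le.mpr h
        have := (not_iff_not.mpr (le_spec μ d₁ e₀ hd₁ he₀ k (nth (cU c) p))).mpr this
        rw [Bool.not_eq_true] at this
        simp [this]

include hd₁ hd₂ he₀ hi₁ in
theorem certB_sound (g : ℕ → ℕ) (p s c n : ℕ)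
    (hvals : ∀ x ≤ p, (evx s n x).getD 0 = g x) (hgle : ∀ x, g x ≤ 2)
    (hc : certB d₁ d₂ e₀ i₁ n p s c = true) :
    μ (cjl c) = qp g p - 1/2^(p+1) ∧ μ (cjr c) = qp g p + 1/2^(p+1) ∧
      μ (nth (cU c) p) = qp g p := by
  have hadd := addB_spec μ d₁ d₂ hd₁ hd₂
  unfold certB at hc
  rw [Bool.and_eq_true, Bool.and_eq_true, Bool.and_eq_true, Bool.and_eq_true,
    Bool.and_eq_true] at hc
  obtain ⟨⟨⟨⟨⟨h1, h2⟩, h3⟩, h4⟩, h5⟩, h6⟩ := hc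
  rw [decide_eq_true_iff] at h1
  rw [allBelow_iff] at h2 h3 h4
  have hH : ∀ t ≤ p+1, μ (nth (cH c) t) = 1/2^t := by
    intro t
    induction t with
    | zero => intro _; rw [h1, hi₁]; norm_num
    | succ t ih =>
      intro ht
      have hch := (hadd _ _ _).mp (h2 t (by omega))
      have := ih (by omega)
      rw [this] at hch
      have : μ (nth (cH c) (t+1)) = 1/2^t/2 := by linarith
      rw [this, pow_succ, div_div]
  have hN : ∀ t ≤ p+1, μ (nth (cN c) t) = -(1/2^t) := by
    intro t ht
    have hch := (hadd _ _ _).mp (h3 t (by omega))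
    rw [he₀, hH t ht] at hch
    linarith
  have hw : ∀ i ≤ p, μ (wIdx e₀ ((evx s n i).getD 0) c i) = ((g i : ℝ) - 1)/2^(i+1) := by
    intro i hi
    rw [hvals i hi]
    unfold wIdx
    have := hgle i
    rcases (by omega : g i = 0 ∨ g i = 1 ∨ g i = 2) with h | h | h <;> rw [h]
    · rw [if_neg (by norm_num), if_pos rfl, hN (i+1) (by omega)]
      push_cast; ring
    · rw [if_neg (by norm_num), if_neg (by norm_num), he₀]
      push_cast; ring
    · rw [if_pos rfl, hH (i+1) (by omega)]
      push_cast; ring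
  have hU : ∀ i ≤ p, μ (nth (cU c) i) = qp g i := by
    intro i
    induction i with
    | zero =>
      intro _
      have hch := (hadd _ _ _).mp (h4 0 (by omega))
      rw [if_pos rfl, he₀, hw 0 (by omega)] at hch
      rw [← hch]
      simp [qp]
    | succ i ih =>
      intro hi
      have hch := (hadd _ _ _).mp (h4 (i+1) (by omega))
      rw [if_neg (by omega), Nat.add_sub_cancel, ih (by omega), hw (i+1) hi] at hch
      rw [← hch]
      simp only [qp]
      conv_rhs => rw [Finset.sum_range_succ]
  have hjl := (hadd _ _ _).mp h5
  have hjr := (hadd _ _ _).mp h6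
  rw [hH (p+1) le_rfl, hU p le_rfl] at hjl hjr
  exact ⟨by linarith, by linarith, hU p le_rfl⟩

end withMu

theorem certB_exists (K : Set (ℕ → ℕ)) (hAC : ∀ f : ℕ → ℕ, AlmostConst f → f ∈ K)
    (μ : ℕ → ℝ) (d₁ d₂ : ℕ × ℕ × ℕ → Bool) (e₀ i₁ : ℕ)
    (hd₁ : ∀ a b c', d₁ (a,b,c') = true ↔ μ a + μ b ≤ μ c')
    (hd₂ : ∀ a b c', d₂ (a,b,c') = true ↔ μ c' ≤ μ a + μ b)
    (he₀ : μ e₀ = 0) (hi₁ : μ i₁ = 1)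
    (hsurj : ∀ x ∈ KtildeR K, ∃ j, μ j = x)
    (g : ℕ → ℕ) (hg : ∀ i, g i ≤ 2) (p s n : ℕ)
    (hvals : ∀ x ≤ p, (evx s n x).getD 0 = g x) :
    ∃ c, certB d₁ d₂ e₀ i₁ n p s c = true := by
  have hadd := addB_spec μ d₁ d₂ hd₁ hd₂
  -- choose indices
  have hFH : ∃ FH : ℕ → ℕ, ∀ t, μ (FH t) = 1/2^t ∧ FH 0 = i₁ := by
    have h : ∀ t : ℕ, ∃ j, μ j = 1/2^t := fun t => hsurj _ (pow_mem K hAC t)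
    choose F hF using h
    refine ⟨fun t => if t = 0 then i₁ else F t, fun t => ⟨?_, by simp⟩⟩
    show μ (if t = 0 then i₁ else F t) = 1/2^t
    by_cases h0 : t = 0
    · subst h0; rw [if_pos rfl, hi₁]; norm_num
    · rw [if_neg h0]; exact hF t
  obtain ⟨FH, hFH⟩ := hFH
  obtain ⟨FN, hFN⟩ : ∃ FN : ℕ → ℕ, ∀ t, μ (FN t) = -(1/2^t) := by
    have h : ∀ t : ℕ, ∃ j, μ j = -(1/2^t) := fun t => hsurj _ (negpow_mem K hAC t)
    choose F hF using h
    exact ⟨F, hF⟩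
  obtain ⟨FU, hFU⟩ : ∃ FU : ℕ → ℕ, ∀ i, μ (FU i) = qp g i := by
    have h : ∀ i : ℕ, ∃ j, μ j = qp g i := by
      intro i
      have := q_shift_mem K hAC g hg i 1 (by omega)
      have h1 : qp g i + ((1:ℕ):ℝ)/2^(i+1) - 1/2^(i+1) = qp g i := by push_cast; ring
      obtain ⟨j, hj⟩ := hsurj _ this
      exact ⟨j, by rw [hj]; push_cast; ring⟩
    choose F hF using h
    exact ⟨F, hF⟩
  obtain ⟨jl, hjl⟩ : ∃ j, μ j = qp g p - 1/2^(p+1) := by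
    have := q_shift_mem K hAC g hg p 0 (by omega)
    obtain ⟨j, hj⟩ := hsurj _ this
    exact ⟨j, by rw [hj]; push_cast; ring⟩
  obtain ⟨jr, hjr⟩ : ∃ j, μ j = qp g p + 1/2^(p+1) := by
    have := q_shift_mem K hAC g hg p 2 (by omega)
    obtain ⟨j, hj⟩ := hsurj _ this
    exact ⟨j, by rw [hj]; push_cast; ring⟩
  refine ⟨mkCert (encF FH (p+2)) (encF FN (p+2)) (encF FU (p+1)) jl jr, ?_⟩
  unfold certB
  rw [Bool.and_eq_true, Bool.and_eq_true, Bool.and_eq_true, Bool.and_eq_true,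
    Bool.and_eq_true]
  rw [cH_mk, cN_mk, cU_mk, cjl_mk, cjr_mk]
  have hnthH : ∀ t, t < p+2 → nth (encF FH (p+2)) t = FH t := fun t ht => nth_encF _ _ _ ht
  have hnthN : ∀ t, t < p+2 → nth (encF FN (p+2)) t = FN t := fun t ht => nth_encF _ _ _ ht
  have hnthU : ∀ i, i < p+1 → nth (encF FU (p+1)) i = FU i := fun i hi => nth_encF _ _ _ hi
  refine ⟨⟨⟨⟨⟨?_, ?_⟩, ?_⟩, ?_⟩, ?_⟩, ?_⟩
  · rw [decide_eq_true_iff, hnthH 0 (by omega), (hFH 0).2]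
  · rw [allBelow_iff]
    intro t ht
    rw [hnthH (t+1) (by omega), hnthH t (by omega)]
    rw [hadd, (hFH (t+1)).1, (hFH t).1, pow_succ]
    ring
  · rw [allBelow_iff]
    intro t ht
    rw [hnthN t (by omega), hnthH t (by omega)]
    rw [hadd, hFN t, (hFH t).1, he₀]
    ring
  · rw [allBelow_iff]
    intro i hi
    have hwv : μ (wIdx e₀ ((evx s n i).getD 0) (mkCert (encF FH (p+2)) (encF FN (p+2))
        (encF FU (p+1)) jl jr) i) = ((g i : ℝ) - 1)/2^(i+1) := by
      rw [hvals i (by omega)]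
      unfold wIdx
      rw [cH_mk, cN_mk]
      have := hg i
      rcases (by omega : g i = 0 ∨ g i = 1 ∨ g i = 2) with h | h | h <;> rw [h]
      · rw [if_neg (by norm_num), if_pos rfl, hnthN (i+1) (by omega), hFN (i+1)]
        push_cast; ring
      · rw [if_neg (by norm_num), if_neg (by norm_num), he₀]
        push_cast; ring
      · rw [if_pos rfl, hnthH (i+1) (by omega), (hFH (i+1)).1]
        push_cast; ring
    cases i with
    | zero =>
      rw [if_pos rfl, hadd, he₀, hwv, hnthU 0 (by omega), hFU 0]
      simp [qp]
    | succ i =>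
      rw [if_neg (by omega), Nat.add_sub_cancel, hadd, hwv,
        hnthU i (by omega), hnthU (i+1) (by omega), hFU i, hFU (i+1)]
      simp only [qp]
      conv_rhs => rw [Finset.sum_range_succ]
  · rw [hadd, hjl, hnthH (p+1) (by omega), hnthU p (by omega), hFU p, (hFH (p+1)).1]
    ring
  · rw [hadd, hjr, hnthH (p+1) (by omega), hnthU p (by omega), hFU p, (hFH (p+1)).1]


end Aux

/-- If the structure `(K̃, 0, Q³₊, Q³₋)` generated by a class `K` of total computable
functions with `AC ⊆ K` has a computable presentation, then `A₀ ∪ (A₂ \ A₁)` is `Σ⁰₂`. -/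
theorem sigma02_of_computable_presentation (K : Set (ℕ → ℕ))
    (hKcomp : ∀ f ∈ K, Computable f) (hAC : ∀ f : ℕ → ℕ, AlmostConst f → f ∈ K)
    (hpres : CompPres (KtildeR K)) :
    Sigma02 (A0 ∪ (A2 K \ A1)) := by
  classical
  obtain ⟨μ, hmem, hsurj, ⟨e₀, he₀⟩, ⟨d₁, hd₁c, hd₁'⟩, ⟨d₂, hd₂c, hd₂'⟩⟩ := hpres
  have hd₁ : ∀ a b c', d₁ (a,b,c') = true ↔ μ a + μ b ≤ μ c' := fun a b c' => hd₁' a b c'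
  have hd₂ : ∀ a b c', d₂ (a,b,c') = true ↔ μ c' ≤ μ a + μ b := fun a b c' => hd₂' a b c'
  have h1K : (1:ℝ) ∈ KtildeR K := by
    have := Aux.mem_Ktilde K hAC (fun _ => 1) (fun _ => by norm_num) ⟨1, 0, fun y _ => rfl⟩ 1
    rw [Aux.fbar_const] at this
    simpa using this
  obtain ⟨i₁, hi₁⟩ := hsurj 1 h1K
  refine ⟨Aux.Rfun d₁ d₂ e₀ i₁, Aux.Rfun_computable d₁ d₂ hd₁c hd₂c e₀ i₁, ?_⟩
  have hmem_iff : ∀ n x m, m ∈ phi n x ↔ ∃ s, Aux.evx s n x = some m := by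
    intro n x m
    constructor
    · intro h
      obtain ⟨s, hs⟩ := Nat.Partrec.Code.evaln_complete.mp h
      exact ⟨s, Option.mem_def.mp hs⟩
    · rintro ⟨s, hs⟩
      exact Nat.Partrec.Code.evaln_sound (Option.mem_def.mpr hs)
  have hval_le : ∀ n, RangeSub012 n →
      ∀ s x, (Aux.evx s n x).isSome = true → (Aux.evx s n x).getD 0 ≤ 2 := by
    intro n hrange s x hsome
    obtain ⟨m, hm⟩ := Option.isSome_iff_exists.mp hsome
    have hmphi : m ∈ phi n x := Nat.Partrec.Code.evaln_sound (Option.mem_def.mpr hm)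
    have := hrange x m hmphi
    rw [Aux.mem012_iff] at this
    rw [hm]
    simpa using this
  ext n
  simp only [Set.mem_union, Set.mem_diff, Set.mem_setOf_eq]
  constructor
  · -- membership implies the Σ⁰₂ condition
    intro hmemb
    rcases hmemb with ⟨hr, hnT⟩ | ⟨⟨hr, hdisj⟩, hnA1⟩
    · -- A0 case
      obtain ⟨x', hx'⟩ := not_forall.mp hnT
      obtain ⟨x₀, hx₀, hxlt⟩ : ∃ x₀, ¬ (phi n x₀).Dom ∧ ∀ x < x₀, (phi n x).Dom := by
        have hex : ∃ x, ¬ (phi n x).Dom := ⟨x', hx'⟩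
        refine ⟨Nat.find hex, Nat.find_spec hex, fun y hy => ?_⟩
        by_contra hy'
        exact absurd hy (Nat.find_min' hex hy' |>.not_gt)
      have hHaltBound : ∀ p s, (∀ x < p+1, (Aux.evx s n x).isSome = true) → p < x₀ := by
        intro p s hall
        by_contra h
        push_neg at h
        obtain ⟨m, hm⟩ := Option.isSome_iff_exists.mp (hall x₀ (by omega))
        exact hx₀ (Part.dom_iff_mem.mpr ⟨m, Nat.Partrec.Code.evaln_sound (Option.mem_def.mpr hm)⟩)
      cases x₀ with
      | zero =>
        refine ⟨0, fun b => ?_⟩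
        rw [Aux.Rfun_iff]
        exact ⟨fun x _ hs => hval_le n hr _ x hs,
          fun hall _ => absurd (hHaltBound _ _ hall) (Nat.not_lt_zero _)⟩
      | succ m =>
        set f : ℕ → ℕ := fun x => if hx : (phi n x).Dom then (phi n x).get hx else 1 with hfdef
        have hfle : ∀ i, f i ≤ 2 := by
          intro i
          have hfi : f i = if hx : (phi n i).Dom then (phi n i).get hx else 1 := rfl
          rw [hfi]
          split_ifs with h
          · have := hr i _ (Part.get_mem h)
            rw [Aux.mem012_iff] at this
            exact this
          · omega
        obtain ⟨kv, hkv⟩ := hsurj _ (Aux.fstar_mem K hAC f hfle m)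
        refine ⟨kv, fun b => ?_⟩
        rw [Aux.Rfun_iff]
        refine ⟨fun x _ hs => hval_le n hr _ x hs, fun hall hcB => ?_⟩
        set p := (Nat.unpair b).1 with hpdef
        set s := (Nat.unpair (Nat.unpair b).2).1 with hsdef
        set c := (Nat.unpair (Nat.unpair b).2).2 with hcdef
        have hpm : p < m+1 := hHaltBound p s hall
        have hvals : ∀ x ≤ p, (Aux.evx s n x).getD 0 = f x := by
          intro x hx
          obtain ⟨v, hv⟩ := Option.isSome_iff_exists.mp (hall x (by omega))
          have hdom : (phi n x).Dom := hxlt x (by omega)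
          have hvphi : v ∈ phi n x := Nat.Partrec.Code.evaln_sound (Option.mem_def.mpr hv)
          rw [hv, hfdef]
          simp only [Option.getD_some]
          rw [dif_pos hdom]
          exact (Part.get_eq_of_mem hvphi hdom).symm
        obtain ⟨hjl, hjr, hUp⟩ :=
          Aux.certB_sound μ d₁ d₂ e₀ i₁ hd₁ hd₂ he₀ hi₁ f p s c n hvals hfle hcB
        rw [Aux.relB_iff μ d₁ e₀ hd₁ he₀, hjl, hjr, hUp, hkv]
        have hple : p ≤ m := by omega
        have hbd := Aux.qp_diff_bound f hfle p m hple
        obtain ⟨z, hz⟩ := Aux.qp_diff_dyadic f p m hple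
        have habs := abs_le.mp hbd
        have e1 : (0:ℝ) < 1/2^(m+1) := by positivity
        have e2 : (0:ℝ) < 1/2^(m+3) := by positivity
        have e3 : (1:ℝ)/2^(m+3) < 1/2^(m+1) := by
          gcongr
          · norm_num
          · omega
        refine ⟨?_, ?_, ?_⟩
        · intro hle
          linarith [habs.1]
        · intro hle
          linarith [habs.2]
        · intro heq
          have h0 : (z:ℝ)/2^(m+1) + 1/2^(m+3) = 0 := by
            rw [← hz]
            linarith [heq]
          have h4 : (2:ℝ)^(m+3) = 2^(m+1) * 4 := by ring
          have h1 : ((4:ℝ)*z + 1) = ((z:ℝ)/2^(m+1) + 1/2^(m+3)) * 2^(m+3) := by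
            rw [h4]
            have : (2:ℝ)^(m+1) ≠ 0 := by positivity
            field_simp
          rw [h0, zero_mul] at h1
          have h2 : (4*z + 1 : ℤ) = 0 := by exact_mod_cast h1
          omega
    · -- A2 \ A1 case
      have hT : TotalPhi n := by
        by_contra hnT
        exact hnA1 ⟨hr, Or.inl hnT⟩
      obtain ⟨h', hKt'⟩ : ∃ h : TotalPhi n, fbar (fun x => (phi n x).get (h x)) ∈ KtildeR K := by
        rcases hdisj with h | h
        · exact absurd hT h
        · exact h
      set f : ℕ → ℕ := fun x => (phi n x).get (hT x) with hfdef
      have hKt : fbar f ∈ KtildeR K := hKt'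
      have hnAC : ¬ AlmostConst f := fun hac => hnA1 ⟨hr, Or.inr ⟨hT, hac⟩⟩
      have hfle : ∀ i, f i ≤ 2 := by
        intro i
        have := hr i _ (Part.get_mem (hT i))
        rw [Aux.mem012_iff] at this
        exact this
      obtain ⟨kv, hkv⟩ := hsurj _ hKt
      refine ⟨kv, fun b => ?_⟩
      rw [Aux.Rfun_iff]
      refine ⟨fun x _ hs => hval_le n hr _ x hs, fun hall hcB => ?_⟩
      set p := (Nat.unpair b).1 with hpdef
      set s := (Nat.unpair (Nat.unpair b).2).1 with hsdef
      set c := (Nat.unpair (Nat.unpair b).2).2 with hcdef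
      have hvals : ∀ x ≤ p, (Aux.evx s n x).getD 0 = f x := by
        intro x hx
        obtain ⟨v, hv⟩ := Option.isSome_iff_exists.mp (hall x (by omega))
        have hvphi : v ∈ phi n x := Nat.Partrec.Code.evaln_sound (Option.mem_def.mpr hv)
        rw [hv, hfdef]
        simp only [Option.getD_some]
        exact (Part.get_eq_of_mem hvphi (hT x)).symm
      obtain ⟨hjl, hjr, hUp⟩ :=
        Aux.certB_sound μ d₁ d₂ e₀ i₁ hd₁ hd₂ he₀ hi₁ f p s c n hvals hfle hcB
      rw [Aux.relB_iff μ d₁ e₀ hd₁ he₀, hjl, hjr, hUp, hkv]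
      have hpre := Aux.fbar_prefix f hfle p
      have hstrict := Aux.strict_tail f hfle hnAC p
      have habs := abs_lt.mp hstrict.1
      have hppos : (0:ℝ) < 2^(p+1) := by positivity
      have hlow : (-1:ℝ)/2^(p+1) < fbar (Aux.shf f (p+1)) / 2^(p+1) := by
        gcongr
        exact habs.1
      have hhigh : fbar (Aux.shf f (p+1)) / 2^(p+1) < 1/2^(p+1) := by
        gcongr
        exact habs.2
      refine ⟨?_, ?_, ?_⟩
      · intro hle
        rw [hpre] at hle
        have : (-1:ℝ)/2^(p+1) = -(1/2^(p+1)) := by ring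
        linarith
      · intro hle
        rw [hpre] at hle
        linarith
      · intro heq
        rw [hpre] at heq
        have : fbar (Aux.shf f (p+1)) / 2^(p+1) = 0 := by linarith
        exact hstrict.2 ((div_eq_zero_iff.mp this).resolve_right (by positivity))
  · -- the Σ⁰₂ condition implies membership
    rintro ⟨k, hk⟩
    have hrange : RangeSub012 n := by
      intro x m hm
      obtain ⟨s, hs⟩ := (hmem_iff n x m).mp hm
      have h := (Aux.Rfun_iff d₁ d₂ e₀ i₁ n k (Nat.pair x (Nat.pair s 0))).mp (hk _)
      have h1 := h.1
      simp only [Nat.unpair_pair] at h1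
      have := h1 x (by omega) (by rw [hs]; rfl)
      rw [hs] at this
      rw [Aux.mem012_iff]
      simpa using this
    by_cases hT : TotalPhi n
    · set f : ℕ → ℕ := fun x => (phi n x).get (hT x) with hfdef
      have hfle : ∀ i, f i ≤ 2 := by
        intro i
        have := hrange i _ (Part.get_mem (hT i))
        rw [Aux.mem012_iff] at this
        exact this
      have hS : ∀ p, ∃ s, ∀ x ≤ p, Aux.evx s n x = some (f x) := by
        intro p
        induction p with
        | zero =>
          obtain ⟨s, hs⟩ := (hmem_iff n 0 (f 0)).mp (Part.get_mem (hT 0))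
          exact ⟨s, fun x hx => by interval_cases x; exact hs⟩
        | succ p ih =>
          obtain ⟨s, hs⟩ := ih
          obtain ⟨s', hs'⟩ := (hmem_iff n (p+1) (f (p+1))).mp (Part.get_mem (hT (p+1)))
          refine ⟨max s s', fun x hx => ?_⟩
          rcases Nat.lt_or_ge x (p+1) with h | h
          · exact Option.mem_def.mp (Nat.Partrec.Code.evaln_mono (le_max_left s s')
              (Option.mem_def.mpr (hs x (by omega))))
          · have hx' : x = p+1 := by omega
            subst hx'
            exact Option.mem_def.mp (Nat.Partrec.Code.evaln_mono (le_max_right s s')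
              (Option.mem_def.mpr hs'))
      have key : ∀ p : ℕ, |μ k - Aux.qp f p| < 1/2^(p+1) ∧ μ k ≠ Aux.qp f p := by
        intro p
        obtain ⟨s, hs⟩ := hS p
        have hvals : ∀ x ≤ p, (Aux.evx s n x).getD 0 = f x := fun x hx => by rw [hs x hx]; rfl
        obtain ⟨c, hc⟩ := Aux.certB_exists K hAC μ d₁ d₂ e₀ i₁ hd₁ hd₂ he₀ hi₁ hsurj
          f hfle p s n hvals
        have h := (Aux.Rfun_iff d₁ d₂ e₀ i₁ n k (Nat.pair p (Nat.pair s c))).mp (hk _)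
        simp only [Nat.unpair_pair] at h
        have hrel := h.2 (fun x hx => by rw [hs x (by omega)]; rfl) hc
        rw [Aux.relB_iff μ d₁ e₀ hd₁ he₀] at hrel
        obtain ⟨hjl, hjr, hUp⟩ :=
          Aux.certB_sound μ d₁ d₂ e₀ i₁ hd₁ hd₂ he₀ hi₁ f p s c n hvals hfle hc
        obtain ⟨hr1, hr2, hr3⟩ := hrel
        rw [hjl] at hr1
        rw [hjr] at hr2
        rw [hUp] at hr3
        refine ⟨?_, hr3⟩
        rw [abs_lt]
        constructor
        · linarith [not_le.mp hr1]
        · linarith [not_le.mp hr2]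
      have happrox : ∀ p : ℕ, |fbar f - Aux.qp f p| ≤ 1/2^(p+1) := by
        intro p
        have hpre := Aux.fbar_prefix f hfle p
        have habs := Aux.abs_fbar_le _ (Aux.shf_le f hfle (p+1))
        have hppos : (0:ℝ) < 2^(p+1) := by positivity
        rw [hpre, add_sub_cancel_left, abs_div, abs_of_pos hppos]
        gcongr
      have hEq : μ k = fbar f := by
        by_contra hne
        have hpos : 0 < |μ k - fbar f| := abs_pos.mpr (sub_ne_zero.mpr hne)
        obtain ⟨p, hp⟩ := exists_pow_lt_of_lt_one (half_pos hpos) (by norm_num : (1/2:ℝ) < 1)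
        have h1 := (key p).1
        have h2 := happrox p
        have h3 : |μ k - fbar f| ≤ |μ k - Aux.qp f p| + |Aux.qp f p - fbar f| :=
          abs_sub_le (μ k) (Aux.qp f p) (fbar f)
        rw [abs_sub_comm (Aux.qp f p)] at h3
        have hcalc : (1:ℝ)/2^(p+1) = (1/2)^p / 2 := by
          rw [div_pow, one_pow, pow_succ, div_div]
        rw [hcalc] at h1 h2
        linarith
      have hnAC : ¬ AlmostConst f := by
        rintro ⟨cst, x, hcst⟩
        have hcx : f (x+1) = cst := hcst (x+1) (by omega)
        have hc2 : cst ≤ 2 := by rw [← hcx]; exact hfle (x+1)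
        have hshift : Aux.shf f (x+1) = fun _ => cst := by
          funext i
          exact hcst (i + (x+1)) (by omega)
        have hpre := Aux.fbar_prefix f hfle x
        rw [hshift, Aux.fbar_const] at hpre
        have hkey := key x
        have h1 := hkey.1
        rw [abs_lt] at h1
        rcases (by omega : cst = 0 ∨ cst = 1 ∨ cst = 2) with h | h | h <;>
          rw [h] at hpre <;> push_cast at hpre
        · rw [hEq, hpre] at h1
          have : Aux.qp f x + (0 - 1)/2^(x+1) - Aux.qp f x = -(1/2^(x+1)) := by ring
          rw [this] at h1
          linarith [h1.1]
        · rw [hEq, hpre] at hkey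
          exact hkey.2 (by ring_nf)
        · rw [hEq, hpre] at h1
          have : Aux.qp f x + (2 - 1)/2^(x+1) - Aux.qp f x = 1/2^(x+1) := by ring
          rw [this] at h1
          linarith [h1.2]
      refine Or.inr ⟨⟨hrange, Or.inr ⟨hT, ?_⟩⟩, ?_⟩
      · have h := hmem k
        rw [hEq] at h
        exact h
      · rintro ⟨_, hdisj⟩
        rcases hdisj with h | ⟨h', hac⟩
        · exact h hT
        · exact hnAC hac
    · exact Or.inl ⟨hrange, hT⟩
end

section
/- Let s ≥ 1 and let (A₀,…,A_{s−1}) be an s-tuple of c.e. subsets of ℕ. The following are equivalent: (1) (A₀,…,A_{s−1}) is m-complete in the class of s-tuples of c.e. subsets of ℕ; (2) there is a total computable H : ℕ^s → ℕ such that for all x̄ = (x₀,…,x_{s−1}) and all i < s, H(x̄) ∈ A_i ↔ H(x̄) ∈ W_{x_i}; (3) there is an s-tuple of functions (F₀,…,F_{s−1}) with (F₀,…,F_{s−1}) ≤_m (A₀,…,A_{s−1}) and W_{F_i(x̄)} ≠ W_{x_i} for all x̄ and all i < s; (4) there is an s-tuple of functions (F₀,…,F_{s−1}) with (F₀,…,F_{s−1})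 ≤_m (A₀,…,A_{s−1}) and φ_{F_i(x̄)} ≠ φ_{x_i} for all x̄ and all i < s. -/
/-- `W_e`, the domain of `φ_e`. -/
def Wset (e : ℕ) : Set ℕ := {x : ℕ | (phi e x).Dom}

/-- m-reducibility of `s`-tuples of subsets of `ℕ`. -/
def TupleMRed {s : ℕ} (X A : Fin s → Set ℕ) : Prop :=
  ∃ h : ℕ → ℕ, Computable h ∧ ∀ (i : Fin s) (n : ℕ), n ∈ X i ↔ h n ∈ A i

/-- m-reducibility of an `s`-tuple of functions `F_i : ℕ^s → ℕ` to an `s`-tuple of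
subsets of `ℕ`: there are computable `h, a_i, b_i` with `F_i(x̄) = a_i(x̄)` when
`h(x̄) ∈ A_i` and `F_i(x̄) = b_i(x̄)` when `h(x̄) ∉ A_i`. -/
def FunTupleMRed {s : ℕ} (F : Fin s → (Fin s → ℕ) → ℕ) (A : Fin s → Set ℕ) : Prop :=
  ∃ (h : (Fin s → ℕ) → ℕ) (a b : Fin s → (Fin s → ℕ) → ℕ),
    Computable h ∧ (∀ i : Fin s, Computable (a i)) ∧ (∀ i : Fin s, Computable (b i)) ∧
    ∀ (x : Fin s → ℕ) (i : Fin s),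
      (h x ∈ A i → F i x = a i x) ∧ (h x ∉ A i → F i x = b i x)

/-- A set is computably enumerable if it is `W_e` for some `e`. -/
def CE (S : Set ℕ) : Prop := ∃ e : ℕ, S = Wset e

/-- `(A₀,…,A_{s−1})` is m-complete in the class of `s`-tuples of c.e. sets. -/
def MCompleteCE {s : ℕ} (A : Fin s → Set ℕ) : Prop :=
  (∀ i : Fin s, CE (A i)) ∧
  ∀ X : Fin s → Set ℕ, (∀ i : Fin s, CE (X i)) → TupleMRed X A

open Nat.Partrec Nat.Partrec.Code Encodable Denumerable

private lemma phi_ofCode (c : Nat.Partrec.Code) : phi (encode c) = c.eval := by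
  simp [phi]

private lemma ce_dom {f : ℕ →. ℕ} (hf : Partrec f) : CE {x | (f x).Dom} := by
  obtain ⟨c, hc⟩ := Nat.Partrec.Code.exists_code.1 (Partrec.nat_iff.1 hf)
  exact ⟨encode c, by ext x; simp [Wset, phi_ofCode, hc]⟩

private def cur (e p : ℕ) : ℕ := encode ((Denumerable.ofNat Nat.Partrec.Code e).curry p)

private lemma cur_comp {α} [Primcodable α] {f g : α → ℕ} (hf : Computable f)
    (hg : Computable g) : Computable fun a => cur (f a) (g a) :=
  Computable.encode.comp
    (Nat.Partrec.Code.primrec₂_curry.to_comp.comp ((Computable.ofNat _).comp hf) hg)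

private lemma phi_cur (e p y : ℕ) : phi (cur e p) y = phi e (Nat.pair p y) := by
  simp [cur, phi, Nat.Partrec.Code.eval_curry]

private lemma rec_thm {q : ℕ → ℕ →. ℕ} (hq : Partrec₂ q) : ∃ e : ℕ, ∀ m, phi e m = q e m := by
  obtain ⟨c, hc⟩ := Nat.Partrec.Code.fixed_point₂
    (f := fun c m => q (encode c) m)
    ((hq.comp (Computable.encode.comp Computable.fst) Computable.snd).to₂)
  exact ⟨encode c, fun m => by rw [phi_ofCode]; exact congrFun hc m⟩

private lemma computable_tuple {s : ℕ} {α} [Primcodable α] {f : Fin s → α → ℕ}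
    (hf : ∀ i, Computable (f i)) : Computable fun a => (fun i => f i a : Fin s → ℕ) :=
  (Primrec.vector_get'.to_comp.comp (Computable.vector_ofFn hf)).of_eq fun a => by
    funext i; simp

private def finmk {s : ℕ} (hs : 0 < s) (j : ℕ) : Fin s := ⟨j % s, Nat.mod_lt _ hs⟩

private lemma finmk_comp {s : ℕ} (hs : 0 < s) : Computable (finmk hs) :=
  (Primrec.fin_val_iff.1 (by
    simpa [finmk] using (Primrec.nat_mod.comp Primrec.id (Primrec.const s)))).to_comp

private lemma computable_app {s : ℕ} {α} [Primcodable α] {v : α → Fin s → ℕ} {i : α → Fin s}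
    (hv : Computable v) (hi : Computable i) : Computable fun a => v a (i a) :=
  Primrec.fin_app.to_comp.comp hv hi

private lemma partrec_phi {α} [Primcodable α] {u v : α → ℕ} (hu : Computable u)
    (hv : Computable v) : Partrec fun a => phi (u a) (v a) :=
  (Nat.Partrec.Code.eval_part.comp ((Computable.ofNat _).comp hu) hv).of_eq fun _ => rfl

private lemma finmk_self {s : ℕ} (hs : 0 < s) (i : Fin s) : finmk hs (i : ℕ) = i := by
  apply Fin.ext
  simp [finmk, Nat.mod_eq_of_lt i.isLt]

private noncomputable def enc (s : ℕ) : (Fin s → ℕ) → ℕ :=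
  @Encodable.encode _ (Primcodable.finArrow).toEncodable

private noncomputable def dec (s : ℕ) : ℕ → Option (Fin s → ℕ) :=
  @Encodable.decode _ (Primcodable.finArrow).toEncodable

private lemma enc_comp {s : ℕ} : Computable (enc s) := Computable.encode
private lemma dec_comp {s : ℕ} : Computable (dec s) := Computable.decode
private lemma dec_enc {s : ℕ} (x : Fin s → ℕ) : dec s (enc s x) = some x :=
  @encodek _ (Primcodable.finArrow).toEncodable x

private lemma crit_one_two {s : ℕ} (hs : 1 ≤ s) {A : Fin s → Set ℕ} (hc : MCompleteCE A) :
    ∃ H : (Fin s → ℕ) → ℕ, Computable H ∧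
      ∀ (x : Fin s → ℕ) (i : Fin s), (H x ∈ A i ↔ H x ∈ Wset (x i)) := by
  classical
  have hCce : ∀ i : Fin s, CE {m : ℕ | (phi m (Nat.pair i m)).Dom} := fun i =>
    ce_dom (partrec_phi Computable.id ((Primrec₂.natPair.comp (Primrec.const (i : ℕ))
      Primrec.id).to_comp))
  obtain ⟨g, hg, hgspec⟩ := hc.2 (fun i => {m : ℕ | (phi m (Nat.pair i m)).Dom}) hCce
  have hqp : Partrec₂ (fun e w =>
      (Part.ofOption (dec s w.unpair.1)).bind fun x =>
        (phi (x (finmk hs w.unpair.2.unpair.1)) (g (cur e w.unpair.1))).map fun _ => 0 :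
      ℕ → ℕ →. ℕ) := by
    have u1 : Computable fun p : ℕ × ℕ => p.2.unpair.1 :=
      Computable.fst.comp (Computable.unpair.comp Computable.snd)
    have f1 : Partrec fun p : ℕ × ℕ => Part.ofOption (dec s p.2.unpair.1) :=
      Computable.ofOption (Computable.comp dec_comp u1)
    have hu : Computable fun r : (ℕ × ℕ) × (Fin s → ℕ) =>
        r.2 (finmk hs r.1.2.unpair.2.unpair.1) :=
      computable_app Computable.snd ((finmk_comp hs).comp
        (Computable.fst.comp (Computable.unpair.comp
          (Computable.snd.comp (Computable.unpair.comp
            (Computable.snd.comp Computable.fst))))))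
    have hv : Computable fun r : (ℕ × ℕ) × (Fin s → ℕ) => g (cur r.1.1 r.1.2.unpair.1) :=
      hg.comp (cur_comp (Computable.fst.comp Computable.fst)
        (Computable.fst.comp (Computable.unpair.comp
          (Computable.snd.comp Computable.fst))))
    exact f1.bind (((partrec_phi hu hv).map (Computable.const 0).to₂).to₂)
  obtain ⟨e, he⟩ := rec_thm hqp
  refine ⟨fun x => g (cur e (enc s x)), hg.comp (cur_comp (Computable.const e) enc_comp), ?_⟩
  intro x i
  set m : ℕ := cur e (enc s x) with hm
  have heval : phi m (Nat.pair i m) = (phi (x i) (g m)).map fun _ => 0 := by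
    rw [hm, phi_cur, he]
    simp [Nat.unpair_pair, dec_enc, finmk_self hs]
  have key : m ∈ {m : ℕ | (phi m (Nat.pair i m)).Dom} ↔ g m ∈ Wset (x i) := by
    change (phi m (Nat.pair i m)).Dom ↔ (phi (x i) (g m)).Dom
    rw [heval]
    exact Iff.rfl
  rw [← hgspec i m, key]

-- 2 → 1
private lemma crit_two_one {s : ℕ} {A : Fin s → Set ℕ} (hA : ∀ i : Fin s, CE (A i))
    (hH : ∃ H : (Fin s → ℕ) → ℕ, Computable H ∧
      ∀ (x : Fin s → ℕ) (i : Fin s), (H x ∈ A i ↔ H x ∈ Wset (x i))) :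
    MCompleteCE A := by
  obtain ⟨H, hHc, hHs⟩ := hH
  refine ⟨hA, fun X hX => ?_⟩
  choose ec hec using hX
  -- a code that on input ⟨⟨u,v⟩, y⟩ computes phi u v
  obtain ⟨c₀, hc₀⟩ := Nat.Partrec.Code.exists_code.1 (Partrec.nat_iff.1
    (partrec_phi (α := ℕ)
      (Computable.fst.comp (Computable.unpair.comp
        (Computable.fst.comp Computable.unpair)))
      (Computable.snd.comp (Computable.unpair.comp
        (Computable.fst.comp Computable.unpair)))))
  set e₀ : ℕ := encode c₀ with he₀
  have hphi₀ : ∀ u v y : ℕ, phi e₀ (Nat.pair (Nat.pair u v) y) = phi u v := by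
    intro u v y
    rw [he₀, phi_ofCode, hc₀]
    simp
  have hW : ∀ (i : Fin s) (n y : ℕ),
      (phi (cur e₀ (Nat.pair (ec i) n)) y).Dom ↔ (phi (ec i) n).Dom := by
    intro i n y
    rw [phi_cur, hphi₀]
  refine ⟨fun n => H (fun i => cur e₀ (Nat.pair (ec i) n)),
    hHc.comp (computable_tuple fun i => cur_comp (Computable.const e₀)
      ((Primrec₂.natPair.comp (Primrec.const (ec i)) Primrec.id).to_comp)), ?_⟩
  intro i n
  have := hHs (fun j => cur e₀ (Nat.pair (ec j) n)) i
  rw [this, hec i]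
  exact (hW i n _).symm

-- 2 → 3
private lemma crit_two_three {s : ℕ} {A : Fin s → Set ℕ}
    (hH : ∃ H : (Fin s → ℕ) → ℕ, Computable H ∧
      ∀ (x : Fin s → ℕ) (i : Fin s), (H x ∈ A i ↔ H x ∈ Wset (x i))) :
    ∃ F : Fin s → (Fin s → ℕ) → ℕ, FunTupleMRed F A ∧
      ∀ (x : Fin s → ℕ) (i : Fin s), Wset (F i x) ≠ Wset (x i) := by
  classical
  obtain ⟨H, hHc, hHs⟩ := hH
  obtain ⟨cnone, hcnone⟩ := Nat.Partrec.Code.exists_code.1 (Partrec.nat_iff.1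
    (Partrec.none (α := ℕ) (σ := ℕ)))
  have hWnone : ∀ y, ¬ (phi (encode cnone) y).Dom := by
    intro y
    rw [phi_ofCode, hcnone]
    exact fun h => h
  have hWzero : ∀ y, (phi (encode Nat.Partrec.Code.zero) y).Dom := by
    intro y
    rw [phi_ofCode]
    trivial
  refine ⟨fun i x => if H x ∈ A i then encode cnone else encode Nat.Partrec.Code.zero,
    ⟨H, fun _ _ => encode cnone, fun _ _ => encode Nat.Partrec.Code.zero,
      hHc, fun _ => Computable.const _, fun _ => Computable.const _, ?_⟩, ?_⟩
  · intro x i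
    exact ⟨fun h => if_pos h, fun h => if_neg h⟩
  · intro x i heq
    by_cases h : H x ∈ A i
    · have h1 : H x ∈ Wset (x i) := (hHs x i).1 h
      simp only [if_pos h] at heq
      rw [← heq] at h1
      exact hWnone _ h1
    · have h1 : H x ∉ Wset (x i) := fun hh => h ((hHs x i).2 hh)
      simp only [if_neg h] at heq
      rw [← heq] at h1
      exact h1 (hWzero _)

-- 3 → 4
private lemma crit_three_four {s : ℕ} {A : Fin s → Set ℕ}
    (h3 : ∃ F : Fin s → (Fin s → ℕ) → ℕ, FunTupleMRed F A ∧
      ∀ (x : Fin s → ℕ) (i : Fin s), Wset (F i x) ≠ Wset (x i)) :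
    ∃ F : Fin s → (Fin s → ℕ) → ℕ, FunTupleMRed F A ∧
      ∀ (x : Fin s → ℕ) (i : Fin s), phi (F i x) ≠ phi (x i) := by
  obtain ⟨F, hred, hne⟩ := h3
  refine ⟨F, hred, fun x i heq => hne x i ?_⟩
  unfold Wset
  rw [heq]

private lemma dom_iff_evaln {u v : ℕ} :
    (phi u v).Dom ↔ ∃ t, (evaln t (Denumerable.ofNat Nat.Partrec.Code u) v).isSome := by
  rw [Part.dom_iff_mem]
  constructor
  · rintro ⟨x, hx⟩
    obtain ⟨k, hk⟩ := evaln_complete.1 hx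
    exact ⟨k, Option.isSome_iff_exists.2 ⟨x, hk⟩⟩
  · rintro ⟨t, ht⟩
    obtain ⟨x, hx⟩ := Option.isSome_iff_exists.1 ht
    exact ⟨x, evaln_complete.2 ⟨t, hx⟩⟩

private def xbf {s : ℕ} (e n : ℕ) : Fin s → ℕ := fun k => cur e (Nat.pair n k)

set_option maxHeartbeats 1000000 in
-- 4 → 1
private lemma crit_four_one {s : ℕ} (hs : 1 ≤ s) {A : Fin s → Set ℕ}
    (hA : ∀ i : Fin s, CE (A i))
    (h4 : ∃ F : Fin s → (Fin s → ℕ) → ℕ, FunTupleMRed F A ∧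
      ∀ (x : Fin s → ℕ) (i : Fin s), phi (F i x) ≠ phi (x i)) :
    MCompleteCE A := by
  classical
  obtain ⟨F, ⟨h, a, b, hh, ha, hb, hFab⟩, hne⟩ := h4
  refine ⟨hA, fun X hX => ?_⟩
  choose ec hec using hX
  choose ac hac using hA
  -- computable ingredients for the self-referential family
  have hnP : Primrec fun p : ℕ × ℕ => p.2.unpair.1.unpair.1 :=
    Primrec.fst.comp (Primrec.unpair.comp (Primrec.fst.comp (Primrec.unpair.comp Primrec.snd)))
  have hjP : Primrec fun p : ℕ × ℕ => p.2.unpair.1.unpair.2 :=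
    Primrec.snd.comp (Primrec.unpair.comp (Primrec.fst.comp (Primrec.unpair.comp Primrec.snd)))
  have hyP : Primrec fun p : ℕ × ℕ => p.2.unpair.2 :=
    Primrec.snd.comp (Primrec.unpair.comp Primrec.snd)
  have hi : Computable fun p : ℕ × ℕ => finmk hs p.2.unpair.1.unpair.2 :=
    (finmk_comp hs).comp hjP.to_comp
  have hxb : Computable fun p : ℕ × ℕ => (xbf p.1 p.2.unpair.1.unpair.1 : Fin s → ℕ) :=
    (computable_tuple fun k =>
      cur_comp Computable.fst ((Primrec₂.natPair.comp hnP (Primrec.const (k : ℕ))).to_comp)).of_eq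
      fun p => rfl
  have hgx : Computable fun p : ℕ × ℕ => h (xbf p.1 p.2.unpair.1.unpair.1 : Fin s → ℕ) :=
    hh.comp hxb
  -- the two evaln tests, as a Computable₂ predicate in ((e,w), t)
  have hcX : Computable fun p : ℕ × ℕ => ec (finmk hs p.2.unpair.1.unpair.2) :=
    computable_app (Computable.const ec) hi
  have hcA : Computable fun p : ℕ × ℕ => ac (finmk hs p.2.unpair.1.unpair.2) :=
    computable_app (Computable.const ac) hi
  have hB1 : Computable fun q : (ℕ × ℕ) × ℕ =>
      (evaln q.2 (Denumerable.ofNat Nat.Partrec.Code (ec (finmk hs q.1.2.unpair.1.unpair.2)))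
        q.1.2.unpair.1.unpair.1).isSome :=
    Primrec.option_isSome.to_comp.comp
      (Nat.Partrec.Code.primrec_evaln.to_comp.comp
        ((Computable.snd.pair (((Computable.ofNat _).comp hcX).comp Computable.fst)).pair
          (hnP.to_comp.comp Computable.fst)))
  have hB2 : Computable fun q : (ℕ × ℕ) × ℕ =>
      (evaln q.2 (Denumerable.ofNat Nat.Partrec.Code (ac (finmk hs q.1.2.unpair.1.unpair.2)))
        (h (xbf q.1.1 q.1.2.unpair.1.unpair.1 : Fin s → ℕ))).isSome :=
    Primrec.option_isSome.to_comp.comp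
      (Nat.Partrec.Code.primrec_evaln.to_comp.comp
        ((Computable.snd.pair (((Computable.ofNat _).comp hcA).comp Computable.fst)).pair
          (hgx.comp Computable.fst)))
  have hOr : Computable fun q : (ℕ × ℕ) × ℕ =>
      ((evaln q.2 (Denumerable.ofNat Nat.Partrec.Code (ec (finmk hs q.1.2.unpair.1.unpair.2)))
          q.1.2.unpair.1.unpair.1).isSome ||
       (evaln q.2 (Denumerable.ofNat Nat.Partrec.Code (ac (finmk hs q.1.2.unpair.1.unpair.2)))
          (h (xbf q.1.1 q.1.2.unpair.1.unpair.1 : Fin s → ℕ))).isSome) :=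
    Primrec.or.to_comp.comp hB1 hB2
  have hbix : Computable fun p : ℕ × ℕ =>
      b (finmk hs p.2.unpair.1.unpair.2) (xbf p.1 p.2.unpair.1.unpair.1 : Fin s → ℕ) :=
    computable_app (computable_tuple fun k => (hb k).comp hxb) hi
  have haix : Computable fun p : ℕ × ℕ =>
      a (finmk hs p.2.unpair.1.unpair.2) (xbf p.1 p.2.unpair.1.unpair.1 : Fin s → ℕ) :=
    computable_app (computable_tuple fun k => (ha k).comp hxb) hi
  have hsel : Computable fun q : (ℕ × ℕ) × ℕ =>
      (if (evaln q.2 (Denumerable.ofNat Nat.Partrec.Code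
            (ec (finmk hs q.1.2.unpair.1.unpair.2))) q.1.2.unpair.1.unpair.1).isSome
       then b (finmk hs q.1.2.unpair.1.unpair.2) (xbf q.1.1 q.1.2.unpair.1.unpair.1 : Fin s → ℕ)
       else a (finmk hs q.1.2.unpair.1.unpair.2)
         (xbf q.1.1 q.1.2.unpair.1.unpair.1 : Fin s → ℕ)) := by
    have := Computable.cond hB1 (hbix.comp Computable.fst) (haix.comp Computable.fst)
    exact this.of_eq fun q => by cases hq : (evaln q.2 (Denumerable.ofNat Nat.Partrec.Code
      (ec (finmk hs q.1.2.unpair.1.unpair.2))) q.1.2.unpair.1.unpair.1).isSome <;> simp [hq]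
  have hq : Partrec₂ (fun e w =>
      (Nat.rfind fun t => Part.some
        ((evaln t (Denumerable.ofNat Nat.Partrec.Code (ec (finmk hs w.unpair.1.unpair.2)))
            w.unpair.1.unpair.1).isSome ||
         (evaln t (Denumerable.ofNat Nat.Partrec.Code (ac (finmk hs w.unpair.1.unpair.2)))
            (h (xbf e w.unpair.1.unpair.1 : Fin s → ℕ))).isSome)).bind fun t =>
        phi (if (evaln t (Denumerable.ofNat Nat.Partrec.Code (ec (finmk hs w.unpair.1.unpair.2)))
                  w.unpair.1.unpair.1).isSome
             then b (finmk hs w.unpair.1.unpair.2) (xbf e w.unpair.1.unpair.1 : Fin s → ℕ)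
             else a (finmk hs w.unpair.1.unpair.2) (xbf e w.unpair.1.unpair.1 : Fin s → ℕ))
          w.unpair.2 : ℕ → ℕ →. ℕ) := by
    have hrf : Partrec fun p : ℕ × ℕ => Nat.rfind fun t => (Part.some
        ((evaln t (Denumerable.ofNat Nat.Partrec.Code
            (ec (finmk hs p.2.unpair.1.unpair.2))) p.2.unpair.1.unpair.1).isSome ||
         (evaln t (Denumerable.ofNat Nat.Partrec.Code
            (ac (finmk hs p.2.unpair.1.unpair.2)))
            (h (xbf p.1 p.2.unpair.1.unpair.1 : Fin s → ℕ))).isSome) : Part Bool) :=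
      Partrec.rfind hOr.partrec.to₂
    exact (hrf.bind ((partrec_phi hsel (hyP.to_comp.comp Computable.fst)).to₂))
  obtain ⟨e, he⟩ := rec_thm hq
  -- the reduction
  refine ⟨fun n => h (xbf e n : Fin s → ℕ),
    hh.comp ((computable_tuple fun k => cur_comp (Computable.const e)
      ((Primrec₂.natPair.comp Primrec.id (Primrec.const (k : ℕ))).to_comp)).of_eq
        fun n => rfl), ?_⟩
  intro i n
  set xb : Fin s → ℕ := (xbf e n : Fin s → ℕ) with hxbdef
  set gn : ℕ := h xb with hgn
  have heval : ∀ y : ℕ, phi (xb i) y =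
      (Nat.rfind fun t => Part.some
        ((evaln t (Denumerable.ofNat Nat.Partrec.Code (ec i)) n).isSome ||
         (evaln t (Denumerable.ofNat Nat.Partrec.Code (ac i)) gn).isSome)).bind fun t =>
        phi (if (evaln t (Denumerable.ofNat Nat.Partrec.Code (ec i)) n).isSome
             then b i xb else a i xb) y := by
    intro y
    have := he (Nat.pair (Nat.pair n (i : ℕ)) y)
    rw [show phi (xb i) y = phi e (Nat.pair (Nat.pair n (i : ℕ)) y) from by
      rw [hxbdef]; show phi (cur e (Nat.pair n (i : ℕ))) y = _; rw [phi_cur], this]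
    simp [Nat.unpair_pair, finmk_self hs, hxbdef, xbf, hgn]
  -- membership characterizations
  have memX : n ∈ X i ↔ (phi (ec i) n).Dom := by rw [hec i]; exact Iff.rfl
  have memA : gn ∈ A i ↔ (phi (ac i) gn).Dom := by rw [hac i]; exact Iff.rfl
  constructor
  · intro hn
    by_contra hAn
    have h2 : ∀ t, (evaln t (Denumerable.ofNat Nat.Partrec.Code (ac i)) gn).isSome = false := by
      intro t
      cases hx : (evaln t (Denumerable.ofNat Nat.Partrec.Code (ac i)) gn).isSome
      · rfl
      · exact absurd (memA.2 (dom_iff_evaln.2 ⟨t, hx⟩)) hAn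
    obtain ⟨t0, ht0⟩ := dom_iff_evaln.1 (memX.1 hn)
    have hdom : (Nat.rfind fun t => (Part.some
        ((evaln t (Denumerable.ofNat Nat.Partrec.Code (ec i)) n).isSome ||
         (evaln t (Denumerable.ofNat Nat.Partrec.Code (ac i)) gn).isSome) : Part Bool)).Dom := by
      refine Nat.rfind_dom.2 ?_
      exact ⟨t0, by simp [ht0], fun _ => trivial⟩
    obtain ⟨ts, hts⟩ := Part.dom_iff_mem.1 hdom
    have htrue := Nat.rfind_spec hts
    rw [Part.mem_some_iff] at htrue
    have hX : (evaln ts (Denumerable.ofNat Nat.Partrec.Code (ec i)) n).isSome = true := by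
      cases hx : (evaln ts (Denumerable.ofNat Nat.Partrec.Code (ec i)) n).isSome
      · rw [hx, h2 ts] at htrue; simp at htrue
      · rfl
    have hphieq : phi (xb i) = phi (b i xb) := by
      funext y
      rw [heval y, Part.eq_some_iff.2 hts, Part.bind_some, if_pos hX]
    have hFb : F i xb = b i xb := (hFab xb i).2 (by rw [← hgn]; exact hAn)
    exact hne xb i (by rw [hFb, hphieq])
  · intro hAn
    by_contra hn
    have h1 : ∀ t, (evaln t (Denumerable.ofNat Nat.Partrec.Code (ec i)) n).isSome = false := by
      intro t
      cases hx : (evaln t (Denumerable.ofNat Nat.Partrec.Code (ec i)) n).isSome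
      · rfl
      · exact absurd (memX.2 (dom_iff_evaln.2 ⟨t, hx⟩)) hn
    obtain ⟨t0, ht0⟩ := dom_iff_evaln.1 (memA.1 hAn)
    have hdom : (Nat.rfind fun t => (Part.some
        ((evaln t (Denumerable.ofNat Nat.Partrec.Code (ec i)) n).isSome ||
         (evaln t (Denumerable.ofNat Nat.Partrec.Code (ac i)) gn).isSome) : Part Bool)).Dom := by
      refine Nat.rfind_dom.2 ?_
      exact ⟨t0, by simp [ht0], fun _ => trivial⟩
    obtain ⟨ts, hts⟩ := Part.dom_iff_mem.1 hdom
    have hphieq : phi (xb i) = phi (a i xb) := by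
      funext y
      rw [heval y, Part.eq_some_iff.2 hts, Part.bind_some, if_neg (by simp [h1 ts])]
    have hFa : F i xb = a i xb := (hFab xb i).1 (by rw [← hgn]; exact hAn)
    exact hne xb i (by rw [hFa, hphieq])

/-- Criterion of m-completeness for `s`-tuples of c.e. sets: m-completeness is
equivalent to the existence of a productive function `H`, and to the existence of an
m-reducible tuple of functions `(F₀,…,F_{s−1})` with `W_{F_i(x̄)} ≠ W_{x_i}`
(respectively `φ_{F_i(x̄)} ≠ φ_{x_i}`). -/
theorem mComplete_ce_criterion {s : ℕ} (hs : 1 ≤ s) (A : Fin s → Set ℕ)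
    (hA : ∀ i : Fin s, CE (A i)) :
    (MCompleteCE A ↔
      ∃ H : (Fin s → ℕ) → ℕ, Computable H ∧
        ∀ (x : Fin s → ℕ) (i : Fin s), (H x ∈ A i ↔ H x ∈ Wset (x i))) ∧
    (MCompleteCE A ↔
      ∃ F : Fin s → (Fin s → ℕ) → ℕ, FunTupleMRed F A ∧
        ∀ (x : Fin s → ℕ) (i : Fin s), Wset (F i x) ≠ Wset (x i)) ∧
    (MCompleteCE A ↔
      ∃ F : Fin s → (Fin s → ℕ) → ℕ, FunTupleMRed F A ∧
        ∀ (x : Fin s → ℕ) (i : Fin s), phi (F i x) ≠ phi (x i)) := by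
  refine ⟨⟨fun h1 => crit_one_two hs h1, fun h2 => crit_two_one hA h2⟩,
    ⟨fun h1 => crit_two_three (crit_one_two hs h1),
     fun h3 => crit_four_one hs hA (crit_three_four h3)⟩,
    ⟨fun h1 => crit_three_four (crit_two_three (crit_one_two hs h1)),
     fun h4 => crit_four_one hs hA h4⟩⟩
end

section
/- Let s ≥ 1 and let (A₀,…,A_{s−1}) be an s-tuple of Σ⁰₂ subsets of ℕ. Suppose there is an s-tuple of functions (F₀,…,F_{s−1}) with (F₀,…,F_{s−1}) ≤_m (A₀,…,A_{s−1}) and such that for all x̄ = (x₀,…,x_{s−1}) and all i < s, φ_{F_i(x̄)} is not almost equal to φ_{x_i}. Then (A₀,…,A_{s−1}) is m-complete in the class of s-tuples of Σ⁰₂ subsets of ℕ. -/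
/-- The graph of a partial function `ℕ →. ℕ` as a subset of `ℕ × ℕ`. -/
def pgraph (f : ℕ →. ℕ) : Set (ℕ × ℕ) := {p : ℕ × ℕ | p.2 ∈ f p.1}

/-- Two partial functions are almost equal if the symmetric difference of their graphs
is finite. -/
def AlmostEqPart (f g : ℕ →. ℕ) : Prop :=
  ((pgraph f \ pgraph g) ∪ (pgraph g \ pgraph f)).Finite

namespace MCompleteAux

open Nat.Partrec (Code)
open Nat.Partrec.Code
open List (Vector)

/-! ### A monotone counter for Σ⁰₂ approximations -/

/-- `allb R n a t` decides whether `R (n, a, b)` holds for all `b ≤ t`. -/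
def allb (R : ℕ × ℕ × ℕ → Bool) (n a : ℕ) : ℕ → Bool := fun t =>
  Nat.rec (R (n, a, 0)) (fun y IH => IH && R (n, a, y + 1)) t

@[simp] theorem allb_zero (R n a) : allb R n a 0 = R (n, a, 0) := rfl

@[simp] theorem allb_succ (R n a t) :
    allb R n a (t + 1) = (allb R n a t && R (n, a, t + 1)) := rfl

theorem allb_iff {R : ℕ × ℕ × ℕ → Bool} {n a : ℕ} : ∀ {t : ℕ},
    allb R n a t = true ↔ ∀ b ≤ t, R (n, a, b) = true := by
  intro t
  induction t with
  | zero =>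
    simp only [allb_zero]
    constructor
    · intro h b hb; interval_cases b; exact h
    · intro h; exact h 0 le_rfl
  | succ t ih =>
    simp only [allb_succ, Bool.and_eq_true, ih]
    constructor
    · rintro ⟨h1, h2⟩ b hb
      rcases Nat.lt_succ_iff_lt_or_eq.mp (Nat.lt_succ_of_le hb) with hb' | hb'
      · exact h1 b (Nat.lt_succ_iff.mp hb')
      · exact hb' ▸ h2
    · intro h
      exact ⟨fun b hb => h b (hb.trans (Nat.le_succ t)), h (t + 1) le_rfl⟩

/-- `dseg R n t k` is the length of the maximal initial segment of `[0..k]` consisting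
of `a`'s that are "dead" at time `t` (i.e. failing `allb R n a t`); equivalently the
least `a ≤ k` alive at time `t`, or `k+1` if there is none. -/
def dseg (R : ℕ × ℕ × ℕ → Bool) (n t : ℕ) : ℕ → ℕ := fun k =>
  Nat.rec (cond (allb R n 0 t) 0 1)
    (fun y IH => if IH = y + 1 then cond (allb R n (y + 1) t) (y + 1) (y + 2) else IH) k

@[simp] theorem dseg_zero (R n t) : dseg R n t 0 = cond (allb R n 0 t) 0 1 := rfl

@[simp] theorem dseg_succ (R n t k) :
    dseg R n t (k + 1) =
      if dseg R n t k = k + 1 then cond (allb R n (k + 1) t) (k + 1) (k + 2)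
      else dseg R n t k := rfl

theorem dseg_le (R n t) : ∀ k, dseg R n t k ≤ k + 1 := by
  intro k
  induction k with
  | zero => cases h : allb R n 0 t <;> simp [h]
  | succ k ih =>
    rw [dseg_succ]
    split
    · cases h : allb R n (k + 1) t <;> simp [h]
    · omega

theorem dseg_mono (R n t) : ∀ {k k'}, k ≤ k' → dseg R n t k ≤ dseg R n t k' := by
  intro k k' h
  induction k' with
  | zero => rw [Nat.le_zero.mp h]
  | succ k' ih =>
    rcases Nat.le_succ_iff.mp h with h' | h'
    · refine (ih h').trans ?_
      rw [dseg_succ]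
      split
      · cases hb : allb R n (k' + 1) t <;> simp_all
      · exact le_rfl
    · rw [h']

theorem dseg_alive {R n t a} (ha : allb R n a t = true) :
    ∀ k, a ≤ k → dseg R n t k ≤ a := by
  intro k
  induction k with
  | zero =>
    intro hk
    have : a = 0 := Nat.le_zero.mp hk
    subst this
    simp [ha]
  | succ k ih =>
    intro hk
    rcases Nat.le_succ_iff.mp hk with h' | h'
    · have h1 : dseg R n t k ≤ a := ih h'
      rw [dseg_succ]
      split
      · omega
      · exact h1
    · subst h'
      rw [dseg_succ]
      split
      · simp [ha]
      · exact (dseg_le R n t k).trans (by omega)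

theorem dseg_dead {R n t} : ∀ k, (∀ a ≤ k, allb R n a t = false) → dseg R n t k = k + 1 := by
  intro k
  induction k with
  | zero =>
    intro h
    simp [h 0 le_rfl]
  | succ k ih =>
    intro h
    have h1 : dseg R n t k = k + 1 := ih fun a hak => h a (hak.trans (Nat.le_succ k))
    rw [dseg_succ, if_pos h1, h (k + 1) le_rfl]
    rfl

/-- The monotone counter: least `a ≤ t` which looks like a witness up to time `t`,
and `t+1` if there is none. -/
def mcount (R : ℕ × ℕ × ℕ → Bool) (n t : ℕ) : ℕ := dseg R n t t

theorem mcount_le_of_witness {R : ℕ × ℕ × ℕ → Bool} {n a₀ : ℕ}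
    (hw : ∀ b, R (n, a₀, b) = true) (t : ℕ) : mcount R n t ≤ a₀ := by
  rcases le_or_gt a₀ t with h | h
  · exact dseg_alive (allb_iff.mpr fun b _ => hw b) t h
  · exact (dseg_le R n t t).trans h

theorem mcount_big {R : ℕ × ℕ × ℕ → Bool} {n : ℕ}
    (hw : ∀ a, ∃ b, R (n, a, b) = false) (B : ℕ) :
    ∃ t₀, ∀ t, t₀ ≤ t → B < mcount R n t := by
  choose f hf using hw
  refine ⟨max B ((Finset.range (B + 1)).sup f), fun t ht => ?_⟩
  have hBt : B ≤ t := le_trans (le_max_left _ _) ht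
  have hdead : ∀ a ≤ B, allb R n a t = false := by
    intro a haB
    cases hba : allb R n a t
    · rfl
    · exfalso
      have hfa : f a ≤ t := by
        refine le_trans ?_ (le_trans (le_max_right B _) ht)
        exact Finset.le_sup (Finset.mem_range.mpr (Nat.lt_succ_of_le haB))
      have := allb_iff.mp hba (f a) hfa
      rw [hf a] at this
      exact Bool.false_ne_true this
  have h1 : dseg R n t B = B + 1 := dseg_dead B hdead
  have h2 : dseg R n t B ≤ dseg R n t t := dseg_mono R n t hBt
  have : B + 1 ≤ mcount R n t := by rw [← h1]; exact h2
  omega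

/-! ### Computability of the counter -/

set_option maxHeartbeats 1000000 in
theorem allb_computable {R : ℕ × ℕ × ℕ → Bool} (hR : Computable R) :
    Computable fun q : (ℕ × ℕ) × ℕ => allb R q.1.1 q.1.2 q.2 := by
  have hg : Computable fun q : (ℕ × ℕ) × ℕ => R (q.1.1, q.1.2, 0) :=
    hR.comp ((Computable.fst.comp Computable.fst).pair
      ((Computable.snd.comp Computable.fst).pair (Computable.const 0)))
  have hband : Computable₂ (fun x y : Bool => x && y) := (Primrec.dom_bool₂ _).to_comp
  have hR' : Computable fun p : ((ℕ × ℕ) × ℕ) × ℕ × Bool => R (p.1.1.1, p.1.1.2, p.2.1 + 1) :=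
    hR.comp (((Computable.fst.comp Computable.fst).comp Computable.fst).pair
        (((Computable.snd.comp Computable.fst).comp Computable.fst).pair
          (Computable.succ.comp (Computable.fst.comp Computable.snd))))
  have hh : Computable₂ fun (q : (ℕ × ℕ) × ℕ) (y : ℕ × Bool) =>
      (y.2 && R (q.1.1, q.1.2, y.1 + 1)) :=
    (hband.comp (Computable.snd.comp Computable.snd) hR').to₂
  exact (Computable.nat_rec Computable.snd hg hh).of_eq fun q => rfl

set_option maxHeartbeats 1000000 in
theorem dseg_computable {R : ℕ × ℕ × ℕ → Bool} (hR : Computable R) :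
    Computable fun q : (ℕ × ℕ) × ℕ => dseg R q.1.1 q.1.2 q.2 := by
  have hA := allb_computable hR
  have hproj0 : Computable fun q : (ℕ × ℕ) × ℕ => (((q.1.1, 0), q.1.2) : (ℕ × ℕ) × ℕ) :=
    ((Computable.fst.comp Computable.fst).pair (Computable.const 0)).pair
      (Computable.snd.comp Computable.fst)
  have ha0 : Computable fun q : (ℕ × ℕ) × ℕ => allb R q.1.1 0 q.1.2 :=
    (hA.comp hproj0).of_eq fun _ => rfl
  have hg : Computable fun q : (ℕ × ℕ) × ℕ => cond (allb R q.1.1 0 q.1.2) 0 1 :=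
    (Computable.cond ha0 (Computable.const 0) (Computable.const 1)).of_eq fun _ => rfl
  have hc : Computable fun p : ((ℕ × ℕ) × ℕ) × ℕ × ℕ => decide (p.2.2 = p.2.1 + 1) :=
    (Primrec.eq.decide.to_comp).comp (Computable.snd.comp Computable.snd)
      (Computable.succ.comp (Computable.fst.comp Computable.snd))
  have hproj1 : Computable fun p : ((ℕ × ℕ) × ℕ) × ℕ × ℕ =>
      (((p.1.1.1, p.2.1 + 1), p.1.1.2) : (ℕ × ℕ) × ℕ) :=
    (((Computable.fst.comp Computable.fst).comp Computable.fst).pair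
      (Computable.succ.comp (Computable.fst.comp Computable.snd))).pair
      ((Computable.snd.comp Computable.fst).comp Computable.fst)
  have halive : Computable fun p : ((ℕ × ℕ) × ℕ) × ℕ × ℕ =>
      allb R p.1.1.1 (p.2.1 + 1) p.1.1.2 :=
    (hA.comp hproj1).of_eq fun _ => rfl
  have htrue : Computable fun p : ((ℕ × ℕ) × ℕ) × ℕ × ℕ =>
      cond (allb R p.1.1.1 (p.2.1 + 1) p.1.1.2) (p.2.1 + 1) (p.2.1 + 2) :=
    (Computable.cond halive (Computable.succ.comp (Computable.fst.comp Computable.snd))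
      (Computable.succ.comp
        (Computable.succ.comp (Computable.fst.comp Computable.snd)))).of_eq fun _ => rfl
  have hcc : Computable fun p : ((ℕ × ℕ) × ℕ) × ℕ × ℕ =>
      cond (decide (p.2.2 = p.2.1 + 1))
        (cond (allb R p.1.1.1 (p.2.1 + 1) p.1.1.2) (p.2.1 + 1) (p.2.1 + 2)) p.2.2 :=
    (Computable.cond hc htrue (Computable.snd.comp Computable.snd)).of_eq fun _ => rfl
  have hh : Computable₂ fun (q : (ℕ × ℕ) × ℕ) (y : ℕ × ℕ) =>
      if y.2 = y.1 + 1 then cond (allb R q.1.1 (y.1 + 1) q.1.2) (y.1 + 1) (y.1 + 2)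
      else y.2 :=
    (hcc.of_eq fun p => Bool.cond_decide _ _ _).to₂
  exact (Computable.nat_rec Computable.snd hg hh).of_eq fun q => rfl

theorem mcount_computable {R : ℕ × ℕ × ℕ → Bool} (hR : Computable R) :
    Computable₂ (mcount R) := by
  have hproj : Computable fun p : ℕ × ℕ => (((p.1, p.2), p.2) : (ℕ × ℕ) × ℕ) :=
    (Computable.fst.pair Computable.snd).pair Computable.snd
  exact (((dseg_computable hR).comp hproj).of_eq fun _ => rfl).to₂

/-! ### Almost equality from eventual agreement -/

theorem part_fiber_finite (f : ℕ →. ℕ) (m : ℕ) : ({v : ℕ | v ∈ f m}).Finite :=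
  Set.Subsingleton.finite fun _ hx _ hy => Part.mem_unique hx hy

theorem almostEq_of_eventually {f g : ℕ →. ℕ} (t₀ : ℕ)
    (H : ∀ m, t₀ ≤ m → f m = g m) : AlmostEqPart f g := by
  have hsub : ((pgraph f \ pgraph g) ∪ (pgraph g \ pgraph f)) ⊆
      ⋃ m ∈ Set.Iio t₀, (fun v => (m, v)) '' ({v | v ∈ f m} ∪ {v | v ∈ g m}) := by
    rintro ⟨m, v⟩ hp
    have hm : m < t₀ := by
      by_contra hm
      push_neg at hm
      have := H m hm
      rcases hp with ⟨h1, h2⟩ | ⟨h1, h2⟩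
      · exact h2 (show v ∈ g m from this ▸ h1)
      · exact h2 (show v ∈ f m from this ▸ h1)
    refine Set.mem_biUnion hm ?_
    rcases hp with ⟨h1, _⟩ | ⟨h1, _⟩
    · exact ⟨v, Or.inl h1, rfl⟩
    · exact ⟨v, Or.inr h1, rfl⟩
  refine Set.Finite.subset ?_ hsub
  refine Set.Finite.biUnion (Set.finite_Iio t₀) fun m _ => ?_
  exact Set.Finite.image _ ((part_fiber_finite f m).union (part_fiber_finite g m))

/-! ### The fixed-point construction -/

section Construction

variable {s : ℕ}

/-- The indices of the fixed-point tuple: `xof s c n i` is (the numeral of) the code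
computing `m ↦ eval c ⟨n, ⟨i, m⟩⟩`. -/
def xof (s : ℕ) (c : Code) (n : ℕ) : Fin s → ℕ := fun j =>
  Encodable.encode (curry (curry c n) (j : ℕ))

/-- The index selector: given the Σ⁰₂ data and the reduction data, decide (at input
`⟨n,⟨i,m⟩⟩`, with current code `c`) whether to copy `φ_{b_i(x̄)}` or `φ_{a_i(x̄)}` at `m`. -/
def selF (s : ℕ) (hs : 0 < s) (RA RX : Fin s → ℕ × ℕ × ℕ → Bool)
    (h : (Fin s → ℕ) → ℕ) (a b : Fin s → (Fin s → ℕ) → ℕ) : Code × ℕ → ℕ := fun p =>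
  cond (decide
      (mcount (RX ⟨p.2.unpair.2.unpair.1 % s, Nat.mod_lt _ hs⟩)
          (p.2.unpair.1) (p.2.unpair.2.unpair.2) ≤
        mcount (RA ⟨p.2.unpair.2.unpair.1 % s, Nat.mod_lt _ hs⟩)
          (h (xof s p.1 p.2.unpair.1)) (p.2.unpair.2.unpair.2)))
    (b ⟨p.2.unpair.2.unpair.1 % s, Nat.mod_lt _ hs⟩ (xof s p.1 p.2.unpair.1))
    (a ⟨p.2.unpair.2.unpair.1 % s, Nat.mod_lt _ hs⟩ (xof s p.1 p.2.unpair.1))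

theorem xof_computable (s : ℕ) :
    Computable fun p : Code × ℕ => xof s p.1 p.2.unpair.1 := by
  have hp2 : Primrec₂ fun (p : Code × ℕ) (j : Fin s) =>
      Encodable.encode (curry (curry p.1 p.2.unpair.1) (j : ℕ)) :=
    Primrec.encode.comp (primrec₂_curry.comp
      (primrec₂_curry.comp (Primrec.fst.comp Primrec.fst)
        (Primrec.fst.comp (Primrec.unpair.comp (Primrec.snd.comp Primrec.fst))))
      (Primrec.fin_val.comp Primrec.snd))
  exact ((Primrec.fin_curry (f := fun p : Code × ℕ => xof s p.1 p.2.unpair.1)).mpr hp2).to_comp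

theorem selF_computable (s : ℕ) (hs : 0 < s) (RA RX : Fin s → ℕ × ℕ × ℕ → Bool)
    (h : (Fin s → ℕ) → ℕ) (a b : Fin s → (Fin s → ℕ) → ℕ)
    (hRA : ∀ i, Computable (RA i)) (hRX : ∀ i, Computable (RX i))
    (hh : Computable h) (ha : ∀ i, Computable (a i)) (hb : ∀ i, Computable (b i)) :
    Computable (selF s hs RA RX h a b) := by
  -- basic projections
  have hn : Computable fun p : Code × ℕ => p.2.unpair.1 :=
    Computable.fst.comp (Computable.unpair.comp Computable.snd)
  have hm : Computable fun p : Code × ℕ => p.2.unpair.2.unpair.2 :=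
    Computable.snd.comp (Computable.unpair.comp
      (Computable.snd.comp (Computable.unpair.comp Computable.snd)))
  have hi : Computable fun p : Code × ℕ =>
      (⟨p.2.unpair.2.unpair.1 % s, Nat.mod_lt _ hs⟩ : Fin s) := by
    have : Primrec fun p : Code × ℕ => p.2.unpair.2.unpair.1 % s :=
      Primrec.nat_mod.comp
        (Primrec.fst.comp (Primrec.unpair.comp
          (Primrec.snd.comp (Primrec.unpair.comp Primrec.snd))))
        (Primrec.const s)
    exact (Primrec.fin_val_iff.mp this).to_comp
  have hx : Computable fun p : Code × ℕ => xof s p.1 p.2.unpair.1 := xof_computable s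
  -- the two mcount streams
  have hmX : Computable fun p : Code × ℕ =>
      mcount (RX ⟨p.2.unpair.2.unpair.1 % s, Nat.mod_lt _ hs⟩)
        (p.2.unpair.1) (p.2.unpair.2.unpair.2) := by
    have hv : Computable fun p : Code × ℕ =>
        List.Vector.ofFn fun i : Fin s => mcount (RX i) (p.2.unpair.1) (p.2.unpair.2.unpair.2) :=
      Computable.vector_ofFn fun i => (mcount_computable (hRX i)).comp hn hm
    exact (Computable.vector_get.comp hv hi).of_eq fun p => by
      simp [List.Vector.get_ofFn]
  have hmA : Computable fun p : Code × ℕ =>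
      mcount (RA ⟨p.2.unpair.2.unpair.1 % s, Nat.mod_lt _ hs⟩)
        (h (xof s p.1 p.2.unpair.1)) (p.2.unpair.2.unpair.2) := by
    have hv : Computable fun p : Code × ℕ =>
        List.Vector.ofFn fun i : Fin s =>
          mcount (RA i) (h (xof s p.1 p.2.unpair.1)) (p.2.unpair.2.unpair.2) :=
      Computable.vector_ofFn fun i => (mcount_computable (hRA i)).comp (hh.comp hx) hm
    exact (Computable.vector_get.comp hv hi).of_eq fun p => by
      simp [List.Vector.get_ofFn]
  have hcond : Computable fun p : Code × ℕ =>
      decide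
        (mcount (RX ⟨p.2.unpair.2.unpair.1 % s, Nat.mod_lt _ hs⟩)
            (p.2.unpair.1) (p.2.unpair.2.unpair.2) ≤
          mcount (RA ⟨p.2.unpair.2.unpair.1 % s, Nat.mod_lt _ hs⟩)
            (h (xof s p.1 p.2.unpair.1)) (p.2.unpair.2.unpair.2)) :=
    (Primrec.nat_le.decide.to_comp).comp hmX hmA
  have hbv : Computable fun p : Code × ℕ =>
      b ⟨p.2.unpair.2.unpair.1 % s, Nat.mod_lt _ hs⟩ (xof s p.1 p.2.unpair.1) := by
    have hv : Computable fun p : Code × ℕ =>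
        List.Vector.ofFn fun i : Fin s => b i (xof s p.1 p.2.unpair.1) :=
      Computable.vector_ofFn fun i => (hb i).comp hx
    exact (Computable.vector_get.comp hv hi).of_eq fun p => by
      simp [List.Vector.get_ofFn]
  have hav : Computable fun p : Code × ℕ =>
      a ⟨p.2.unpair.2.unpair.1 % s, Nat.mod_lt _ hs⟩ (xof s p.1 p.2.unpair.1) := by
    have hv : Computable fun p : Code × ℕ =>
        List.Vector.ofFn fun i : Fin s => a i (xof s p.1 p.2.unpair.1) :=
      Computable.vector_ofFn fun i => (ha i).comp hx
    exact (Computable.vector_get.comp hv hi).of_eq fun p => by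
      simp [List.Vector.get_ofFn]
  exact Computable.cond hcond hbv hav

/-- The master partial function for the recursion theorem. -/
def funF (s : ℕ) (hs : 0 < s) (RA RX : Fin s → ℕ × ℕ × ℕ → Bool)
    (h : (Fin s → ℕ) → ℕ) (a b : Fin s → (Fin s → ℕ) → ℕ) : Code → ℕ →. ℕ := fun c N =>
  phi (selF s hs RA RX h a b (c, N)) (N.unpair.2.unpair.2)

theorem funF_partrec (s : ℕ) (hs : 0 < s) (RA RX : Fin s → ℕ × ℕ × ℕ → Bool)
    (h : (Fin s → ℕ) → ℕ) (a b : Fin s → (Fin s → ℕ) → ℕ)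
    (hRA : ∀ i, Computable (RA i)) (hRX : ∀ i, Computable (RX i))
    (hh : Computable h) (ha : ∀ i, Computable (a i)) (hb : ∀ i, Computable (b i)) :
    Partrec₂ (funF s hs RA RX h a b) := by
  have hm : Computable fun p : Code × ℕ => p.2.unpair.2.unpair.2 :=
    Computable.snd.comp (Computable.unpair.comp
      (Computable.snd.comp (Computable.unpair.comp Computable.snd)))
  have hsel : Computable fun p : Code × ℕ =>
      Denumerable.ofNat Code (selF s hs RA RX h a b p) :=
    (Computable.ofNat Code).comp (selF_computable s hs RA RX h a b hRA hRX hh ha hb)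
  exact (eval_part.comp hsel hm).of_eq fun p => rfl

/-- The key construction: a uniform m-reduction. -/
theorem key {s : ℕ} (hs : 0 < s) (A X : Fin s → Set ℕ)
    (RA RX : Fin s → ℕ × ℕ × ℕ → Bool)
    (hRAc : ∀ i, Computable (RA i))
    (hRAs : ∀ i, A i = {n : ℕ | ∃ a : ℕ, ∀ b : ℕ, RA i (n, a, b) = true})
    (hRXc : ∀ i, Computable (RX i))
    (hRXs : ∀ i, X i = {n : ℕ | ∃ a : ℕ, ∀ b : ℕ, RX i (n, a, b) = true})
    (F : Fin s → (Fin s → ℕ) → ℕ) (h : (Fin s → ℕ) → ℕ)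
    (a b : Fin s → (Fin s → ℕ) → ℕ)
    (hh : Computable h) (ha : ∀ i, Computable (a i)) (hb : ∀ i, Computable (b i))
    (hFab : ∀ (x : Fin s → ℕ) (i : Fin s),
      (h x ∈ A i → F i x = a i x) ∧ (h x ∉ A i → F i x = b i x))
    (hne : ∀ (x : Fin s → ℕ) (i : Fin s), ¬ AlmostEqPart (phi (F i x)) (phi (x i))) :
    ∃ g : ℕ → ℕ, Computable g ∧ ∀ (i : Fin s) (n : ℕ), n ∈ X i ↔ g n ∈ A i := by
  obtain ⟨c, hc⟩ := fixed_point₂ (funF_partrec s hs RA RX h a b hRAc hRXc hh ha hb)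
  -- the fixed-point tuple
  set xb : ℕ → Fin s → ℕ := fun n => xof s c n with hxb
  have hxbc : Computable xb := by
    have hp2 : Primrec₂ fun (n : ℕ) (j : Fin s) =>
        Encodable.encode (curry (curry c n) (j : ℕ)) :=
      Primrec.encode.comp (primrec₂_curry.comp
        (primrec₂_curry.comp (Primrec.const c) Primrec.fst)
        (Primrec.fin_val.comp Primrec.snd))
    exact ((Primrec.fin_curry (f := xb)).mpr hp2).to_comp
  -- main equation
  have main_eq : ∀ (n : ℕ) (i : Fin s) (m : ℕ),
      phi (xb n i) m =
        cond (decide (mcount (RX i) n m ≤ mcount (RA i) (h (xb n)) m))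
          (phi (b i (xb n)) m) (phi (a i (xb n)) m) := by
    intro n i m
    have h1 : phi (xb n i) m = eval c (Nat.pair n (Nat.pair (i : ℕ) m)) := by
      show eval (Denumerable.ofNat Code (Encodable.encode (curry (curry c n) (i : ℕ)))) m = _
      rw [Denumerable.ofNat_encode, eval_curry, eval_curry]
    rw [h1, hc]
    show phi (selF s hs RA RX h a b (c, Nat.pair n (Nat.pair (i : ℕ) m)))
        ((Nat.pair n (Nat.pair (i : ℕ) m)).unpair.2.unpair.2) = _
    have hival : ((⟨(i : ℕ) % s, Nat.mod_lt _ hs⟩ : Fin s)) = i := by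
      apply Fin.ext
      simp [Nat.mod_eq_of_lt i.isLt]
    simp only [selF, Nat.unpair_pair]
    rw [hival]
    cases hd : decide (mcount (RX i) n m ≤ mcount (RA i) (h (xof s c n)) m) <;> simp [hxb]
  refine ⟨fun n => h (xb n), hh.comp hxbc, fun i n => ?_⟩
  constructor
  · -- n ∈ X i → h (xb n) ∈ A i
    intro hnX
    by_contra hnA
    -- X-counter is bounded
    have hXw : ∃ a₀ : ℕ, ∀ b₀ : ℕ, RX i (n, a₀, b₀) = true := by
      rw [hRXs i] at hnX; exact hnX
    obtain ⟨a₀, ha₀⟩ := hXw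
    -- A-counter is unbounded
    have hAw : ∀ a', ∃ b', RA i (h (xb n), a', b') = false := by
      intro a'
      by_contra hb'
      push_neg at hb'
      apply hnA
      rw [hRAs i]
      exact ⟨a', fun b₀ => by
        have := hb' b₀
        cases hval : RA i (h (xb n), a', b₀)
        · exact absurd hval this
        · rfl⟩
    obtain ⟨t₀, ht₀⟩ := mcount_big hAw a₀
    have heq : ∀ m, t₀ ≤ m → phi (b i (xb n)) m = phi (xb n i) m := by
      intro m hm
      rw [main_eq n i m]
      have hle : mcount (RX i) n m ≤ mcount (RA i) (h (xb n)) m :=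
        le_trans (mcount_le_of_witness ha₀ m) (le_of_lt (ht₀ m hm))
      simp [hle]
    have halmost : AlmostEqPart (phi (b i (xb n))) (phi (xb n i)) :=
      almostEq_of_eventually t₀ heq
    have hFb : F i (xb n) = b i (xb n) := (hFab (xb n) i).2 hnA
    exact hne (xb n) i (hFb ▸ halmost)
  · -- h (xb n) ∈ A i → n ∈ X i
    intro hnA
    by_contra hnX
    have hAw : ∃ a₀ : ℕ, ∀ b₀ : ℕ, RA i (h (xb n), a₀, b₀) = true := by
      rw [hRAs i] at hnA; exact hnA
    obtain ⟨a₀, ha₀⟩ := hAw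
    have hXw : ∀ a', ∃ b', RX i (n, a', b') = false := by
      intro a'
      by_contra hb'
      push_neg at hb'
      apply hnX
      rw [hRXs i]
      exact ⟨a', fun b₀ => by
        have := hb' b₀
        cases hval : RX i (n, a', b₀)
        · exact absurd hval this
        · rfl⟩
    obtain ⟨t₀, ht₀⟩ := mcount_big hXw a₀
    have heq : ∀ m, t₀ ≤ m → phi (a i (xb n)) m = phi (xb n i) m := by
      intro m hm
      rw [main_eq n i m]
      have hlt : mcount (RA i) (h (xb n)) m < mcount (RX i) n m :=
        lt_of_le_of_lt (mcount_le_of_witness ha₀ m) (ht₀ m hm)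
      have : ¬ (mcount (RX i) n m ≤ mcount (RA i) (h (xb n)) m) := by omega
      simp [this]
    have halmost : AlmostEqPart (phi (a i (xb n))) (phi (xb n i)) :=
      almostEq_of_eventually t₀ heq
    have hFa : F i (xb n) = a i (xb n) := (hFab (xb n) i).1 hnA
    exact hne (xb n) i (hFa ▸ halmost)

end Construction

end MCompleteAux

/-- If an `s`-tuple of `Σ⁰₂` sets admits an m-reducible tuple of functions
`(F₀,…,F_{s−1})` with `φ_{F_i(x̄)}` not almost equal to `φ_{x_i}`, then it is
m-complete in the class of `s`-tuples of `Σ⁰₂` sets. -/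
theorem mComplete_sigma02_of_funTuple {s : ℕ} (hs : 1 ≤ s) (A : Fin s → Set ℕ)
    (hA : ∀ i : Fin s, Sigma02 (A i))
    (F : Fin s → (Fin s → ℕ) → ℕ) (hF : FunTupleMRed F A)
    (hne : ∀ (x : Fin s → ℕ) (i : Fin s), ¬ AlmostEqPart (phi (F i x)) (phi (x i))) :
    (∀ i : Fin s, Sigma02 (A i)) ∧
    ∀ X : Fin s → Set ℕ, (∀ i : Fin s, Sigma02 (X i)) → TupleMRed X A := by
  refine ⟨hA, fun X hX => ?_⟩
  classical
  obtain ⟨h, a, b, hh, ha, hb, hFab⟩ := hF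
  choose RA hRAc hRAs using hA
  choose RX hRXc hRXs using hX
  obtain ⟨g, hg, hgiff⟩ :=
    MCompleteAux.key (s := s) hs A X RA RX hRAc hRAs hRXc hRXs F h a b hh ha hb hFab hne
  exact ⟨g, hg, fun i n => hgiff i n⟩
end
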